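/- arXiv:2406.18174 — 8 statements merged into one kernel-verified Lean document; each statement's English description precedes it below -/
import Mathlib

section
/- Suppose v : 𝓕 → ℝ is a set function such that for all measurable B ⊆ A, v(B) = sup { μ(B) : μ ∈ 𝓒₋(A) }, where 𝓒₋(A) is the set of finite measures μ on A with μ(A)=v(A) and μ(E) ≤ v(E) for all measurable E ⊆ A. Then v satisfies the submodular inequality v(A)+v(B) ≥ v(A∪B)+v(A∩B) for all A,B ∈ 𝓕. -/
open MeasureTheory Set

theorem sup_representation_implies_submodular {Ω : Type*} [MeasurableSpace Ω]
    (v : Set Ω → ℝ)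
    (h : ∀ A B : Set Ω, MeasurableSet A → MeasurableSet B → B ⊆ A →
      v B = sSup {x : ℝ | ∃ μ : Measure Ω, μ.restrict A = μ ∧ IsFiniteMeasure μ ∧
        (μ A).toReal = v A ∧
        (∀ E : Set Ω, MeasurableSet E → E ⊆ A → (μ E).toReal ≤ v E) ∧
        x = (μ B).toReal}) :
    ∀ A B : Set Ω, MeasurableSet A → MeasurableSet B →
      v (A ∪ B) + v (A ∩ B) ≤ v A + v B := by
  intro A B hA hB
  set C := A ∪ B with hC
  have hCm : MeasurableSet C := hA.union hB
  set P : Measure Ω → Prop := fun μ =>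
    μ.restrict C = μ ∧ IsFiniteMeasure μ ∧ (μ C).toReal = v C ∧
      (∀ E : Set Ω, MeasurableSet E → E ⊆ C → (μ E).toReal ≤ v E) with hP
  have key : ∀ D : Set Ω, MeasurableSet D → D ⊆ C →
      v D = sSup {x : ℝ | ∃ μ : Measure Ω, P μ ∧ x = (μ D).toReal} := by
    intro D hD hDC
    have := h C D hCm hD hDC
    convert this using 3
    ext x
    constructor
    · rintro ⟨μ, ⟨h1, h2, h3, h4⟩, h5⟩; exact ⟨μ, h1, h2, h3, h4, h5⟩
    · rintro ⟨μ, h1, h2, h3, h4, h5⟩; exact ⟨μ, ⟨h1, h2, h3, h4⟩, h5⟩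
  by_cases hne : ∃ μ : Measure Ω, P μ
  · obtain ⟨μ₀, hμ₀⟩ := hne
    have bound : ∀ μ : Measure Ω, P μ →
        (μ (A ∩ B)).toReal ≤ v A + v B - v C := by
      intro μ ⟨h1, h2, h3, h4⟩
      have hfin : ∀ s : Set Ω, μ s ≠ ⊤ := fun s => measure_ne_top μ s
      have hie : μ C + μ (A ∩ B) = μ A + μ B := measure_union_add_inter A hB
      have hie' : (μ C).toReal + (μ (A ∩ B)).toReal
          = (μ A).toReal + (μ B).toReal := by
        rw [← ENNReal.toReal_add (hfin _) (hfin _), ← ENNReal.toReal_add (hfin _) (hfin _), hie]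
      have hAle := h4 A hA subset_union_left
      have hBle := h4 B hB subset_union_right
      linarith [h3, hie', hAle, hBle]
    have hint : v (A ∩ B) ≤ v A + v B - v C := by
      rw [key (A ∩ B) (hA.inter hB) (inter_subset_left.trans subset_union_left)]
      refine csSup_le ⟨(μ₀ (A ∩ B)).toReal, μ₀, hμ₀, rfl⟩ ?_
      rintro x ⟨μ, hμ, rfl⟩
      exact bound μ hμ
    linarith
  · push_neg at hne
    have hempty : ∀ D : Set Ω,
        {x : ℝ | ∃ μ : Measure Ω, P μ ∧ x = (μ D).toReal} = (∅ : Set ℝ) := by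
      intro D
      ext x
      simp only [Set.mem_setOf_eq, Set.mem_empty_iff_false, iff_false]
      rintro ⟨μ, hμ, _⟩
      exact hne μ hμ
    have hvA : v A = 0 := by
      rw [key A hA subset_union_left, hempty, Real.sSup_empty]
    have hvB : v B = 0 := by
      rw [key B hB subset_union_right, hempty, Real.sSup_empty]
    have hvI : v (A ∩ B) = 0 := by
      rw [key (A ∩ B) (hA.inter hB) (inter_subset_left.trans subset_union_left), hempty,
        Real.sSup_empty]
    have hvU : v C = 0 := by
      rw [key C hCm subset_rfl, hempty, Real.sSup_empty]
    simp [hvA, hvB, hvI, ← hC, hvU]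
end

section
/- Suppose v : 𝓕 → ℝ satisfies, for all measurable B ⊆ A, v(B) = inf { μ(B) : μ ∈ 𝓒₊(A) }, where 𝓒₊(A) is the set of finite measures μ on A with μ(A)=v(A) and μ(E) ≥ v(E) for all measurable E ⊆ A. Then v satisfies the supermodular inequality v(A)+v(B) ≤ v(A∪B)+v(A∩B) for all A,B ∈ 𝓕. -/
open MeasureTheory Set

theorem inf_representation_implies_supermodular {Ω : Type*} [MeasurableSpace Ω]
    (v : Set Ω → ℝ)
    (h : ∀ A B : Set Ω, MeasurableSet A → MeasurableSet B → B ⊆ A →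
      v B = sInf {x : ℝ | ∃ μ : Measure Ω, μ.restrict A = μ ∧ IsFiniteMeasure μ ∧
        (μ A).toReal = v A ∧
        (∀ E : Set Ω, MeasurableSet E → E ⊆ A → v E ≤ (μ E).toReal) ∧
        x = (μ B).toReal}) :
    ∀ A B : Set Ω, MeasurableSet A → MeasurableSet B →
      v A + v B ≤ v (A ∪ B) + v (A ∩ B) := by
  intro A B hA hB
  set U := A ∪ B with hU
  have hUm : MeasurableSet U := hA.union hB
  have hAU : A ⊆ U := subset_union_left
  have hBU : B ⊆ U := subset_union_right
  have hIm : MeasurableSet (A ∩ B) := hA.inter hB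
  have hIU : A ∩ B ⊆ U := inter_subset_left.trans hAU
  by_cases hne : ∃ μ : Measure Ω, μ.restrict U = μ ∧ IsFiniteMeasure μ ∧
      (μ U).toReal = v U ∧ (∀ E, MeasurableSet E → E ⊆ U → v E ≤ (μ E).toReal)
  · have hI := h U (A ∩ B) hUm hIm hIU
    have hlb : v A + v B - v U ≤ sInf {x : ℝ | ∃ μ : Measure Ω, μ.restrict U = μ ∧
        IsFiniteMeasure μ ∧ (μ U).toReal = v U ∧
        (∀ E : Set Ω, MeasurableSet E → E ⊆ U → v E ≤ (μ E).toReal) ∧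
        x = (μ (A ∩ B)).toReal} := by
      apply le_csInf
      · obtain ⟨μ, h1, h2, h3, h4⟩ := hne
        exact ⟨_, μ, h1, h2, h3, h4, rfl⟩
      · rintro x ⟨μ, h1, h2, h3, h4, rfl⟩
        have hAle := h4 A hA hAU
        have hBle := h4 B hB hBU
        have key : μ U + μ (A ∩ B) = μ A + μ B := measure_union_add_inter A hB
        haveI := h2
        have hsum : (μ U).toReal + (μ (A ∩ B)).toReal = (μ A).toReal + (μ B).toReal := by
          rw [← ENNReal.toReal_add (measure_ne_top μ U) (measure_ne_top μ _), key,
            ENNReal.toReal_add (measure_ne_top μ A) (measure_ne_top μ B)]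
        linarith
    rw [← hI] at hlb
    linarith
  · have hv : ∀ C : Set Ω, MeasurableSet C → C ⊆ U → v C = 0 := by
      intro C hC hCU
      rw [h U C hUm hC hCU]
      convert Real.sInf_empty using 2
      ext x
      simp only [mem_setOf_eq, mem_empty_iff_false, iff_false]
      rintro ⟨μ, h1, h2, h3, h4, _⟩
      exact hne ⟨μ, h1, h2, h3, h4⟩
    rw [hv A hA hAU, hv B hB hBU, hv U hUm le_rfl, hv _ hIm hIU]
end

section
/- Let 𝓘 ⊆ 𝓕 be a class of sets containing ∅ and Ω, totally ordered by inclusion, with σ(𝓘) = 𝓕. Then for measurable sets B ⊆ A, the class 𝓘_{A,B} = { B ∩ (I ∩ A) : I ∈ 𝓘 } ∪ { B ∪ (I ∩ A) : I ∈ 𝓘 } contains ∅ and A, is totally ordered by inclusion, and generates the trace σ-algebra 𝓕|_A on A, i.e., σ_A(𝓘_{A,B}) = { F ∩ A : F ∈ 𝓕 }. -/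
open MeasureTheory Set

theorem insertion_lemma {Ω : Type*} [m : MeasurableSpace Ω] (I : Set (Set Ω))
    (h0 : ∅ ∈ I) (hU : Set.univ ∈ I)
    (hchain : ∀ I₁ ∈ I, ∀ I₂ ∈ I, I₁ ⊆ I₂ ∨ I₂ ⊆ I₁)
    (hgen : MeasurableSpace.generateFrom I = m)
    (A B : Set Ω) (hA : MeasurableSet A) (hB : MeasurableSet B) (hBA : B ⊆ A) :
    (∅ ∈ ({S | ∃ J ∈ I, S = B ∩ (J ∩ A)} ∪ {S | ∃ J ∈ I, S = B ∪ J ∩ A} : Set (Set Ω))) ∧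
    (A ∈ ({S | ∃ J ∈ I, S = B ∩ (J ∩ A)} ∪ {S | ∃ J ∈ I, S = B ∪ J ∩ A} : Set (Set Ω))) ∧
    (∀ S₁ ∈ ({S | ∃ J ∈ I, S = B ∩ (J ∩ A)} ∪ {S | ∃ J ∈ I, S = B ∪ J ∩ A} : Set (Set Ω)),
      ∀ S₂ ∈ ({S | ∃ J ∈ I, S = B ∩ (J ∩ A)} ∪ {S | ∃ J ∈ I, S = B ∪ J ∩ A} : Set (Set Ω)),
        S₁ ⊆ S₂ ∨ S₂ ⊆ S₁) ∧
    MeasurableSpace.generateFrom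
        ((fun S : Set Ω => ((↑) ⁻¹' S : Set A)) ''
          ({S | ∃ J ∈ I, S = B ∩ (J ∩ A)} ∪ {S | ∃ J ∈ I, S = B ∪ J ∩ A}))
      = MeasurableSpace.comap (↑· : A → Ω) m := by
  have hImeas : ∀ J ∈ I, MeasurableSet J := by
    intro J hJ
    rw [← hgen]
    exact MeasurableSpace.measurableSet_generateFrom hJ
  refine ⟨Or.inl ⟨∅, h0, by simp⟩,
    Or.inr ⟨Set.univ, hU, by simp [union_eq_self_of_subset_left hBA]⟩, ?_, ?_⟩
  · rintro S₁ (⟨J₁, hJ₁, rfl⟩ | ⟨J₁, hJ₁, rfl⟩) S₂ (⟨J₂, hJ₂, rfl⟩ | ⟨J₂, hJ₂, rfl⟩)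
    · rcases hchain J₁ hJ₁ J₂ hJ₂ with h | h
      · exact Or.inl (inter_subset_inter_right _ (inter_subset_inter_left _ h))
      · exact Or.inr (inter_subset_inter_right _ (inter_subset_inter_left _ h))
    · exact Or.inl (inter_subset_left.trans subset_union_left)
    · exact Or.inr (inter_subset_left.trans subset_union_left)
    · rcases hchain J₁ hJ₁ J₂ hJ₂ with h | h
      · exact Or.inl (union_subset_union_right _ (inter_subset_inter_left _ h))
      · exact Or.inr (union_subset_union_right _ (inter_subset_inter_left _ h))
  · have hkey : MeasurableSpace.comap ((↑·) : A → Ω) m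
        = MeasurableSpace.generateFrom ((fun S : Set Ω => ((↑) ⁻¹' S : Set A)) '' I) := by
      rw [← hgen, MeasurableSpace.comap_generateFrom]
    apply le_antisymm
    · apply MeasurableSpace.generateFrom_le
      rintro S ⟨T, (⟨J, hJ, rfl⟩ | ⟨J, hJ, rfl⟩), rfl⟩
      · exact ⟨B ∩ (J ∩ A), (hB.inter ((hImeas J hJ).inter hA)), rfl⟩
      · exact ⟨B ∪ J ∩ A, (hB.union ((hImeas J hJ).inter hA)), rfl⟩
    · rw [hkey]
      apply MeasurableSpace.generateFrom_le
      rintro S ⟨J, hJ, rfl⟩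
      have h1 : MeasurableSet[MeasurableSpace.generateFrom
          ((fun S : Set Ω => ((↑) ⁻¹' S : Set A)) ''
            ({S | ∃ J ∈ I, S = B ∩ (J ∩ A)} ∪ {S | ∃ J ∈ I, S = B ∪ J ∩ A}))]
          (((↑) ⁻¹' (B ∩ (J ∩ A))) : Set A) :=
        MeasurableSpace.measurableSet_generateFrom ⟨_, Or.inl ⟨J, hJ, rfl⟩, rfl⟩
      have h2 : MeasurableSet[MeasurableSpace.generateFrom
          ((fun S : Set Ω => ((↑) ⁻¹' S : Set A)) ''
            ({S | ∃ J ∈ I, S = B ∩ (J ∩ A)} ∪ {S | ∃ J ∈ I, S = B ∪ J ∩ A}))]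
          (((↑) ⁻¹' (B ∪ J ∩ A)) : Set A) :=
        MeasurableSpace.measurableSet_generateFrom ⟨_, Or.inr ⟨J, hJ, rfl⟩, rfl⟩
      have h3 : MeasurableSet[MeasurableSpace.generateFrom
          ((fun S : Set Ω => ((↑) ⁻¹' S : Set A)) ''
            ({S | ∃ J ∈ I, S = B ∩ (J ∩ A)} ∪ {S | ∃ J ∈ I, S = B ∪ J ∩ A}))]
          (((↑) ⁻¹' B) : Set A) := by
        have := MeasurableSpace.measurableSet_generateFrom
          (s := ((fun S : Set Ω => ((↑) ⁻¹' S : Set A)) ''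
            ({S | ∃ J ∈ I, S = B ∩ (J ∩ A)} ∪ {S | ∃ J ∈ I, S = B ∪ J ∩ A})))
          ⟨B ∪ ∅ ∩ A, Or.inr ⟨∅, h0, rfl⟩, rfl⟩
        simpa using this
      have hid : (((↑) ⁻¹' J) : Set A)
          = ((↑) ⁻¹' (B ∩ (J ∩ A)) ∪ ((↑) ⁻¹' (B ∪ J ∩ A) \ (↑) ⁻¹' B) : Set A) := by
        ext x
        have hx : (x : Ω) ∈ A := x.2
        simp only [mem_preimage, mem_union, mem_inter_iff, mem_diff]
        tauto
      have := h1.union (h2.diff h3)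
      rwa [← hid] at this
end

section
/- If 𝓘 is a class of subsets totally ordered by inclusion containing ∅ and Ω, then the collection of all finite disjoint unions ⋃ᵢ₌₁ⁿ (Cᵢ \ Dᵢ) with C₁ ⊇ D₁ ⊇ C₂ ⊇ ⋯ ⊇ Dₙ, Cᵢ, Dᵢ ∈ 𝓘, is a Boolean algebra of sets (closed under complements and finite unions, containing ∅ and Ω), and it is the smallest algebra of sets containing 𝓘. -/
open Set

/-- Finite disjoint unions `⋃ i < n, C i \ D i` over nested chains
`C 0 ⊇ D 0 ⊇ C 1 ⊇ ⋯ ⊇ D (n-1)` of members of `I`. -/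
def chainAlgebra {Ω : Type*} (I : Set (Set Ω)) : Set (Set Ω) :=
  {S | ∃ (n : ℕ) (C D : ℕ → Set Ω),
    (∀ i < n, C i ∈ I) ∧ (∀ i < n, D i ∈ I) ∧
    (∀ i < n, D i ⊆ C i) ∧ (∀ i, i + 1 < n → C (i + 1) ⊆ D i) ∧
    S = ⋃ i ∈ Finset.range n, C i \ D i}

namespace ChainAlgebraAux

variable {Ω : Type*}

/-- biUnion over `range (n+1)` split at the front. -/
lemma biUnion_range_succ_front (f : ℕ → Set Ω) (n : ℕ) :
    ⋃ i ∈ Finset.range (n + 1), f i = f 0 ∪ ⋃ i ∈ Finset.range n, f (i + 1) := by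
  ext x
  simp only [Set.mem_iUnion, Finset.mem_range, Set.mem_union, exists_prop]
  constructor
  · rintro ⟨i, hi, hx⟩
    cases i with
    | zero => exact Or.inl hx
    | succ j => exact Or.inr ⟨j, by omega, hx⟩
  · rintro (hx | ⟨j, hj, hx⟩)
    · exact ⟨0, by omega, hx⟩
    · exact ⟨j + 1, by omega, hx⟩

/-- biUnion over `range (n+1)` split at the back. -/
lemma biUnion_range_succ_back (f : ℕ → Set Ω) (n : ℕ) :
    ⋃ i ∈ Finset.range (n + 1), f i = (⋃ i ∈ Finset.range n, f i) ∪ f n := by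
  ext x
  simp only [Set.mem_iUnion, Finset.mem_range, Set.mem_union, exists_prop]
  constructor
  · rintro ⟨i, hi, hx⟩
    rcases Nat.lt_succ_iff_lt_or_eq.mp hi with h | h
    · exact Or.inl ⟨i, h, hx⟩
    · subst h; exact Or.inr hx
  · rintro (⟨i, hi, hx⟩ | hx)
    · exact ⟨i, by omega, hx⟩
    · exact ⟨n, by omega, hx⟩

/-- `chainAlgebra` membership, where moreover all sets in the chain lie under `B`. -/
def memLE (I : Set (Set Ω)) (B S : Set Ω) : Prop :=
  ∃ (n : ℕ) (C D : ℕ → Set Ω),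
    (∀ i < n, C i ∈ I) ∧ (∀ i < n, D i ∈ I) ∧
    (∀ i < n, D i ⊆ C i) ∧ (∀ i, i + 1 < n → C (i + 1) ⊆ D i) ∧
    (∀ i < n, C i ⊆ B) ∧
    S = ⋃ i ∈ Finset.range n, C i \ D i

lemma chain_mono {n : ℕ} {C D : ℕ → Set Ω}
    (hDC : ∀ i < n, D i ⊆ C i) (hCD : ∀ i, i + 1 < n → C (i + 1) ⊆ D i)
    {i j : ℕ} (hij : i ≤ j) (hj : j < n) : C j ⊆ C i := by
  induction j with
  | zero =>
    have : i = 0 := by omega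
    subst this; exact subset_rfl
  | succ j ih =>
    rcases Nat.eq_or_lt_of_le hij with h | h
    · subst h; exact subset_rfl
    · exact ((hCD j hj).trans (hDC j (by omega))).trans (ih (by omega) (by omega))

lemma memLE_mono {I : Set (Set Ω)} {B B' S : Set Ω} (hBB : B ⊆ B')
    (h : memLE I B S) : memLE I B' S := by
  obtain ⟨n, C, D, h1, h2, h3, h4, h5, h6⟩ := h
  exact ⟨n, C, D, h1, h2, h3, h4, fun i hi => (h5 i hi).trans hBB, h6⟩

lemma memLE_empty (I : Set (Set Ω)) (B : Set Ω) : memLE I B (∅ : Set Ω) :=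
  ⟨0, fun _ => ∅, fun _ => ∅, by simp, by simp, by simp, by simp, by simp, by simp⟩

lemma memLE_single {I : Set (Set Ω)}
    (hchain : ∀ I₁ ∈ I, ∀ I₂ ∈ I, I₁ ⊆ I₂ ∨ I₂ ⊆ I₁)
    {E F B : Set Ω} (hE : E ∈ I) (hF : F ∈ I) (hEB : E ⊆ B) :
    memLE I B (E \ F) := by
  rcases hchain F hF E hE with h | h
  · exact ⟨1, fun _ => E, fun _ => F, by simp [hE], by simp [hF],
      by simp [h], by omega, by simp [hEB], by simp⟩
  · rw [Set.diff_eq_empty.mpr h]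
    exact memLE_empty I B

lemma memLE_inter {I : Set (Set Ω)}
    (hchain : ∀ I₁ ∈ I, ∀ I₂ ∈ I, I₁ ⊆ I₂ ∨ I₂ ⊆ I₁)
    {B S A : Set Ω} (h : memLE I B S) (hA : A ∈ I) :
    memLE I A (S ∩ A) := by
  classical
  obtain ⟨n, C, D, h1, h2, h3, h4, h5, h6⟩ := h
  refine ⟨n, fun i => if C i ⊆ A then C i else A,
      fun i => if D i ⊆ A then D i else A, ?_, ?_, ?_, ?_, ?_, ?_⟩
  · intro i hi; by_cases hc : C i ⊆ A <;> simp [hc, h1 i hi, hA]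
  · intro i hi; by_cases hc : D i ⊆ A <;> simp [hc, h2 i hi, hA]
  all_goals
    have key : ∀ {X : Set Ω}, X ∈ I → (if X ⊆ A then X else A) = X ∩ A := by
      intro X hX
      by_cases hc : X ⊆ A
      · simp [hc, Set.inter_eq_left.mpr hc]
      · rcases hchain X hX A hA with h | h
        · exact absurd h hc
        · simp [hc, Set.inter_eq_right.mpr h]
  · intro i hi
    dsimp only
    rw [key (h2 i hi), key (h1 i hi)]
    exact Set.inter_subset_inter_left _ (h3 i hi)
  · intro i hi
    dsimp only
    rw [key (h1 (i+1) hi), key (h2 i (by omega))]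
    exact Set.inter_subset_inter_left _ (h4 i hi)
  · intro i hi
    dsimp only
    rw [key (h1 i hi)]
    exact Set.inter_subset_right
  · rw [h6]
    ext x
    simp only [Set.mem_inter_iff, Set.mem_iUnion, Finset.mem_range, exists_prop]
    constructor
    · rintro ⟨⟨i, hi, hx⟩, hxA⟩
      refine ⟨i, hi, ?_⟩
      simp only [key (h1 i hi), key (h2 i hi), Set.mem_diff, Set.mem_inter_iff]
      simp only [Set.mem_diff] at hx
      tauto
    · rintro ⟨i, hi, hx⟩
      simp only [key (h1 i hi), key (h2 i hi), Set.mem_diff, Set.mem_inter_iff] at hx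
      exact ⟨⟨i, hi, hx.1.1, fun hd => hx.2 ⟨hd, hx.1.2⟩⟩, hx.1.2⟩

lemma memLE_prepend {I : Set (Set Ω)} {B E F S : Set Ω}
    (hE : E ∈ I) (hF : F ∈ I) (hFE : F ⊆ E) (hEB : E ⊆ B)
    (h : memLE I F S) : memLE I B ((E \ F) ∪ S) := by
  obtain ⟨n, C, D, h1, h2, h3, h4, h5, h6⟩ := h
  refine ⟨n + 1, fun i => if i = 0 then E else C (i - 1),
      fun i => if i = 0 then F else D (i - 1), ?_, ?_, ?_, ?_, ?_, ?_⟩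
  · rintro (_ | i) hi
    · simpa using hE
    · simpa using h1 i (by omega)
  · rintro (_ | i) hi
    · simpa using hF
    · simpa using h2 i (by omega)
  · rintro (_ | i) hi
    · simpa using hFE
    · simpa using h3 i (by omega)
  · rintro (_ | i) hi
    · simpa using h5 0 (by omega)
    · simpa using h4 i (by omega)
  · rintro (_ | i) hi
    · simpa using hEB
    · simpa using ((h5 i (by omega)).trans hFE).trans hEB
  · rw [biUnion_range_succ_front, h6]
    simp


lemma union_merge_id {A B S E F G : Set Ω} (hSB : S ⊆ B) (hBA : B ⊆ A)
    (hBE : B ⊆ E) (hEA : E ⊆ A) (hFE : F ⊆ E) (hG : G = B ∩ F) :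
    ((A \ B) ∪ S) ∪ (E \ F) = (A \ G) ∪ (S ∩ G) := by
  ext x
  have ha := @hSB x
  have hb := @hBA x
  have hc := @hBE x
  have hd := @hEA x
  have he := @hFE x
  simp only [Set.mem_union, Set.mem_diff, Set.mem_inter_iff, hG]
  tauto

lemma union_top_id {S E F : Set Ω} (hSE : S ⊆ E) :
    S ∪ (E \ F) = (E \ F) ∪ (S ∩ F) := by
  ext x
  have ha := @hSE x
  simp only [Set.mem_union, Set.mem_diff, Set.mem_inter_iff]
  tauto

lemma compl_id {A B S : Set Ω} (hSB : S ⊆ B) (hBA : B ⊆ A) :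
    ((A \ B) ∪ S)ᶜ = (Set.univ \ A) ∪ (B ∩ Sᶜ) := by
  ext x
  have ha := @hSB x
  have hb := @hBA x
  simp only [Set.mem_compl_iff, Set.mem_union, Set.mem_diff, Set.mem_inter_iff,
    Set.mem_univ, true_and]
  tauto

lemma memLE_shift_bound {I : Set (Set Ω)} {n : ℕ} {C D : ℕ → Set Ω}
    (h3 : ∀ i < n + 1, D i ⊆ C i) (h4 : ∀ i, i + 1 < n + 1 → C (i + 1) ⊆ D i) :
    ∀ i < n, C (i + 1) ⊆ D 0 := by
  intro i hi
  exact (chain_mono h3 h4 (by omega : 1 ≤ i + 1) (by omega)).trans (h4 0 (by omega))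

lemma compl_memLE {I : Set (Set Ω)} (h0 : ∅ ∈ I) (hU : Set.univ ∈ I)
    (hchain : ∀ I₁ ∈ I, ∀ I₂ ∈ I, I₁ ⊆ I₂ ∨ I₂ ⊆ I₁) :
    ∀ (n : ℕ) (C D : ℕ → Set Ω),
      (∀ i < n, C i ∈ I) → (∀ i < n, D i ∈ I) →
      (∀ i < n, D i ⊆ C i) → (∀ i, i + 1 < n → C (i + 1) ⊆ D i) →
      memLE I Set.univ (⋃ i ∈ Finset.range n, C i \ D i)ᶜ := by
  intro n
  induction n with
  | zero =>
    intro C D _ _ _ _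
    have := memLE_single (B := Set.univ) hchain hU h0 subset_rfl
    simpa using this
  | succ n ih =>
    intro C D h1 h2 h3 h4
    have hbound := memLE_shift_bound (I := I) h3 h4
    have hS'sub : (⋃ i ∈ Finset.range n, C (i + 1) \ D (i + 1)) ⊆ D 0 :=
      Set.iUnion₂_subset fun i hi =>
        Set.diff_subset.trans (hbound i (Finset.mem_range.mp hi))
    have hD0C0 : D 0 ⊆ C 0 := h3 0 (by omega)
    have hid : (⋃ i ∈ Finset.range (n + 1), C i \ D i)ᶜ
        = (Set.univ \ C 0) ∪ (D 0 ∩ (⋃ i ∈ Finset.range n, C (i + 1) \ D (i + 1))ᶜ) := by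
      rw [biUnion_range_succ_front]
      exact compl_id hS'sub hD0C0
    rw [hid]
    have hcompl := ih (fun i => C (i + 1)) (fun i => D (i + 1))
      (fun i hi => h1 (i + 1) (by omega)) (fun i hi => h2 (i + 1) (by omega))
      (fun i hi => h3 (i + 1) (by omega)) (fun i hi => h4 (i + 1) (by omega))
    have h5 := memLE_inter hchain hcompl (h2 0 (by omega))
    rw [Set.inter_comm] at h5
    exact memLE_mono (Set.subset_univ _)
      (memLE_prepend hU (h1 0 (by omega)) (Set.subset_univ _) subset_rfl
        (memLE_mono hD0C0 h5))

lemma union_single {I : Set (Set Ω)}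
    (hchain : ∀ I₁ ∈ I, ∀ I₂ ∈ I, I₁ ⊆ I₂ ∨ I₂ ⊆ I₁) :
    ∀ (n : ℕ) (C D : ℕ → Set Ω) (B E F : Set Ω),
      (∀ i < n, C i ∈ I) → (∀ i < n, D i ∈ I) →
      (∀ i < n, D i ⊆ C i) → (∀ i, i + 1 < n → C (i + 1) ⊆ D i) →
      (∀ i < n, C i ⊆ B) →
      E ∈ I → F ∈ I → F ⊆ E → E ⊆ B →
      memLE I B ((⋃ i ∈ Finset.range n, C i \ D i) ∪ (E \ F)) := by
  intro n
  induction n with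
  | zero =>
    intro C D B E F _ _ _ _ _ hE hF hFE hEB
    have := memLE_single hchain hE hF hEB
    simpa using this
  | succ n ih =>
    intro C D B E F h1 h2 h3 h4 h5 hE hF hFE hEB
    have hD0 : D 0 ∈ I := h2 0 (by omega)
    have hC0 : C 0 ∈ I := h1 0 (by omega)
    have hD0C0 : D 0 ⊆ C 0 := h3 0 (by omega)
    have hbound := memLE_shift_bound (I := I) h3 h4
    have hS'sub : (⋃ i ∈ Finset.range n, C (i + 1) \ D (i + 1)) ⊆ D 0 :=
      Set.iUnion₂_subset fun i hi =>
        Set.diff_subset.trans (hbound i (Finset.mem_range.mp hi))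
    rcases hchain E hE (D 0) hD0 with hED | hDE
    · -- E ⊆ D 0 : recurse on the tail
      rw [biUnion_range_succ_front, Set.union_assoc]
      have hrec := ih (fun i => C (i + 1)) (fun i => D (i + 1)) (D 0) E F
        (fun i hi => h1 (i + 1) (by omega)) (fun i hi => h2 (i + 1) (by omega))
        (fun i hi => h3 (i + 1) (by omega)) (fun i hi => h4 (i + 1) (by omega))
        hbound hE hF hFE hED
      exact memLE_mono (h5 0 (by omega)) (memLE_prepend hC0 hD0 hD0C0 subset_rfl hrec)
    · rcases hchain E hE (C 0) hC0 with hEC | hCE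
      · -- D 0 ⊆ E ⊆ C 0 : merge into the top piece
        obtain ⟨G, hG, hGeq⟩ : ∃ G ∈ I, G = D 0 ∩ F := by
          rcases hchain F hF (D 0) hD0 with h | h
          · exact ⟨F, hF, (Set.inter_eq_right.mpr h).symm⟩
          · exact ⟨D 0, hD0, (Set.inter_eq_left.mpr h).symm⟩
        rw [biUnion_range_succ_front]
        have hid : ((C 0 \ D 0) ∪ ⋃ i ∈ Finset.range n, C (i + 1) \ D (i + 1)) ∪ (E \ F)
            = (C 0 \ G) ∪ ((⋃ i ∈ Finset.range n, C (i + 1) \ D (i + 1)) ∩ G) := by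
          exact union_merge_id hS'sub hD0C0 hDE hEC hFE hGeq
        rw [hid]
        have hS'mem : memLE I (D 0) (⋃ i ∈ Finset.range n, C (i + 1) \ D (i + 1)) :=
          ⟨n, fun i => C (i + 1), fun i => D (i + 1),
            fun i hi => h1 (i + 1) (by omega), fun i hi => h2 (i + 1) (by omega),
            fun i hi => h3 (i + 1) (by omega), fun i hi => h4 (i + 1) (by omega),
            hbound, rfl⟩
        have hGC : G ⊆ C 0 := by
          rw [hGeq]; exact Set.inter_subset_left.trans hD0C0
        exact memLE_mono (h5 0 (by omega))
          (memLE_prepend hC0 hG hGC subset_rfl (memLE_inter hchain hS'mem hG))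
      · -- C 0 ⊆ E : the new piece goes on top
        have hSC : (⋃ i ∈ Finset.range (n + 1), C i \ D i) ⊆ C 0 :=
          Set.iUnion₂_subset fun i hi =>
            Set.diff_subset.trans (chain_mono h3 h4 (Nat.zero_le i) (Finset.mem_range.mp hi))
        have hid : (⋃ i ∈ Finset.range (n + 1), C i \ D i) ∪ (E \ F)
            = (E \ F) ∪ ((⋃ i ∈ Finset.range (n + 1), C i \ D i) ∩ F) := by
          exact union_top_id (hSC.trans hCE)
        rw [hid]
        have hSmem : memLE I (C 0) (⋃ i ∈ Finset.range (n + 1), C i \ D i) :=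
          ⟨n + 1, C, D, h1, h2, h3, h4,
            fun i hi => chain_mono h3 h4 (Nat.zero_le i) hi, rfl⟩
        exact memLE_mono hEB
          (memLE_prepend hE hF hFE subset_rfl (memLE_inter hchain hSmem hF))

end ChainAlgebraAux

namespace ChainAlgebraAux

lemma memLE_toCA {Ω : Type*} {I : Set (Set Ω)} {B S : Set Ω} (h : memLE I B S) :
    S ∈ chainAlgebra I := by
  obtain ⟨n, C, D, h1, h2, h3, h4, _, h6⟩ := h
  exact ⟨n, C, D, h1, h2, h3, h4, h6⟩

lemma CA_toMemLE {Ω : Type*} {I : Set (Set Ω)} {S : Set Ω} (h : S ∈ chainAlgebra I) :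
    memLE I Set.univ S := by
  obtain ⟨n, C, D, h1, h2, h3, h4, h6⟩ := h
  exact ⟨n, C, D, h1, h2, h3, h4, fun i _ => Set.subset_univ _, h6⟩

end ChainAlgebraAux

open ChainAlgebraAux in
theorem chainAlgebra_isAlgebra {Ω : Type*} (I : Set (Set Ω))
    (h0 : ∅ ∈ I) (hU : Set.univ ∈ I)
    (hchain : ∀ I₁ ∈ I, ∀ I₂ ∈ I, I₁ ⊆ I₂ ∨ I₂ ⊆ I₁) :
    (∅ ∈ chainAlgebra I) ∧ (Set.univ ∈ chainAlgebra I) ∧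
    (∀ S ∈ chainAlgebra I, Sᶜ ∈ chainAlgebra I) ∧
    (∀ S ∈ chainAlgebra I, ∀ T ∈ chainAlgebra I, S ∪ T ∈ chainAlgebra I) ∧
    I ⊆ chainAlgebra I ∧
    (∀ 𝓐 : Set (Set Ω), Set.univ ∈ 𝓐 → (∀ S ∈ 𝓐, Sᶜ ∈ 𝓐) →
      (∀ S ∈ 𝓐, ∀ T ∈ 𝓐, S ∪ T ∈ 𝓐) → I ⊆ 𝓐 → chainAlgebra I ⊆ 𝓐) := by
  refine ⟨?_, ?_, ?_, ?_, ?_, ?_⟩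
  · exact memLE_toCA (memLE_empty I Set.univ)
  · have := memLE_toCA (memLE_single (B := Set.univ) hchain hU h0 subset_rfl)
    simpa using this
  · intro S hS
    obtain ⟨n, C, D, h1, h2, h3, h4, h6⟩ := hS
    subst h6
    exact memLE_toCA (compl_memLE h0 hU hchain n C D h1 h2 h3 h4)
  · intro S hS T hT
    obtain ⟨m, E, F, k1, k2, k3, k4, k6⟩ := hT
    subst k6
    induction m with
    | zero =>
      simpa using hS
    | succ m ih =>
      rw [biUnion_range_succ_back, ← Set.union_assoc]
      have hprev : S ∪ (⋃ j ∈ Finset.range m, E j \ F j) ∈ chainAlgebra I :=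
        ih (fun j hj => k1 j (by omega)) (fun j hj => k2 j (by omega))
          (fun j hj => k3 j (by omega)) (fun j hj => k4 j (by omega))
      obtain ⟨n, C, D, g1, g2, g3, g4, _, g6⟩ := CA_toMemLE hprev
      rw [g6]
      exact memLE_toCA (union_single hchain n C D Set.univ (E m) (F m)
        g1 g2 g3 g4 (fun i _ => Set.subset_univ _)
        (k1 m (by omega)) (k2 m (by omega)) (k3 m (by omega)) (Set.subset_univ _))
  · intro A hA
    have := memLE_toCA (memLE_single (B := Set.univ) hchain hA h0 (Set.subset_univ _))
    simpa using this
  · intro 𝓐 hAu hAc hAun hIA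
    have hdiff : ∀ X ∈ 𝓐, ∀ Y ∈ 𝓐, X \ Y ∈ 𝓐 := by
      intro X hX Y hY
      have : X \ Y = (Xᶜ ∪ Y)ᶜ := by
        rw [Set.compl_union, compl_compl, Set.diff_eq]
      rw [this]
      exact hAc _ (hAun _ (hAc _ hX) _ hY)
    have hmain : ∀ (n : ℕ) (C D : ℕ → Set Ω), (∀ i < n, C i ∈ I) → (∀ i < n, D i ∈ I) →
        (⋃ i ∈ Finset.range n, C i \ D i) ∈ 𝓐 := by
      intro n
      induction n with
      | zero =>
        intro C D _ _
        have h' : (Set.univ : Set Ω)ᶜ ∈ 𝓐 := hAc _ hAu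
        rw [compl_univ] at h'
        simpa using h'
      | succ n ih =>
        intro C D h1 h2
        rw [biUnion_range_succ_back]
        exact hAun _ (ih C D (fun i hi => h1 i (by omega)) (fun i hi => h2 i (by omega)))
          _ (hdiff _ (hIA (h1 n (by omega))) _ (hIA (h2 n (by omega))))
    intro S hS
    obtain ⟨n, C, D, h1, h2, _, _, h6⟩ := hS
    subst h6
    exact hmain n C D h1 h2
end

section
/- Let 𝓘 be totally ordered by inclusion with ∅, Ω ∈ 𝓘, and let v : 𝓙 → ℝ be defined on the algebra 𝓙 generated by 𝓘 by μ(⋃ᵢ₌₁ⁿ (Cᵢ \ Dᵢ)) = Σᵢ (v(Cᵢ) − v(Dᵢ)) for nested chains C₁ ⊇ D₁ ⊇ ⋯ ⊇ Dₙ in 𝓘, where v is non-decreasing on 𝓘. Then μ is well-defined, nonnegative, and finitely additive on 𝓙. -/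
open Set

namespace ChainPremeasureAux

open MeasureTheory

variable {Ω : Type*}

/-- The canonical set of reals associated to `S` : the key invariant. -/
def USet (I : Set (Set Ω)) (v : Set Ω → ℝ) (S : Set Ω) : Set ℝ :=
  {x | ∃ J, J ∈ I ∧ ∃ K, K ∈ I ∧ K ⊆ J ∧ J \ K ⊆ S ∧ v K < x ∧ x ≤ v J}

lemma exists_max_chain (I : Set (Set Ω))
    (hchain : ∀ I₁ ∈ I, ∀ I₂ ∈ I, I₁ ⊆ I₂ ∨ I₂ ⊆ I₁)
    (C : ℕ → Set Ω) (t : Finset ℕ) :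
    t.Nonempty → (∀ i ∈ t, C i ∈ I) → ∃ i0 ∈ t, ∀ i ∈ t, C i ⊆ C i0 := by
  classical
  induction t using Finset.induction_on with
  | empty => intro h; simp at h
  | @insert a s ha ih =>
    intro _ hC
    rcases s.eq_empty_or_nonempty with rfl | hsne
    · exact ⟨a, by simp, by simp⟩
    · obtain ⟨i0, hi0, hmax⟩ := ih hsne (fun i hi => hC i (Finset.mem_insert_of_mem hi))
      rcases hchain (C a) (hC a (Finset.mem_insert_self a s)) (C i0)
          (hC i0 (Finset.mem_insert_of_mem hi0)) with h | h
      · refine ⟨i0, Finset.mem_insert_of_mem hi0, fun i hi => ?_⟩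
        rcases Finset.mem_insert.mp hi with rfl | hi'
        · exact h
        · exact hmax i hi'
      · refine ⟨a, Finset.mem_insert_self a s, fun i hi => ?_⟩
        rcases Finset.mem_insert.mp hi with rfl | hi'
        · exact subset_rfl
        · exact (hmax i hi').trans h

lemma key_back (I : Set (Set Ω)) (v : Set Ω → ℝ)
    (hchain : ∀ I₁ ∈ I, ∀ I₂ ∈ I, I₁ ⊆ I₂ ∨ I₂ ⊆ I₁)
    (hmono : ∀ S ∈ I, ∀ T ∈ I, S ⊆ T → v S ≤ v T) :
    ∀ (s : Finset ℕ) (C D : ℕ → Set Ω), (∀ i ∈ s, C i ∈ I) → (∀ i ∈ s, D i ∈ I) →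
      (∀ i ∈ s, D i ⊆ C i) →
      ∀ J, J ∈ I → ∀ K, K ∈ I → K ⊆ J → (J \ K ⊆ ⋃ i ∈ s, C i \ D i) →
      ∀ x : ℝ, v K < x → x ≤ v J → ∃ i ∈ s, x ∈ Ioc (v (D i)) (v (C i)) := by
  classical
  intro s
  induction s using Finset.strongInduction with
  | _ s ih =>
    intro C D hC hD hDC J hJ K hK hKJ hcov x hxK hxJ
    have hne : (J \ K).Nonempty := by
      by_contra h
      rw [Set.not_nonempty_iff_eq_empty, Set.diff_eq_empty] at h
      exact absurd (hmono J hJ K hK h) (by linarith)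
    set A : Finset ℕ := s.filter (fun i => ((C i \ D i) ∩ (J \ K)).Nonempty) with hA
    have hAne : A.Nonempty := by
      obtain ⟨w, hw⟩ := hne
      have := hcov hw
      simp only [mem_iUnion, exists_prop] at this
      obtain ⟨i, hi, hwi⟩ := this
      exact ⟨i, Finset.mem_filter.mpr ⟨hi, ⟨w, hwi, hw⟩⟩⟩
    obtain ⟨i0, hi0A, hi0max⟩ := exists_max_chain I hchain C A hAne
      (fun i hi => hC i (Finset.mem_filter.mp hi).1)
    have hi0s : i0 ∈ s := (Finset.mem_filter.mp hi0A).1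
    have hJC : J ⊆ C i0 ∪ K := by
      intro y hy
      by_cases hyK : y ∈ K
      · exact Or.inr hyK
      · have := hcov ⟨hy, hyK⟩
        simp only [mem_iUnion, exists_prop] at this
        obtain ⟨i, hi, hyi⟩ := this
        have hiA : i ∈ A := Finset.mem_filter.mpr ⟨hi, ⟨y, hyi, hy, hyK⟩⟩
        exact Or.inl (hi0max i hiA hyi.1)
    have hKC : K ⊆ C i0 := by
      rcases hchain K hK (C i0) (hC i0 hi0s) with h | h
      · exact h
      · exfalso
        obtain ⟨w, hw⟩ := hne
        rcases hJC hw.1 with h' | h'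
        · exact hw.2 (h h')
        · exact hw.2 h'
    have hJsub : J ⊆ C i0 := fun y hy => (hJC hy).elim id (fun h => hKC h)
    have hxC : x ≤ v (C i0) := le_trans hxJ (hmono J hJ (C i0) (hC i0 hi0s) hJsub)
    by_cases hxD : v (D i0) < x
    · exact ⟨i0, hi0s, hxD, hxC⟩
    push_neg at hxD
    have herase : s.erase i0 ⊂ s := Finset.erase_ssubset hi0s
    have hC' : ∀ i ∈ s.erase i0, C i ∈ I := fun i hi => hC i (Finset.mem_of_mem_erase hi)
    have hD' : ∀ i ∈ s.erase i0, D i ∈ I := fun i hi => hD i (Finset.mem_of_mem_erase hi)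
    have hDC' : ∀ i ∈ s.erase i0, D i ⊆ C i := fun i hi => hDC i (Finset.mem_of_mem_erase hi)
    have hKD : K ⊆ D i0 := by
      rcases hchain K hK (D i0) (hD i0 hi0s) with h | h
      · exact h
      · exact absurd (hmono (D i0) (hD i0 hi0s) K hK h) (by linarith)
    rcases hchain J hJ (D i0) (hD i0 hi0s) with hJD | hDJ
    · have hcov' : J \ K ⊆ ⋃ i ∈ s.erase i0, C i \ D i := by
        intro y hy
        have := hcov hy
        simp only [mem_iUnion, exists_prop] at this ⊢
        obtain ⟨i, hi, hyi⟩ := this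
        refine ⟨i, Finset.mem_erase.mpr ⟨?_, hi⟩, hyi⟩
        rintro rfl
        exact hyi.2 (hJD hy.1)
      obtain ⟨i, hi, hx⟩ := ih _ herase C D hC' hD' hDC' J hJ K hK hKJ hcov' x hxK hxJ
      exact ⟨i, Finset.mem_of_mem_erase hi, hx⟩
    · have hcov' : D i0 \ K ⊆ ⋃ i ∈ s.erase i0, C i \ D i := by
        intro y hy
        have hyJK : y ∈ J \ K := ⟨hDJ hy.1, hy.2⟩
        have := hcov hyJK
        simp only [mem_iUnion, exists_prop] at this ⊢
        obtain ⟨i, hi, hyi⟩ := this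
        refine ⟨i, Finset.mem_erase.mpr ⟨?_, hi⟩, hyi⟩
        rintro rfl
        exact hyi.2 hy.1
      obtain ⟨i, hi, hx⟩ := ih _ herase C D hC' hD' hDC' (D i0) (hD i0 hi0s) K hK hKD hcov' x hxK hxD
      exact ⟨i, Finset.mem_of_mem_erase hi, hx⟩

/-- The key invariance: `USet` of a finite union of blocks is the corresponding
union of half-open intervals. -/
lemma USet_eq (I : Set (Set Ω)) (v : Set Ω → ℝ)
    (hchain : ∀ I₁ ∈ I, ∀ I₂ ∈ I, I₁ ⊆ I₂ ∨ I₂ ⊆ I₁)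
    (hmono : ∀ S ∈ I, ∀ T ∈ I, S ⊆ T → v S ≤ v T)
    (s : Finset ℕ) (C D : ℕ → Set Ω) (hC : ∀ i ∈ s, C i ∈ I) (hD : ∀ i ∈ s, D i ∈ I)
    (hDC : ∀ i ∈ s, D i ⊆ C i) :
    USet I v (⋃ i ∈ s, C i \ D i) = ⋃ i ∈ s, Ioc (v (D i)) (v (C i)) := by
  ext x
  constructor
  · rintro ⟨J, hJ, K, hK, hKJ, hcov, hxK, hxJ⟩
    have := key_back I v hchain hmono s C D hC hD hDC J hJ K hK hKJ hcov x hxK hxJ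
    simpa only [mem_iUnion, exists_prop] using this
  · intro hx
    simp only [mem_iUnion, exists_prop] at hx
    obtain ⟨i, hi, hx1, hx2⟩ := hx
    refine ⟨C i, hC i hi, D i, hD i hi, hDC i hi, ?_, hx1, hx2⟩
    intro y hy
    simp only [mem_iUnion, exists_prop]
    exact ⟨i, hi, hy⟩

lemma Ioc_disjoint_of_blocks_aux (I : Set (Set Ω)) (v : Set Ω → ℝ)
    (hchain : ∀ I₁ ∈ I, ∀ I₂ ∈ I, I₁ ⊆ I₂ ∨ I₂ ⊆ I₁)
    (hmono : ∀ S ∈ I, ∀ T ∈ I, S ⊆ T → v S ≤ v T)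
    {C D C' D' : Set Ω} (hC : C ∈ I) (hD : D ∈ I) (hC' : C' ∈ I) (hD' : D' ∈ I)
    (hDC : D ⊆ C) (hDC' : D' ⊆ C') (hdisj : Disjoint (C \ D) (C' \ D'))
    (hsub : C' ⊆ C) {x : ℝ} (hx : x ∈ Ioc (v D) (v C)) (hx' : x ∈ Ioc (v D') (v C')) :
    False := by
  have hB'D : C' \ D' ⊆ D := by
    intro y hy
    by_contra hyD
    exact absurd (Set.disjoint_left.mp hdisj ⟨hsub hy.1, hyD⟩) (by simp [hy.1, hy.2])
  -- hence C' ⊆ D ∪ D'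
  have hC'sub : C' ⊆ D ∪ D' := by
    intro y hy
    by_cases hyD' : y ∈ D'
    · exact Or.inr hyD'
    · exact Or.inl (hB'D ⟨hy, hyD'⟩)
  rcases hchain D hD D' hD' with h | h
  · have : C' ⊆ D' := fun y hy => (hC'sub hy).elim (fun h' => h h') id
    have := hmono C' hC' D' hD' this
    exact absurd hx'.2 (by linarith [hx'.1])
  · have : C' ⊆ D := fun y hy => (hC'sub hy).elim id (fun h' => h h')
    have := hmono C' hC' D hD this
    exact absurd hx'.2 (by linarith [hx.1])

lemma Ioc_disjoint_of_blocks (I : Set (Set Ω)) (v : Set Ω → ℝ)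
    (hchain : ∀ I₁ ∈ I, ∀ I₂ ∈ I, I₁ ⊆ I₂ ∨ I₂ ⊆ I₁)
    (hmono : ∀ S ∈ I, ∀ T ∈ I, S ⊆ T → v S ≤ v T)
    {C D C' D' : Set Ω} (hC : C ∈ I) (hD : D ∈ I) (hC' : C' ∈ I) (hD' : D' ∈ I)
    (hDC : D ⊆ C) (hDC' : D' ⊆ C') (hdisj : Disjoint (C \ D) (C' \ D')) :
    Disjoint (Ioc (v D) (v C)) (Ioc (v D') (v C')) := by
  rw [Set.disjoint_left]
  intro x hx hx'
  rcases hchain C hC C' hC' with h | h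
  · exact Ioc_disjoint_of_blocks_aux I v hchain hmono hC' hD' hC hD hDC' hDC hdisj.symm h hx' hx
  · exact Ioc_disjoint_of_blocks_aux I v hchain hmono hC hD hC' hD' hDC hDC' hdisj h hx hx'

end ChainPremeasureAux

open ChainPremeasureAux MeasureTheory

theorem chain_premeasure_well_defined {Ω : Type*} (I : Set (Set Ω))
    (h0 : ∅ ∈ I) (hU : Set.univ ∈ I)
    (hchain : ∀ I₁ ∈ I, ∀ I₂ ∈ I, I₁ ⊆ I₂ ∨ I₂ ⊆ I₁)
    (v : Set Ω → ℝ) (hv0 : v ∅ = 0)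
    (hmono : ∀ S ∈ I, ∀ T ∈ I, S ⊆ T → v S ≤ v T) :
    ∃ μ : Set Ω → ℝ,
      (∀ (n : ℕ) (C D : ℕ → Set Ω), (∀ i < n, C i ∈ I) → (∀ i < n, D i ∈ I) →
        (∀ i < n, D i ⊆ C i) → (∀ i, i + 1 < n → C (i + 1) ⊆ D i) →
        μ (⋃ i ∈ Finset.range n, C i \ D i)
          = ∑ i ∈ Finset.range n, (v (C i) - v (D i))) ∧
      (∀ S ∈ chainAlgebra I, 0 ≤ μ S) ∧
      (∀ S ∈ chainAlgebra I, ∀ T ∈ chainAlgebra I, Disjoint S T →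
        μ (S ∪ T) = μ S + μ T) := by
  classical
  refine ⟨fun S => (volume (USet I v S)).toReal, ?_, ?_, ?_⟩
  · -- defining property
    intro n C D hC hD hDC hnest
    show (volume (USet I v (⋃ i ∈ Finset.range n, C i \ D i))).toReal = _
    have hC' : ∀ i ∈ Finset.range n, C i ∈ I := fun i hi => hC i (Finset.mem_range.mp hi)
    have hD' : ∀ i ∈ Finset.range n, D i ∈ I := fun i hi => hD i (Finset.mem_range.mp hi)
    have hDC' : ∀ i ∈ Finset.range n, D i ⊆ C i := fun i hi => hDC i (Finset.mem_range.mp hi)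
    rw [USet_eq I v hchain hmono _ C D hC' hD' hDC']
    -- descent
    have hdesc : ∀ j, ∀ i, i < j → j < n → C j ⊆ D i := by
      intro j
      induction j with
      | zero => intro i hi _; exact absurd hi (Nat.not_lt_zero i)
      | succ j ihj =>
        intro i hi hj
        rcases Nat.lt_succ_iff_lt_or_eq.mp hi with h | rfl
        · exact (hnest j hj).trans ((hDC j (by omega)).trans (ihj i h (by omega)))
        · exact hnest i hj
    have hblocks : ∀ i ∈ Finset.range n, ∀ j ∈ Finset.range n, i ≠ j →
        Disjoint (C i \ D i) (C j \ D j) := by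
      intro i hi j hj hij
      rw [Finset.mem_range] at hi hj
      rcases hij.lt_or_gt with h | h
      · exact Set.disjoint_left.mpr fun y hy hy' => hy.2 (hdesc j i h hj hy'.1)
      · exact Set.disjoint_left.mpr fun y hy hy' => hy'.2 (hdesc i j h hi hy.1)
    have hpd : (↑(Finset.range n) : Set ℕ).PairwiseDisjoint
        (fun i => Ioc (v (D i)) (v (C i))) := by
      intro i hi j hj hij
      simp only [Finset.coe_range, Set.mem_Iio] at hi hj
      exact Ioc_disjoint_of_blocks I v hchain hmono (hC i hi) (hD i hi) (hC j hj) (hD j hj)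
        (hDC i hi) (hDC j hj)
        (hblocks i (Finset.mem_range.mpr hi) j (Finset.mem_range.mpr hj) hij)
    rw [measure_biUnion_finset hpd (fun i _ => measurableSet_Ioc)]
    simp only [Real.volume_Ioc]
    rw [ENNReal.toReal_sum (fun i _ => ENNReal.ofReal_ne_top)]
    refine Finset.sum_congr rfl fun i hi => ?_
    exact ENNReal.toReal_ofReal (sub_nonneg.mpr (hmono _ (hD' i hi) _ (hC' i hi) (hDC' i hi)))
  · intro S _
    exact ENNReal.toReal_nonneg
  · -- additivity
    rintro S ⟨n, C, D, hC, hD, hDC, hnest, rfl⟩ T ⟨m, C', D', hC', hD', hDC', hnest', rfl⟩ hdisj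
    show (volume (USet I v _)).toReal = (volume (USet I v _)).toReal + (volume (USet I v _)).toReal
    set S := ⋃ i ∈ Finset.range n, C i \ D i with hSdef
    set T := ⋃ i ∈ Finset.range m, C' i \ D' i with hTdef
    -- combined family
    set E : ℕ → Set Ω := fun i => if i < n then C i else C' (i - n) with hE
    set F : ℕ → Set Ω := fun i => if i < n then D i else D' (i - n) with hF
    have hEI : ∀ i ∈ Finset.range (n + m), E i ∈ I := by
      intro i hi; rw [Finset.mem_range] at hi
      by_cases h : i < n
      · simp only [hE, if_pos h]; exact hC i h
      · simp only [hE, if_neg h]; exact hC' (i - n) (by omega)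
    have hFI : ∀ i ∈ Finset.range (n + m), F i ∈ I := by
      intro i hi; rw [Finset.mem_range] at hi
      by_cases h : i < n
      · simp only [hF, if_pos h]; exact hD i h
      · simp only [hF, if_neg h]; exact hD' (i - n) (by omega)
    have hFE : ∀ i ∈ Finset.range (n + m), F i ⊆ E i := by
      intro i hi; rw [Finset.mem_range] at hi
      by_cases h : i < n
      · simp only [hE, hF, if_pos h]; exact hDC i h
      · simp only [hE, hF, if_neg h]; exact hDC' (i - n) (by omega)
    have hunion : S ∪ T = ⋃ i ∈ Finset.range (n + m), E i \ F i := by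
      ext y
      simp only [hSdef, hTdef, mem_union, mem_iUnion, exists_prop, Finset.mem_range]
      constructor
      · rintro (⟨i, hi, hy⟩ | ⟨i, hi, hy⟩)
        · exact ⟨i, by omega, by simp only [hE, hF, if_pos hi]; exact hy⟩
        · refine ⟨i + n, by omega, ?_⟩
          simp only [hE, hF, if_neg (by omega : ¬ i + n < n), Nat.add_sub_cancel]
          exact hy
      · rintro ⟨i, hi, hy⟩
        by_cases h : i < n
        · left; exact ⟨i, h, by simpa only [hE, hF, if_pos h] using hy⟩
        · right
          refine ⟨i - n, by omega, ?_⟩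
          simpa only [hE, hF, if_neg h] using hy
    have hCr : ∀ i ∈ Finset.range n, C i ∈ I := fun i hi => hC i (Finset.mem_range.mp hi)
    have hDr : ∀ i ∈ Finset.range n, D i ∈ I := fun i hi => hD i (Finset.mem_range.mp hi)
    have hDCr : ∀ i ∈ Finset.range n, D i ⊆ C i := fun i hi => hDC i (Finset.mem_range.mp hi)
    have hCr' : ∀ i ∈ Finset.range m, C' i ∈ I := fun i hi => hC' i (Finset.mem_range.mp hi)
    have hDr' : ∀ i ∈ Finset.range m, D' i ∈ I := fun i hi => hD' i (Finset.mem_range.mp hi)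
    have hDCr' : ∀ i ∈ Finset.range m, D' i ⊆ C' i := fun i hi => hDC' i (Finset.mem_range.mp hi)
    have hUS : USet I v S = ⋃ i ∈ Finset.range n, Ioc (v (D i)) (v (C i)) :=
      USet_eq I v hchain hmono _ C D hCr hDr hDCr
    have hUT : USet I v T = ⋃ i ∈ Finset.range m, Ioc (v (D' i)) (v (C' i)) :=
      USet_eq I v hchain hmono _ C' D' hCr' hDr' hDCr'
    have hUST : USet I v (S ∪ T) = USet I v S ∪ USet I v T := by
      rw [hunion, USet_eq I v hchain hmono _ E F hEI hFI hFE, hUS, hUT]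
      ext x
      simp only [mem_union, mem_iUnion, exists_prop, Finset.mem_range]
      constructor
      · rintro ⟨i, hi, hx⟩
        by_cases h : i < n
        · left; exact ⟨i, h, by simpa only [hE, hF, if_pos h] using hx⟩
        · right; exact ⟨i - n, by omega, by simpa only [hE, hF, if_neg h] using hx⟩
      · rintro (⟨i, hi, hx⟩ | ⟨i, hi, hx⟩)
        · exact ⟨i, by omega, by simp only [hE, hF, if_pos hi]; exact hx⟩
        · refine ⟨i + n, by omega, ?_⟩
          simp only [hE, hF, if_neg (by omega : ¬ i + n < n), Nat.add_sub_cancel]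
          exact hx
    have hmeasS : MeasurableSet (USet I v S) := by
      rw [hUS]; exact (Finset.range n).measurableSet_biUnion (fun i _ => measurableSet_Ioc)
    have hmeasT : MeasurableSet (USet I v T) := by
      rw [hUT]; exact (Finset.range m).measurableSet_biUnion (fun i _ => measurableSet_Ioc)
    have hdisjU : Disjoint (USet I v S) (USet I v T) := by
      rw [hUS, hUT]
      rw [Set.disjoint_iUnion_left]
      intro i
      rw [Set.disjoint_iUnion_left]
      intro hi
      rw [Set.disjoint_iUnion_right]
      intro j
      rw [Set.disjoint_iUnion_right]
      intro hj
      rw [Finset.mem_range] at hi hj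
      refine Ioc_disjoint_of_blocks I v hchain hmono (hC i hi) (hD i hi) (hC' j hj) (hD' j hj)
        (hDC i hi) (hDC' j hj) ?_
      refine Set.disjoint_of_subset ?_ ?_ hdisj
      · intro y hy
        simp only [hSdef, mem_iUnion, exists_prop, Finset.mem_range]
        exact ⟨i, hi, hy⟩
      · intro y hy
        simp only [hTdef, mem_iUnion, exists_prop, Finset.mem_range]
        exact ⟨j, hj, hy⟩
    have hfinS : volume (USet I v S) ≠ ⊤ := by
      rw [hUS]
      refine ne_top_of_le_ne_top ?_ (measure_biUnion_finset_le _ _)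
      exact (ENNReal.sum_lt_top.mpr (fun i _ => by simp [Real.volume_Ioc])).ne
    have hfinT : volume (USet I v T) ≠ ⊤ := by
      rw [hUT]
      refine ne_top_of_le_ne_top ?_ (measure_biUnion_finset_le _ _)
      exact (ENNReal.sum_lt_top.mpr (fun i _ => by simp [Real.volume_Ioc])).ne
    rw [hUST, measure_union hdisjU hmeasT, ENNReal.toReal_add hfinS hfinT]
end

section
/- Let (Ω,𝓕) be a measurable space admitting a class 𝓘 ⊆ 𝓕 containing ∅ and Ω, totally ordered by inclusion, with σ(𝓘) = 𝓕. Let v : 𝓕 → ℝ be submodular (non-decreasing, continuous along monotone sequences, v(∅)=0, v(A)+v(B) ≥ v(A∪B)+v(A∩B)). Then for any measurable B ⊆ A there exists a unique finite measure μ on (A, 𝓕|_A) such that μ(I) = v(I) for all I ∈ 𝓘_{A,B}, and this μ satisfies μ(A) = v(A), μ(B) = v(B), and μ(E) ≤ v(E) for all measurable E ⊆ A. -/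
open MeasureTheory Set Filter Topology

def IsSubmodular {Ω : Type*} [MeasurableSpace Ω] (v : Set Ω → ℝ) : Prop :=
  v ∅ = 0 ∧
  (∀ A B : Set Ω, MeasurableSet A → MeasurableSet B → A ⊆ B → v A ≤ v B) ∧
  (∀ A : ℕ → Set Ω, (∀ n, MeasurableSet (A n)) → Monotone A →
    Tendsto (fun n => v (A n)) atTop (nhds (v (⋃ n, A n)))) ∧
  (∀ A : ℕ → Set Ω, (∀ n, MeasurableSet (A n)) → Antitone A →
    Tendsto (fun n => v (A n)) atTop (nhds (v (⋂ n, A n)))) ∧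
  (∀ A B : Set Ω, MeasurableSet A → MeasurableSet B →
    v (A ∪ B) + v (A ∩ B) ≤ v A + v B)

def IsSupermodular {Ω : Type*} [MeasurableSpace Ω] (v : Set Ω → ℝ) : Prop :=
  v ∅ = 0 ∧
  (∀ A B : Set Ω, MeasurableSet A → MeasurableSet B → A ⊆ B → v A ≤ v B) ∧
  (∀ A : ℕ → Set Ω, (∀ n, MeasurableSet (A n)) → Monotone A →
    Tendsto (fun n => v (A n)) atTop (nhds (v (⋃ n, A n)))) ∧
  (∀ A : ℕ → Set Ω, (∀ n, MeasurableSet (A n)) → Antitone A →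
    Tendsto (fun n => v (A n)) atTop (nhds (v (⋂ n, A n)))) ∧
  (∀ A B : Set Ω, MeasurableSet A → MeasurableSet B →
    v A + v B ≤ v (A ∪ B) + v (A ∩ B))

section Prelim
variable {Ω : Type*}

/-- every set in a generated σ-algebra is generated by a countable subfamily -/
lemma exists_countable_generateFrom (S : Set (Set Ω)) {E : Set Ω}
    (hE : MeasurableSet[MeasurableSpace.generateFrom S] E) :
    ∃ T, T ⊆ S ∧ T.Countable ∧ MeasurableSet[MeasurableSpace.generateFrom T] E := by
  have hE' : MeasurableSpace.GenerateMeasurable S E := hE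
  clear hE
  induction hE' with
  | basic u hu =>
      exact ⟨{u}, by simpa using hu, countable_singleton u,
        MeasurableSpace.measurableSet_generateFrom rfl⟩
  | empty =>
      exact ⟨∅, empty_subset _, countable_empty,
        @MeasurableSet.empty _ (MeasurableSpace.generateFrom ∅)⟩
  | compl u hu ih =>
      obtain ⟨T, hTS, hTc, hT⟩ := ih
      exact ⟨T, hTS, hTc, MeasurableSet.compl hT⟩
  | iUnion f hf ih =>
      choose T hTS hTc hT using ih
      refine ⟨⋃ n, T n, iUnion_subset hTS, countable_iUnion hTc, MeasurableSet.iUnion fun n => ?_⟩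
      exact (MeasurableSpace.generateFrom_mono (subset_iUnion T n)) _ (hT n)

end Prelim


structure ChainSetup (Ω : Type*) [m : MeasurableSpace Ω] where
  v : Set Ω → ℝ
  hv : IsSubmodular v
  A : Set Ω
  hA : MeasurableSet A
  e : ℕ → Set Ω
  he_meas : ∀ n, MeasurableSet (e n)
  he_sub : ∀ n, e n ⊆ A
  he_chain : ∀ i j, e i ⊆ e j ∨ e j ⊆ e i

namespace ChainSetup
variable {Ω : Type*} [m : MeasurableSpace Ω] (c : ChainSetup Ω)

open Classical in
noncomputable def g (n : ℕ) (ω : Ω) : ℝ := if ω ∈ c.e n then 0 else (1/3 : ℝ)^n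

lemma g_nonneg (n : ℕ) (ω : Ω) : 0 ≤ c.g n ω := by
  unfold g; split <;> positivity

lemma g_le (n : ℕ) (ω : Ω) : c.g n ω ≤ (1/3:ℝ)^n := by
  unfold g; split
  · positivity
  · exact le_refl _

lemma summable_g (ω : Ω) : Summable (fun n => c.g n ω) :=
  Summable.of_nonneg_of_le (c.g_nonneg · ω) (c.g_le · ω)
    (summable_geometric_of_lt_one (by norm_num) (by norm_num))

noncomputable def F (ω : Ω) : ℝ := ∑' n, c.g n ω

lemma F_nonneg (ω : Ω) : 0 ≤ c.F ω := tsum_nonneg (c.g_nonneg · ω)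

lemma F_le_two (ω : Ω) : c.F ω ≤ 2 := by
  have h1 : c.F ω ≤ ∑' n : ℕ, (1/3:ℝ)^n :=
    Summable.tsum_le_tsum (c.g_le · ω) (c.summable_g ω)
      (summable_geometric_of_lt_one (by norm_num) (by norm_num))
  have h2 : ∑' n : ℕ, (1/3:ℝ)^n = (1 - 1/3)⁻¹ :=
    tsum_geometric_of_lt_one (by norm_num) (by norm_num)
  rw [h2] at h1; linarith

lemma F_mono_mem {ω ω' : Ω} (h : c.F ω' ≤ c.F ω) {k : ℕ} (hk : ω ∈ c.e k) : ω' ∈ c.e k := by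
  by_contra h'
  have hcomp : (∀ n, ω' ∈ c.e n → ω ∈ c.e n) ∨ (∀ n, ω ∈ c.e n → ω' ∈ c.e n) := by
    by_contra hc
    push_neg at hc
    obtain ⟨⟨a, ha1, ha2⟩, ⟨b, hb1, hb2⟩⟩ := hc
    rcases c.he_chain a b with hab | hba
    · exact hb2 (hab ha1)
    · exact ha2 (hba hb1)
  rcases hcomp with h1 | h2
  · have hlt : c.F ω < c.F ω' := by
      refine Summable.tsum_lt_tsum (i := k) (fun n => ?_) ?_ (c.summable_g ω) (c.summable_g ω')
      · by_cases hn : ω' ∈ c.e n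
        · simp [g, hn, h1 n hn]
        · simpa [g, hn] using c.g_le n ω
      · simp [g, hk, h']
    linarith
  · exact h' (h2 k hk)

lemma F_measurable : Measurable c.F := by
  have hmeas : ∀ n : ℕ, Measurable (fun ω => ∑ i ∈ Finset.range n, c.g i ω) := by
    intro n
    refine Finset.measurable_sum _ fun i _ => ?_
    exact Measurable.ite (c.he_meas i) measurable_const measurable_const
  refine measurable_of_tendsto_metrizable' atTop hmeas ?_
  rw [tendsto_pi_nhds]
  exact fun ω => (c.summable_g ω).hasSum.tendsto_sum_nat

/-- representation of chain elements as sublevel sets of F -/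
lemma rep (k : ℕ) :
    c.e k = ∅ ∨ (∃ s, c.e k = c.F ⁻¹' Iic s) ∨ (∃ s, c.e k = c.F ⁻¹' Iio s) := by
  rcases eq_empty_or_nonempty (c.e k) with hemp | hne
  · exact Or.inl hemp
  right
  have hbdd : BddAbove (c.F '' c.e k) := ⟨2, fun x ⟨ω, _, hω⟩ => hω ▸ c.F_le_two ω⟩
  set s := sSup (c.F '' c.e k) with hs
  by_cases hatt : ∃ ω₀ ∈ c.e k, c.F ω₀ = s
  · obtain ⟨ω₀, h0, hF0⟩ := hatt
    left
    refine ⟨s, Set.ext fun ω => ⟨fun hω => le_csSup hbdd ⟨ω, hω, rfl⟩, fun hω => ?_⟩⟩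
    exact c.F_mono_mem (by simpa [hF0] using (hω : c.F ω ≤ s)) h0
  · right
    refine ⟨s, Set.ext fun ω => ⟨fun hω => ?_, fun hω => ?_⟩⟩
    · have hle : c.F ω ≤ s := le_csSup hbdd ⟨ω, hω, rfl⟩
      have : c.F ω ≠ s := fun he => hatt ⟨ω, hω, he⟩
      exact lt_of_le_of_ne hle this
    · obtain ⟨y, ⟨ω₁, h1, rfl⟩, hy⟩ := exists_lt_of_lt_csSup (hne.image c.F) hω
      exact c.F_mono_mem (le_of_lt hy) h1

/-- the comap σ-algebra -/
noncomputable def mC : MeasurableSpace Ω := MeasurableSpace.comap c.F inferInstance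

lemma e_mC (k : ℕ) : MeasurableSet[c.mC] (c.e k) := by
  rcases c.rep k with h | ⟨s, h⟩ | ⟨s, h⟩
  · exact ⟨∅, MeasurableSet.empty, by simp [h]⟩
  · exact ⟨Iic s, measurableSet_Iic, h.symm⟩
  · exact ⟨Iio s, measurableSet_Iio, h.symm⟩

lemma mC_le : c.mC ≤ m := by
  rintro E ⟨S, hS, rfl⟩
  exact c.F_measurable hS


end ChainSetup

namespace ChainSetup
variable {Ω : Type*} [m : MeasurableSpace Ω] (c : ChainSetup Ω)

lemma v_empty : c.v ∅ = 0 := c.hv.1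
lemma v_mono {X Y : Set Ω} (hX : MeasurableSet X) (hY : MeasurableSet Y) (h : X ⊆ Y) :
    c.v X ≤ c.v Y := c.hv.2.1 X Y hX hY h
lemma v_cont_mono (S : ℕ → Set Ω) (h : ∀ n, MeasurableSet (S n)) (hm : Monotone S) :
    Tendsto (fun n => c.v (S n)) atTop (𝓝 (c.v (⋃ n, S n))) := c.hv.2.2.1 S h hm
lemma v_cont_anti (S : ℕ → Set Ω) (h : ∀ n, MeasurableSet (S n)) (hm : Antitone S) :
    Tendsto (fun n => c.v (S n)) atTop (𝓝 (c.v (⋂ n, S n))) := c.hv.2.2.2.1 S h hm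
lemma v_submod (X Y : Set Ω) (hX : MeasurableSet X) (hY : MeasurableSet Y) :
    c.v (X ∪ Y) + c.v (X ∩ Y) ≤ c.v X + c.v Y := c.hv.2.2.2.2 X Y hX hY
lemma v_nonneg {X : Set Ω} (hX : MeasurableSet X) : 0 ≤ c.v X :=
  c.v_empty ▸ c.v_mono MeasurableSet.empty hX (empty_subset X)

noncomputable def G (x : ℝ) : ℝ := c.v (c.F ⁻¹' Iic x ∩ c.A)

lemma preim_meas {S : Set ℝ} (hS : MeasurableSet S) : MeasurableSet (c.F ⁻¹' S ∩ c.A) :=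
  (c.F_measurable hS).inter c.hA

lemma G_mono : Monotone c.G := fun x y hxy =>
  c.v_mono (c.preim_meas measurableSet_Iic) (c.preim_meas measurableSet_Iic)
    (inter_subset_inter_left _ (preimage_mono (Iic_subset_Iic.2 hxy)))

lemma G_neg {x : ℝ} (hx : x < 0) : c.G x = 0 := by
  have h : c.F ⁻¹' Iic x = ∅ := by
    ext ω; simp only [mem_preimage, mem_Iic, mem_empty_iff_false, iff_false, not_le]
    exact lt_of_lt_of_le hx (c.F_nonneg ω)
  rw [G, h, empty_inter, c.v_empty]

lemma G_ge_two {x : ℝ} (hx : 2 ≤ x) : c.G x = c.v c.A := by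
  have h : c.F ⁻¹' Iic x = univ := by
    ext ω; simp only [mem_preimage, mem_Iic, mem_univ, iff_true]
    exact (c.F_le_two ω).trans hx
  rw [G, h, univ_inter]

lemma tendsto_G_right (x : ℝ) :
    Tendsto (fun n : ℕ => c.G (x + 1/(n+1))) atTop (𝓝 (c.G x)) := by
  have key : (⋂ n : ℕ, c.F ⁻¹' Iic (x + 1/(n+1)) ∩ c.A) = c.F ⁻¹' Iic x ∩ c.A := by
    ext ω
    simp only [mem_iInter, mem_inter_iff, mem_preimage, mem_Iic]
    constructor
    · intro h
      refine ⟨?_, (h 0).2⟩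
      by_contra hcon
      push_neg at hcon
      obtain ⟨n, hn⟩ := exists_nat_one_div_lt (sub_pos.2 hcon)
      have := (h n).1
      linarith
    · intro ⟨h1, h2⟩ n
      have hp : (0:ℝ) < 1/(n+1) := by positivity
      exact ⟨by linarith, h2⟩
  have := c.v_cont_anti (fun n => c.F ⁻¹' Iic (x + 1/(n+1)) ∩ c.A)
    (fun n => c.preim_meas measurableSet_Iic) ?anti
  · rw [key] at this; exact this
  case anti =>
    intro i j hij
    refine inter_subset_inter_left _ (preimage_mono (Iic_subset_Iic.2 ?_))
    have : (1:ℝ)/(j+1) ≤ 1/(i+1) := by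
      apply one_div_le_one_div_of_le (by positivity)
      exact_mod_cast add_le_add_left (Nat.cast_le.2 hij) 1
    linarith

lemma G_rightCont (x : ℝ) : ContinuousWithinAt c.G (Ici x) x := by
  rw [ContinuousWithinAt]
  refine tendsto_order.2 ⟨?_, ?_⟩
  · intro a ha
    filter_upwards [self_mem_nhdsWithin] with y (hy : y ∈ Ici x)
    exact lt_of_lt_of_le ha (c.G_mono hy)
  · intro b hb
    obtain ⟨n, hn⟩ := ((tendsto_order.1 (c.tendsto_G_right x)).2 b hb).exists
    have hx : x < x + 1/(n+1) := by
      have : (0:ℝ) < 1/(n+1) := by positivity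
      linarith
    filter_upwards [Ico_mem_nhdsGE hx] with y hy
    exact lt_of_le_of_lt (c.G_mono hy.2.le) hn

noncomputable def SF : StieltjesFunction ℝ := ⟨c.G, c.G_mono, c.G_rightCont⟩

noncomputable def lam : Measure ℝ := c.SF.measure

lemma tendsto_G_atBot : Tendsto c.G atBot (𝓝 0) := by
  refine Tendsto.congr' ?_ (tendsto_const_nhds (α := ℝ))
  filter_upwards [eventually_le_atBot (-1 : ℝ)] with y hy
  exact (c.G_neg (lt_of_le_of_lt hy (by norm_num))).symm

lemma tendsto_G_atTop : Tendsto c.G atTop (𝓝 (c.v c.A)) := by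
  refine Tendsto.congr' ?_ (tendsto_const_nhds (α := ℝ))
  filter_upwards [eventually_ge_atTop (2 : ℝ)] with y hy
  exact (c.G_ge_two hy).symm

lemma lam_univ : c.lam univ = ENNReal.ofReal (c.v c.A) := by
  rw [lam, StieltjesFunction.measure_univ _ c.tendsto_G_atBot c.tendsto_G_atTop, sub_zero]

lemma lam_finite : IsFiniteMeasure c.lam :=
  c.SF.isFiniteMeasure c.tendsto_G_atBot c.tendsto_G_atTop

lemma lam_Iic (x : ℝ) : c.lam (Iic x) = ENNReal.ofReal (c.G x) := by
  rw [lam, c.SF.measure_Iic c.tendsto_G_atBot, sub_zero]; rfl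

lemma lam_Ioc (a b : ℝ) : c.lam (Ioc a b) = ENNReal.ofReal (c.G b - c.G a) :=
  c.SF.measure_Ioc a b

lemma tendsto_G_left (s : ℝ) :
    Tendsto (fun n : ℕ => c.G (s - 1/(n+1))) atTop (𝓝 (c.v (c.F ⁻¹' Iio s ∩ c.A))) := by
  have key : (⋃ n : ℕ, c.F ⁻¹' Iic (s - 1/(n+1)) ∩ c.A) = c.F ⁻¹' Iio s ∩ c.A := by
    ext ω
    simp only [mem_iUnion, mem_inter_iff, mem_preimage, mem_Iic, mem_Iio]
    constructor
    · rintro ⟨n, h1, h2⟩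
      refine ⟨lt_of_le_of_lt h1 ?_, h2⟩
      have : (0:ℝ) < 1/(n+1) := by positivity
      linarith
    · rintro ⟨h1, h2⟩
      obtain ⟨n, hn⟩ := exists_nat_one_div_lt (sub_pos.2 h1)
      exact ⟨n, by linarith, h2⟩
  have := c.v_cont_mono (fun n => c.F ⁻¹' Iic (s - 1/(n+1)) ∩ c.A)
    (fun n => c.preim_meas measurableSet_Iic) ?mono
  · rw [key] at this; exact this
  case mono =>
    intro i j hij
    refine inter_subset_inter_left _ (preimage_mono (Iic_subset_Iic.2 ?_))
    have : (1:ℝ)/(j+1) ≤ 1/(i+1) := by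
      apply one_div_le_one_div_of_le (by positivity)
      exact_mod_cast add_le_add_left (Nat.cast_le.2 hij) 1
    linarith

lemma leftLim_G (s : ℝ) : Function.leftLim c.G s = c.v (c.F ⁻¹' Iio s ∩ c.A) := by
  have h1 : Tendsto c.G (𝓝[<] s) (𝓝 (Function.leftLim c.G s)) := c.G_mono.tendsto_leftLim s
  have hseq : Tendsto (fun n : ℕ => s - 1/(n+1)) atTop (𝓝[<] s) := by
    refine tendsto_nhdsWithin_of_tendsto_nhds_of_eventually_within _ ?_ ?_
    · have : Tendsto (fun n : ℕ => 1/((n:ℝ)+1)) atTop (𝓝 0) := tendsto_one_div_add_atTop_nhds_zero_nat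
      have h2 := (tendsto_const_nhds (x := s) (f := atTop (α := ℕ))).sub this
      simpa using h2
    · filter_upwards with n
      have : (0:ℝ) < 1/(n+1) := by positivity
      simp only [mem_Iio]; linarith
  exact tendsto_nhds_unique (h1.comp hseq) (c.tendsto_G_left s)

lemma lam_Iio (s : ℝ) : c.lam (Iio s) = ENNReal.ofReal (c.v (c.F ⁻¹' Iio s ∩ c.A)) := by
  have hunion : (⋃ n : ℕ, Iic (s - 1/((n:ℝ)+1))) = Iio s := by
    ext x; simp only [mem_iUnion, mem_Iic, mem_Iio]
    constructor
    · rintro ⟨n, hn⟩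
      have : (0:ℝ) < 1/(n+1) := by positivity
      linarith
    · intro hx
      obtain ⟨n, hn⟩ := exists_nat_one_div_lt (sub_pos.2 hx)
      exact ⟨n, by linarith⟩
  have hmono : Monotone (fun n : ℕ => Iic (s - 1/((n:ℝ)+1))) := by
    intro i j hij
    refine Iic_subset_Iic.2 ?_
    have : (1:ℝ)/(j+1) ≤ 1/(i+1) := by
      apply one_div_le_one_div_of_le (by positivity)
      exact_mod_cast add_le_add_left (Nat.cast_le.2 hij) 1
    linarith
  have h1 : Tendsto (fun n : ℕ => c.lam (Iic (s - 1/((n:ℝ)+1)))) atTop (𝓝 (c.lam (Iio s))) := by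
    have := tendsto_measure_iUnion_atTop (μ := c.lam) hmono
    rwa [hunion] at this
  have h2 : Tendsto (fun n : ℕ => c.lam (Iic (s - 1/((n:ℝ)+1)))) atTop
      (𝓝 (ENNReal.ofReal (c.v (c.F ⁻¹' Iio s ∩ c.A)))) := by
    simp_rw [c.lam_Iic]
    exact ENNReal.tendsto_ofReal (c.tendsto_G_left s)
  exact tendsto_nhds_unique h1 h2

end ChainSetup
namespace ChainSetup
variable {Ω : Type*} [m : MeasurableSpace Ω] (c : ChainSetup Ω)

lemma telescope (δ : ℝ) (hδ : 0 ≤ δ) (K : Finset ℤ) :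
    ∑ k ∈ K, (c.G (δ*((k:ℝ)+1)) - c.G (δ*(k:ℝ))) ≤
      c.v (c.F ⁻¹' (⋃ k ∈ K, Ioc (δ*(k:ℝ)) (δ*((k:ℝ)+1))) ∩ c.A) := by
  classical
  induction K using Finset.induction_on_max with
  | empty => simp [c.v_empty]
  | insert a K hlt IH =>
    have haK : a ∉ K := fun ha => lt_irrefl a (hlt a ha)
    have hUmeas : MeasurableSet (⋃ k ∈ K, Ioc (δ*(k:ℝ)) (δ*((k:ℝ)+1))) :=
      K.measurableSet_biUnion (fun _ _ => measurableSet_Ioc)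
    have hImeas : MeasurableSet (⋃ k ∈ insert a K, Ioc (δ*(k:ℝ)) (δ*((k:ℝ)+1))) :=
      (insert a K).measurableSet_biUnion (fun _ _ => measurableSet_Ioc)
    set X := c.F ⁻¹' Iic (δ*(a:ℝ)) ∩ c.A with hX
    set Y := c.F ⁻¹' (⋃ k ∈ insert a K, Ioc (δ*(k:ℝ)) (δ*((k:ℝ)+1))) ∩ c.A with hY
    have hXm : MeasurableSet X := c.preim_meas measurableSet_Iic
    have hYm : MeasurableSet Y := c.preim_meas hImeas
    have h1 : c.G (δ*((a:ℝ)+1)) ≤ c.v (X ∪ Y) := by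
      refine c.v_mono (c.preim_meas measurableSet_Iic) (hXm.union hYm) ?_
      rintro ω ⟨hω, hωA⟩
      simp only [mem_preimage, mem_Iic] at hω
      by_cases hc : c.F ω ≤ δ*(a:ℝ)
      · exact Or.inl ⟨hc, hωA⟩
      · push_neg at hc
        refine Or.inr ⟨?_, hωA⟩
        simp only [mem_preimage]
        exact mem_biUnion (Finset.mem_insert_self a K) ⟨hc, hω⟩
    have h2 : c.v (c.F ⁻¹' (⋃ k ∈ K, Ioc (δ*(k:ℝ)) (δ*((k:ℝ)+1))) ∩ c.A) ≤ c.v (X ∩ Y) := by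
      refine c.v_mono (c.preim_meas hUmeas) (hXm.inter hYm) ?_
      rintro ω ⟨hω, hωA⟩
      simp only [mem_preimage, mem_iUnion] at hω
      obtain ⟨b, hbK, hb1, hb2⟩ := hω
      have hba : (b:ℝ)+1 ≤ (a:ℝ) := by exact_mod_cast hlt b hbK
      refine ⟨⟨?_, hωA⟩, ⟨?_, hωA⟩⟩
      · simp only [mem_preimage, mem_Iic]
        calc c.F ω ≤ δ*((b:ℝ)+1) := hb2
          _ ≤ δ*(a:ℝ) := mul_le_mul_of_nonneg_left hba hδ
      · simp only [mem_preimage, mem_iUnion]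
        exact ⟨b, Finset.mem_insert_of_mem hbK, hb1, hb2⟩
    have hsub := c.v_submod X Y hXm hYm
    rw [Finset.sum_insert haK]
    have hGa : c.G (δ*(a:ℝ)) = c.v X := rfl
    linarith [IH]
end ChainSetup
namespace ChainSetup
variable {Ω : Type*} [m : MeasurableSpace Ω] (c : ChainSetup Ω)

lemma compact_dom {K : Set ℝ} (hK : IsCompact K) :
    c.lam K ≤ ENNReal.ofReal (c.v (c.F ⁻¹' K ∩ c.A)) := by
  classical
  obtain ⟨M, hM⟩ : ∃ M : ℝ, K ⊆ Icc (-M) M := by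
    obtain ⟨M, hMb⟩ := hK.isBounded.subset_closedBall 0
    refine ⟨M, fun x hx => ?_⟩
    have := hMb hx
    rw [Metric.closedBall, mem_setOf_eq, Real.dist_eq, abs_le] at this
    exact ⟨by linarith [this.1], by linarith [this.2]⟩
  set δ : ℕ → ℝ := fun n => (1/2)^n with hδdef
  have hδpos : ∀ n, 0 < δ n := fun n => by positivity
  have hfin : ∀ n, {k : ℤ | (Ioc (δ n*(k:ℝ)) (δ n*((k:ℝ)+1)) ∩ K).Nonempty}.Finite := by
    intro n
    refine Set.Finite.subset (Set.finite_Icc (⌊-M / δ n⌋ - 1) ⌈M / δ n⌉) ?_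
    rintro k ⟨x, ⟨hx1, hx2⟩, hxK⟩
    have hxM := hM hxK
    simp only [mem_Icc] at hxM ⊢
    constructor
    · have h1 : -M ≤ ((k:ℝ)+1) * δ n := by rw [mul_comm]; linarith [hxM.1]
      have h2 : -M / δ n ≤ (k:ℝ)+1 := (div_le_iff₀ (hδpos n)).2 h1
      have h3 : (⌊-M / δ n⌋:ℝ) ≤ (k:ℝ)+1 := le_trans (Int.floor_le _) h2
      have h4 : ⌊-M / δ n⌋ ≤ k+1 := by exact_mod_cast h3
      omega
    · have h1 : (k:ℝ) * δ n < M := by rw [mul_comm]; linarith [hxM.2]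
      have h2 : (k:ℝ) < M / δ n := (lt_div_iff₀ (hδpos n)).2 h1
      have h3 : (k:ℝ) ≤ (⌈M / δ n⌉:ℝ) := le_trans h2.le (Int.le_ceil _)
      exact_mod_cast h3
  set Dfin : ℕ → Finset ℤ := fun n => (hfin n).toFinset with hDfin
  set D : ℕ → Set ℝ := fun n => ⋃ k ∈ Dfin n, Ioc (δ n*(k:ℝ)) (δ n*((k:ℝ)+1)) with hD
  have hDmeas : ∀ n, MeasurableSet (D n) :=
    fun n => (Dfin n).measurableSet_biUnion (fun _ _ => measurableSet_Ioc)
  have hKD : ∀ n, K ⊆ D n := by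
    intro n x hx
    set k : ℤ := ⌈x / δ n⌉ - 1 with hk
    have hmem : x ∈ Ioc (δ n*(k:ℝ)) (δ n*((k:ℝ)+1)) := by
      constructor
      · have h := Int.ceil_lt_add_one (x / δ n)
        have h2 : (k:ℝ) < x / δ n := by
          push_cast [hk]; linarith
        calc δ n*(k:ℝ) < δ n * (x / δ n) := mul_lt_mul_of_pos_left h2 (hδpos n)
          _ = x := by have := (hδpos n).ne'; field_simp
      · have h := Int.le_ceil (x / δ n)
        have h2 : x / δ n ≤ (k:ℝ)+1 := by push_cast [hk]; linarith
        calc x = δ n * (x / δ n) := by have := (hδpos n).ne'; field_simp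
          _ ≤ δ n*((k:ℝ)+1) := mul_le_mul_of_nonneg_left h2 (hδpos n).le
    have hkD : k ∈ Dfin n := (hfin n).mem_toFinset.2 ⟨x, hmem, hx⟩
    exact mem_biUnion hkD hmem
  have hhalf : ∀ n, δ (n+1) = δ n / 2 := by
    intro n; simp only [hδdef, pow_succ]; ring
  have hDanti : Antitone D := by
    refine antitone_nat_of_succ_le ?_
    intro n x hx
    simp only [hD, mem_iUnion, exists_prop] at hx
    obtain ⟨k, hkD, hk1, hk2⟩ := hx
    obtain ⟨y, hy1, hy2⟩ := (hfin (n+1)).mem_toFinset.1 hkD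
    rcases Int.even_or_odd k with ⟨j, hj⟩ | ⟨j, hj⟩
    · -- k = j + j
      have hsub : Ioc (δ (n+1)*(k:ℝ)) (δ (n+1)*((k:ℝ)+1)) ⊆ Ioc (δ n*(j:ℝ)) (δ n*((j:ℝ)+1)) := by
        intro z hz
        have e1 : (k:ℝ) = (j:ℝ)+(j:ℝ) := by exact_mod_cast hj
        rw [hhalf n] at hz
        constructor
        · calc δ n*(j:ℝ) = δ n/2*(k:ℝ) := by rw [e1]; ring
            _ < z := hz.1
        · calc z ≤ δ n/2*((k:ℝ)+1) := hz.2
            _ ≤ δ n*((j:ℝ)+1) := by rw [e1]; nlinarith [hδpos n]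
      have hjD : j ∈ Dfin n := (hfin n).mem_toFinset.2 ⟨y, hsub hy1, hy2⟩
      exact mem_biUnion hjD (hsub ⟨hk1, hk2⟩)
    · -- k = 2j+1
      have hsub : Ioc (δ (n+1)*(k:ℝ)) (δ (n+1)*((k:ℝ)+1)) ⊆ Ioc (δ n*(j:ℝ)) (δ n*((j:ℝ)+1)) := by
        intro z hz
        have e1 : (k:ℝ) = 2*(j:ℝ)+1 := by exact_mod_cast hj
        rw [hhalf n] at hz
        constructor
        · calc δ n*(j:ℝ) ≤ δ n/2*(k:ℝ) := by rw [e1]; nlinarith [hδpos n]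
            _ < z := hz.1
        · calc z ≤ δ n/2*((k:ℝ)+1) := hz.2
            _ = δ n*((j:ℝ)+1) := by rw [e1]; ring
      have hjD : j ∈ Dfin n := (hfin n).mem_toFinset.2 ⟨y, hsub hy1, hy2⟩
      exact mem_biUnion hjD (hsub ⟨hk1, hk2⟩)
  have hInter : (⋂ n, D n) ⊆ K := by
    intro x hx
    simp only [mem_iInter] at hx
    have hxn : ∀ n, ∃ y, y ∈ K ∧ |x - y| ≤ δ n := by
      intro n
      have := hx n
      simp only [hD, mem_iUnion, exists_prop] at this
      obtain ⟨k, hkD, hk1, hk2⟩ := this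
      obtain ⟨y, hy1, hy2⟩ := (hfin n).mem_toFinset.1 hkD
      refine ⟨y, hy2, ?_⟩
      rw [abs_le]
      constructor
      · -- -(δ n) ≤ x - y : y ≤ δ(k+1), x > δ k
        have : y ≤ δ n*((k:ℝ)+1) := hy1.2
        have : δ n*(k:ℝ) < x := hk1
        nlinarith [hδpos n]
      · have : x ≤ δ n*((k:ℝ)+1) := hk2
        have : δ n*(k:ℝ) < y := hy1.1
        nlinarith [hδpos n]
    choose y hyK hyd using hxn
    have htend : Tendsto y atTop (𝓝 x) := by
      rw [tendsto_iff_dist_tendsto_zero]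
      refine squeeze_zero (g := δ) (fun n => dist_nonneg) (fun n => ?_) ?_
      · rw [dist_comm, Real.dist_eq]; exact hyd n
      · exact tendsto_pow_atTop_nhds_zero_of_lt_one (by norm_num) (by norm_num)
    exact hK.isClosed.mem_of_tendsto htend (Eventually.of_forall hyK)
  have hlamD : ∀ n, c.lam (D n) ≤ ENNReal.ofReal (c.v (c.F ⁻¹' (D n) ∩ c.A)) := by
    intro n
    have hdisj : (↑(Dfin n) : Set ℤ).PairwiseDisjoint
        (fun k : ℤ => Ioc (δ n*(k:ℝ)) (δ n*((k:ℝ)+1))) := by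
      rintro i - j - hij
      rcases lt_or_gt_of_ne hij with h | h
      · have : (i:ℝ)+1 ≤ (j:ℝ) := by exact_mod_cast h
        refine Set.disjoint_left.2 fun z hz1 hz2 => ?_
        have h1 : z ≤ δ n*((i:ℝ)+1) := hz1.2
        have h2 : δ n*(j:ℝ) < z := hz2.1
        nlinarith [hδpos n]
      · have : (j:ℝ)+1 ≤ (i:ℝ) := by exact_mod_cast h
        refine Set.disjoint_left.2 fun z hz1 hz2 => ?_
        have h1 : z ≤ δ n*((j:ℝ)+1) := hz2.2
        have h2 : δ n*(i:ℝ) < z := hz1.1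
        nlinarith [hδpos n]
    rw [hD]
    rw [measure_biUnion_finset hdisj (fun _ _ => measurableSet_Ioc)]
    simp_rw [c.lam_Ioc]
    rw [← ENNReal.ofReal_sum_of_nonneg (fun k _ => sub_nonneg.2 (c.G_mono
      (mul_le_mul_of_nonneg_left (by linarith) (hδpos n).le)))]
    exact ENNReal.ofReal_le_ofReal (c.telescope (δ n) (hδpos n).le (Dfin n))
  have hEanti : Antitone (fun n => c.F ⁻¹' (D n) ∩ c.A) :=
    fun i j hij => inter_subset_inter_left _ (preimage_mono (hDanti hij))
  have hvlim := c.v_cont_anti _ (fun n => c.preim_meas (hDmeas n)) hEanti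
  have hlim2 : Tendsto (fun n => ENNReal.ofReal (c.v (c.F ⁻¹' (D n) ∩ c.A))) atTop
      (𝓝 (ENNReal.ofReal (c.v (⋂ n, c.F ⁻¹' (D n) ∩ c.A)))) := ENNReal.tendsto_ofReal hvlim
  have hKle : ∀ n, c.lam K ≤ ENNReal.ofReal (c.v (c.F ⁻¹' (D n) ∩ c.A)) :=
    fun n => (measure_mono (hKD n)).trans (hlamD n)
  have h5 : c.lam K ≤ ENNReal.ofReal (c.v (⋂ n, c.F ⁻¹' (D n) ∩ c.A)) :=
    ge_of_tendsto hlim2 (Eventually.of_forall hKle)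
  refine h5.trans (ENNReal.ofReal_le_ofReal (c.v_mono
    (MeasurableSet.iInter (fun n => c.preim_meas (hDmeas n)))
    (c.preim_meas hK.measurableSet) ?_))
  intro ω hω
  simp only [mem_iInter, mem_inter_iff, mem_preimage] at hω ⊢
  exact ⟨hInter (mem_iInter.2 fun n => (hω n).1), (hω 0).2⟩

lemma borel_dom {S : Set ℝ} (hS : MeasurableSet S) :
    c.lam S ≤ ENNReal.ofReal (c.v (c.F ⁻¹' S ∩ c.A)) := by
  haveI : IsFiniteMeasure c.SF.measure := c.lam_finite
  haveI : (c.SF.measure).InnerRegular := by infer_instance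
  show c.SF.measure S ≤ _
  rw [hS.measure_eq_iSup_isCompact]
  refine iSup_le fun Kc => iSup_le fun hsub => iSup_le fun hcomp => ?_
  exact (c.compact_dom hcomp).trans (ENNReal.ofReal_le_ofReal (c.v_mono
    (c.preim_meas hcomp.measurableSet) (c.preim_meas hS)
    (inter_subset_inter_left _ (preimage_mono hsub))))

end ChainSetup
section DisjointedAux
variable {α β : Type*}

lemma preimage_partialSups (f : α → β) (S : ℕ → Set β) (n : ℕ) :
    f ⁻¹' (partialSups S n) = partialSups (fun i => f ⁻¹' S i) n := by
  induction n with
  | zero => simp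
  | succ n ih => simp [partialSups_succ, ih, preimage_union]

lemma preimage_disjointed (f : α → β) (S : ℕ → Set β) (n : ℕ) :
    f ⁻¹' (disjointed S n) = disjointed (fun i => f ⁻¹' S i) n := by
  cases n with
  | zero => simp [disjointed_zero]
  | succ n =>
    rw [← Order.succ_eq_add_one, disjointed_succ _ (not_isMax n), disjointed_succ _ (not_isMax n),
      preimage_diff, preimage_partialSups]

lemma disjoint_partialSups_of_pairwise {f : ℕ → Set α} (h : Pairwise (Function.onFun Disjoint f))
    {n k : ℕ} (hk : k < n) : Disjoint (f n) (partialSups f k) := by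
  induction k with
  | zero => simpa using h (by omega : n ≠ 0)
  | succ k ih =>
      rw [← Order.succ_eq_add_one, partialSups_succ]
      exact disjoint_sup_right.2 ⟨ih (by omega), h (by omega : n ≠ k+1)⟩

lemma disjointed_eq_self_of_disjoint {f : ℕ → Set α} (h : Pairwise (Function.onFun Disjoint f)) (n : ℕ) :
    disjointed f n = f n := by
  cases n with
  | zero => simp [disjointed_zero]
  | succ n =>
    rw [← Order.succ_eq_add_one, disjointed_succ _ (not_isMax n), sdiff_eq_left]
    exact disjoint_partialSups_of_pairwise h (Nat.lt_succ_self n)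

end DisjointedAux

open scoped ENNReal

namespace ChainSetup
variable {Ω : Type*} [m : MeasurableSpace Ω] (c : ChainSetup Ω)

lemma lam_null {S : Set ℝ} (hS : MeasurableSet S) (h : c.F ⁻¹' S = ∅) : c.lam S = 0 := by
  have hb := c.borel_dom hS
  rw [h, empty_inter, c.v_empty] at hb
  simpa using hb

lemma lam_congr {S S' : Set ℝ} (hS : MeasurableSet S) (hS' : MeasurableSet S')
    (h : c.F ⁻¹' S = c.F ⁻¹' S') : c.lam S = c.lam S' := by
  have h1 : c.lam (S \ S') = 0 := c.lam_null (hS.diff hS') (by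
    rw [preimage_diff, h, diff_self])
  have h2 : c.lam (S' \ S) = 0 := c.lam_null (hS'.diff hS) (by
    rw [preimage_diff, h, diff_self])
  have e1 : c.lam S = c.lam (S ∩ S') := by
    have := measure_inter_add_diff (μ := c.lam) S hS'
    rw [h1, add_zero] at this
    exact this.symm
  have e2 : c.lam S' = c.lam (S' ∩ S) := by
    have := measure_inter_add_diff (μ := c.lam) S' hS
    rw [h2, add_zero] at this
    exact this.symm
  rw [e1, e2, inter_comm]

lemma mC_iff {E : Set Ω} : MeasurableSet[c.mC] E ↔ ∃ S, MeasurableSet S ∧ c.F ⁻¹' S = E :=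
  Iff.rfl

noncomputable def val (E : Set Ω) (hE : MeasurableSet[c.mC] E) : ℝ≥0∞ :=
  c.lam (c.mC_iff.mp hE).choose

lemma val_eq {E : Set Ω} {S : Set ℝ} (hE : MeasurableSet[c.mC] E) (hS : MeasurableSet S)
    (hFS : c.F ⁻¹' S = E) : c.val E hE = c.lam S := by
  refine c.lam_congr (c.mC_iff.mp hE).choose_spec.1 hS ?_
  rw [(c.mC_iff.mp hE).choose_spec.2, hFS]

lemma val_empty (h : MeasurableSet[c.mC] (∅ : Set Ω)) : c.val ∅ h = 0 := by
  rw [c.val_eq _ MeasurableSet.empty (by simp)]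
  exact measure_empty

lemma val_iUnion ⦃f : ℕ → Set Ω⦄ (hf : ∀ i, MeasurableSet[c.mC] (f i))
    (hdisj : Pairwise (Function.onFun Disjoint f)) (hU : MeasurableSet[c.mC] (⋃ i, f i)) :
    c.val (⋃ i, f i) hU = ∑' i, c.val (f i) (hf i) := by
    have hSmeas : ∀ i, MeasurableSet ((c.mC_iff.mp (hf i)).choose) :=
      fun i => (c.mC_iff.mp (hf i)).choose_spec.1
    have hSpre : ∀ i, c.F ⁻¹' ((c.mC_iff.mp (hf i)).choose) = f i :=
      fun i => (c.mC_iff.mp (hf i)).choose_spec.2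
    set S : ℕ → Set ℝ := fun i => (c.mC_iff.mp (hf i)).choose with hSdef
    have hUeq : c.val (⋃ i, f i) hU = c.lam (⋃ i, S i) :=
      c.val_eq _ (MeasurableSet.iUnion hSmeas) (by rw [preimage_iUnion]; exact iUnion_congr hSpre)
    rw [hUeq]
    have hval : ∀ i, c.val (f i) (hf i) = c.lam (disjointed S i) := by
      intro i
      refine c.val_eq _ (MeasurableSet.disjointed hSmeas i) ?_
      rw [preimage_disjointed]
      have : (fun j => c.F ⁻¹' S j) = f := funext hSpre
      rw [this, disjointed_eq_self_of_disjoint hdisj]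
    calc c.lam (⋃ i, S i) = c.lam (⋃ i, disjointed S i) := by rw [iUnion_disjointed]
      _ = ∑' i, c.lam (disjointed S i) :=
          measure_iUnion (disjoint_disjointed S) (MeasurableSet.disjointed hSmeas)
      _ = ∑' i, c.val (f i) (hf i) := by simp_rw [hval]

noncomputable def muC : @Measure Ω c.mC :=
  @Measure.ofMeasurable Ω c.mC c.val (c.val_empty _) (fun f hf hd => c.val_iUnion hf hd _)

lemma muC_eq {E : Set Ω} {S : Set ℝ} (hE : MeasurableSet[c.mC] E) (hS : MeasurableSet S)
    (h : c.F ⁻¹' S = E) : c.muC E = c.lam S := by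
  rw [muC, @Measure.ofMeasurable_apply Ω c.mC _ _ _ E hE]
  exact c.val_eq hE hS h

lemma muC_univ : c.muC univ = ENNReal.ofReal (c.v c.A) := by
  rw [c.muC_eq (⟨univ, MeasurableSet.univ, by simp⟩ : MeasurableSet[c.mC] univ)
    MeasurableSet.univ (by simp), c.lam_univ]

lemma muC_e (k : ℕ) : c.muC (c.e k) = ENNReal.ofReal (c.v (c.e k)) := by
  rcases c.rep k with h | ⟨s, h⟩ | ⟨s, h⟩
  · rw [h]
    rw [c.muC_eq (⟨∅, MeasurableSet.empty, by simp⟩ : MeasurableSet[c.mC] ∅)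
      MeasurableSet.empty (by simp)]
    simp [c.v_empty]
  · rw [c.muC_eq (c.e_mC k) measurableSet_Iic h.symm, c.lam_Iic]
    congr 1
    show c.v (c.F ⁻¹' Iic s ∩ c.A) = c.v (c.e k)
    rw [← h, inter_eq_self_of_subset_left (c.he_sub k)]
  · rw [c.muC_eq (c.e_mC k) measurableSet_Iio h.symm, c.lam_Iio]
    congr 1
    rw [← h, inter_eq_self_of_subset_left (c.he_sub k)]

lemma muC_dom {E : Set Ω} (hE : MeasurableSet[c.mC] E) :
    c.muC E ≤ ENNReal.ofReal (c.v (E ∩ c.A)) := by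
  obtain ⟨S, hS, hFS⟩ := c.mC_iff.mp hE
  rw [c.muC_eq hE hS hFS]
  have := c.borel_dom hS
  rwa [hFS] at this

end ChainSetup
structure GlueSetup (Ω : Type*) [m : MeasurableSpace Ω] where
  v : Set Ω → ℝ
  hv : IsSubmodular v
  A : Set Ω
  hA : MeasurableSet A
  C : Set (Set Ω)
  hCmeas : ∀ S ∈ C, MeasurableSet S
  hCsub : ∀ S ∈ C, S ⊆ A
  hCchain : ∀ S₁ ∈ C, ∀ S₂ ∈ C, S₁ ⊆ S₂ ∨ S₂ ⊆ S₁
  hCempty : (∅ : Set Ω) ∈ C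
  hCtop : A ∈ C
  htrace : ∀ E : Set Ω, MeasurableSet E →
    MeasurableSet[MeasurableSpace.generateFrom C] (E ∩ A)

namespace GlueSetup
variable {Ω : Type*} [m : MeasurableSpace Ω] (g : GlueSetup Ω)

def Adm (T : Set (Set Ω)) : Prop := T ⊆ g.C ∧ T.Countable ∧ (∅ : Set Ω) ∈ T

noncomputable def efun {T : Set (Set Ω)} (hT : g.Adm T) : ℕ → Set Ω :=
  (hT.2.1.exists_eq_range ⟨∅, hT.2.2⟩).choose

lemma efun_mem {T : Set (Set Ω)} (hT : g.Adm T) (n : ℕ) : g.efun hT n ∈ T := by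
  have h : T = range (g.efun hT) := (hT.2.1.exists_eq_range ⟨∅, hT.2.2⟩).choose_spec
  have h2 : g.efun hT n ∈ range (g.efun hT) := mem_range_self n
  rwa [← h] at h2

noncomputable def setup {T : Set (Set Ω)} (hT : g.Adm T) : ChainSetup Ω where
  v := g.v
  hv := g.hv
  A := g.A
  hA := g.hA
  e := g.efun hT
  he_meas := fun n => g.hCmeas _ (hT.1 (g.efun_mem hT n))
  he_sub := fun n => g.hCsub _ (hT.1 (g.efun_mem hT n))
  he_chain := fun i j => g.hCchain _ (hT.1 (g.efun_mem hT i)) _ (hT.1 (g.efun_mem hT j))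

lemma setup_mem_range {T : Set (Set Ω)} (hT : g.Adm T) {S : Set Ω} (hS : S ∈ T) :
    ∃ k, (g.setup hT).e k = S := by
  have hr : T = range (g.efun hT) := (hT.2.1.exists_eq_range ⟨∅, hT.2.2⟩).choose_spec
  rw [hr] at hS
  obtain ⟨k, hk⟩ := hS
  exact ⟨k, hk⟩

lemma genLe {T : Set (Set Ω)} (hT : g.Adm T) :
    MeasurableSpace.generateFrom T ≤ (g.setup hT).mC := by
  refine MeasurableSpace.generateFrom_le fun S hS => ?_
  obtain ⟨k, hk⟩ := g.setup_mem_range hT hS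
  exact hk ▸ (g.setup hT).e_mC k

lemma muT_val {T : Set (Set Ω)} (hT : g.Adm T) {S : Set Ω} (hS : S ∈ T) :
    (g.setup hT).muC S = ENNReal.ofReal (g.v S) := by
  obtain ⟨k, hk⟩ := g.setup_mem_range hT hS
  exact hk ▸ (g.setup hT).muC_e k

lemma muT_univ {T : Set (Set Ω)} (hT : g.Adm T) :
    (g.setup hT).muC univ = ENNReal.ofReal (g.v g.A) := (g.setup hT).muC_univ

lemma consist_sub {T T' : Set (Set Ω)} (hT : g.Adm T) (hT' : g.Adm T') (hsub : T ⊆ T')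
    {E : Set Ω} (hE : MeasurableSet[MeasurableSpace.generateFrom T] E) :
    (g.setup hT).muC E = (g.setup hT').muC E := by
  have h1 : MeasurableSpace.generateFrom T ≤ (g.setup hT).mC := g.genLe hT
  have h2 : MeasurableSpace.generateFrom T ≤ (g.setup hT').mC := by
    refine MeasurableSpace.generateFrom_le fun S hS => ?_
    obtain ⟨k, hk⟩ := g.setup_mem_range hT' (hsub hS)
    exact hk ▸ (g.setup hT').e_mC k
  have hpi : IsPiSystem T := by
    intro s hs t ht _
    rcases g.hCchain s (hT.1 hs) t (hT.1 ht) with h | h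
    · rwa [inter_eq_self_of_subset_left h]
    · rwa [inter_eq_self_of_subset_right h]
  have hfin : @IsFiniteMeasure Ω (MeasurableSpace.generateFrom T)
      (((g.setup hT).muC).trim h1) := by
    refine @IsFiniteMeasure.mk Ω _ _ ?_
    rw [trim_measurableSet_eq h1 (@MeasurableSet.univ Ω (MeasurableSpace.generateFrom T)),
      g.muT_univ hT]
    exact ENNReal.ofReal_lt_top
  have hext : ((g.setup hT).muC).trim h1 = ((g.setup hT').muC).trim h2 := by
    refine @ext_of_generate_finite Ω (MeasurableSpace.generateFrom T) _ _ T rfl hpi hfin ?_ ?_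
    · intro S hS
      have hSmeas : MeasurableSet[MeasurableSpace.generateFrom T] S :=
        MeasurableSpace.measurableSet_generateFrom hS
      rw [trim_measurableSet_eq h1 hSmeas, trim_measurableSet_eq h2 hSmeas,
        g.muT_val hT hS, g.muT_val hT' (hsub hS)]
    · rw [trim_measurableSet_eq h1 (@MeasurableSet.univ Ω (MeasurableSpace.generateFrom T)),
        trim_measurableSet_eq h2 (@MeasurableSet.univ Ω (MeasurableSpace.generateFrom T)),
        g.muT_univ hT, g.muT_univ hT']
  have e1 : ((g.setup hT).muC).trim h1 E = (g.setup hT).muC E := trim_measurableSet_eq h1 hE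
  have e2 : ((g.setup hT').muC).trim h2 E = (g.setup hT').muC E := trim_measurableSet_eq h2 hE
  rw [← e1, ← e2, hext]

lemma adm_union {T T' : Set (Set Ω)} (hT : g.Adm T) (hT' : g.Adm T') : g.Adm (T ∪ T') :=
  ⟨union_subset hT.1 hT'.1, hT.2.1.union hT'.2.1, mem_union_left _ hT.2.2⟩

lemma consist {T T' : Set (Set Ω)} (hT : g.Adm T) (hT' : g.Adm T') {E : Set Ω}
    (hE : MeasurableSet[MeasurableSpace.generateFrom T] E)
    (hE' : MeasurableSet[MeasurableSpace.generateFrom T'] E) :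
    (g.setup hT).muC E = (g.setup hT').muC E := by
  rw [g.consist_sub hT (g.adm_union hT hT') subset_union_left hE,
    g.consist_sub hT' (g.adm_union hT hT') subset_union_right hE']

noncomputable def TE (E : Set Ω) (hE : MeasurableSet E) : Set (Set Ω) :=
  (exists_countable_generateFrom g.C (g.htrace E hE)).choose ∪ {∅}

lemma TE_adm (E : Set Ω) (hE : MeasurableSet E) : g.Adm (g.TE E hE) := by
  obtain ⟨hsub, hcnt, -⟩ := (exists_countable_generateFrom g.C (g.htrace E hE)).choose_spec
  exact ⟨union_subset hsub (by simpa using g.hCempty), hcnt.union (countable_singleton _),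
    mem_union_right _ rfl⟩

lemma TE_mem (E : Set Ω) (hE : MeasurableSet E) :
    MeasurableSet[MeasurableSpace.generateFrom (g.TE E hE)] (E ∩ g.A) := by
  obtain ⟨-, -, hmem⟩ := (exists_countable_generateFrom g.C (g.htrace E hE)).choose_spec
  exact (MeasurableSpace.generateFrom_mono (subset_union_left)) _ hmem

noncomputable def mval (E : Set Ω) (hE : MeasurableSet E) : ℝ≥0∞ :=
  (g.setup (g.TE_adm E hE)).muC (E ∩ g.A)

lemma mval_eq {T : Set (Set Ω)} (hT : g.Adm T) {E : Set Ω} (hE : MeasurableSet E)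
    (h : MeasurableSet[MeasurableSpace.generateFrom T] (E ∩ g.A)) :
    g.mval E hE = (g.setup hT).muC (E ∩ g.A) :=
  g.consist (g.TE_adm E hE) hT (g.TE_mem E hE) h

lemma mval_empty (h : MeasurableSet (∅ : Set Ω)) : g.mval ∅ h = 0 := by
  rw [mval]
  simp only [empty_inter]
  exact measure_empty

lemma mval_iUnion ⦃f : ℕ → Set Ω⦄ (hf : ∀ i, MeasurableSet (f i))
    (hdisj : Pairwise (Function.onFun Disjoint f)) (hU : MeasurableSet (⋃ i, f i)) :
    g.mval (⋃ i, f i) hU = ∑' i, g.mval (f i) (hf i) := by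
  classical
  set T : Set (Set Ω) := g.TE (⋃ i, f i) hU ∪ ⋃ i, g.TE (f i) (hf i) with hTdef
  have hTadm : g.Adm T := by
    refine ⟨union_subset (g.TE_adm _ hU).1 (iUnion_subset fun i => (g.TE_adm _ (hf i)).1),
      ((g.TE_adm _ hU).2.1).union (countable_iUnion fun i => (g.TE_adm _ (hf i)).2.1),
      mem_union_left _ (g.TE_adm _ hU).2.2⟩
  have hUT : MeasurableSet[MeasurableSpace.generateFrom T] ((⋃ i, f i) ∩ g.A) :=
    (MeasurableSpace.generateFrom_mono (subset_union_left)) _ (g.TE_mem _ hU)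
  have hiT : ∀ i, MeasurableSet[MeasurableSpace.generateFrom T] (f i ∩ g.A) := fun i =>
    (MeasurableSpace.generateFrom_mono
      ((subset_iUnion (fun i => g.TE (f i) (hf i)) i).trans subset_union_right)) _
      (g.TE_mem _ (hf i))
  rw [g.mval_eq hTadm hU hUT]
  have hrw : (⋃ i, f i) ∩ g.A = ⋃ i, (f i ∩ g.A) := by rw [iUnion_inter]
  rw [hrw]
  rw [measure_iUnion (fun i j hij => (hdisj hij).mono inter_subset_left inter_subset_left)
    (fun i => g.genLe hTadm _ (hiT i))]
  congr 1
  funext i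
  exact (g.mval_eq hTadm (hf i) (hiT i)).symm

noncomputable def mu : Measure Ω :=
  Measure.ofMeasurable (fun E hE => g.mval E hE) (g.mval_empty _)
    (fun f hf hd => g.mval_iUnion hf hd _)

lemma mu_apply {E : Set Ω} (hE : MeasurableSet E) : g.mu E = g.mval E hE :=
  Measure.ofMeasurable_apply E hE

lemma mu_val {S : Set Ω} (hS : S ∈ g.C) : g.mu S = ENNReal.ofReal (g.v S) := by
  have hSm : MeasurableSet S := g.hCmeas S hS
  have hSA : S ∩ g.A = S := inter_eq_self_of_subset_left (g.hCsub S hS)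
  set T : Set (Set Ω) := g.TE S hSm ∪ {S} with hTdef
  have hTadm : g.Adm T := ⟨union_subset (g.TE_adm _ hSm).1 (by simpa using hS),
    ((g.TE_adm _ hSm).2.1).union (countable_singleton _), mem_union_left _ (g.TE_adm _ hSm).2.2⟩
  have hST : MeasurableSet[MeasurableSpace.generateFrom T] (S ∩ g.A) :=
    (MeasurableSpace.generateFrom_mono (subset_union_left)) _ (g.TE_mem S hSm)
  rw [g.mu_apply hSm, g.mval_eq hTadm hSm hST, hSA]
  exact g.muT_val hTadm (mem_union_right _ rfl)

lemma mu_univ_eq : g.mu univ = ENNReal.ofReal (g.v g.A) := by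
  have hAmem : g.A ∈ g.C := g.hCtop
  have h1 : g.mu univ = g.mval univ MeasurableSet.univ := g.mu_apply _
  set T : Set (Set Ω) := g.TE univ MeasurableSet.univ ∪ {g.A} with hTdef
  have hTadm : g.Adm T := ⟨union_subset (g.TE_adm _ _).1 (by simpa using hAmem),
    ((g.TE_adm _ _).2.1).union (countable_singleton _), mem_union_left _ (g.TE_adm _ _).2.2⟩
  have hST : MeasurableSet[MeasurableSpace.generateFrom T] (univ ∩ g.A) :=
    (MeasurableSpace.generateFrom_mono (subset_union_left)) _ (g.TE_mem univ MeasurableSet.univ)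
  rw [h1, g.mval_eq hTadm MeasurableSet.univ hST]
  rw [univ_inter]
  exact g.muT_val hTadm (mem_union_right _ rfl)

lemma mu_restrict : g.mu.restrict g.A = g.mu := by
  ext E hE
  rw [Measure.restrict_apply hE]
  have hEA : MeasurableSet (E ∩ g.A) := hE.inter g.hA
  rw [g.mu_apply hEA, g.mu_apply hE]
  set T : Set (Set Ω) := g.TE (E ∩ g.A) hEA ∪ g.TE E hE with hTdef
  have hTadm : g.Adm T := g.adm_union (g.TE_adm _ hEA) (g.TE_adm _ hE)
  have h1 : MeasurableSet[MeasurableSpace.generateFrom T] ((E ∩ g.A) ∩ g.A) := by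
    rw [inter_assoc, inter_self]
    exact (MeasurableSpace.generateFrom_mono subset_union_right) _ (g.TE_mem E hE)
  have h2 : MeasurableSet[MeasurableSpace.generateFrom T] (E ∩ g.A) :=
    (MeasurableSpace.generateFrom_mono subset_union_right) _ (g.TE_mem E hE)
  rw [g.mval_eq hTadm hEA h1, g.mval_eq hTadm hE h2, inter_assoc, inter_self]

lemma mu_dom {E : Set Ω} (hE : MeasurableSet E) (hEA : E ⊆ g.A) :
    g.mu E ≤ ENNReal.ofReal (g.v E) := by
  have hEA' : E ∩ g.A = E := inter_eq_self_of_subset_left hEA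
  have hmc : MeasurableSet[(g.setup (g.TE_adm E hE)).mC] (E ∩ g.A) :=
    g.genLe (g.TE_adm E hE) _ (g.TE_mem E hE)
  have hdom := (g.setup (g.TE_adm E hE)).muC_dom hmc
  have h2 : ENNReal.ofReal (g.v ((E ∩ g.A) ∩ g.A)) = ENNReal.ofReal (g.v E) := by
    rw [inter_assoc, inter_self, hEA']
  rw [g.mu_apply hE, mval]
  exact le_trans hdom (le_of_eq h2)

end GlueSetup

theorem main_existence_uniqueness {Ω : Type*} [m : MeasurableSpace Ω]
    (I : Set (Set Ω)) (h0 : ∅ ∈ I) (hU : Set.univ ∈ I)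
    (hchain : ∀ I₁ ∈ I, ∀ I₂ ∈ I, I₁ ⊆ I₂ ∨ I₂ ⊆ I₁)
    (hgen : MeasurableSpace.generateFrom I = m)
    (v : Set Ω → ℝ) (hv : IsSubmodular v)
    (A B : Set Ω) (hA : MeasurableSet A) (hB : MeasurableSet B) (hBA : B ⊆ A) :
    ∃ μ : Measure Ω, μ.restrict A = μ ∧ IsFiniteMeasure μ ∧
      (∀ S ∈ ({S | ∃ J ∈ I, S = B ∩ (J ∩ A)} ∪ {S | ∃ J ∈ I, S = B ∪ J ∩ A} : Set (Set Ω)),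
        (μ S).toReal = v S) ∧
      (μ A).toReal = v A ∧ (μ B).toReal = v B ∧
      (∀ E : Set Ω, MeasurableSet E → E ⊆ A → (μ E).toReal ≤ v E) ∧
      (∀ μ' : Measure Ω, μ'.restrict A = μ' → IsFiniteMeasure μ' →
        (∀ S ∈ ({S | ∃ J ∈ I, S = B ∩ (J ∩ A)} ∪ {S | ∃ J ∈ I, S = B ∪ J ∩ A} : Set (Set Ω)),
          (μ' S).toReal = v S) → μ' = μ) := by
  have hmeasI : ∀ J ∈ I, MeasurableSet J := fun J hJ =>
    hgen ▸ MeasurableSpace.measurableSet_generateFrom hJ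
  set 𝓒 : Set (Set Ω) :=
    {S | ∃ J ∈ I, S = B ∩ (J ∩ A)} ∪ {S | ∃ J ∈ I, S = B ∪ J ∩ A} with h𝓒
  have hCmeas : ∀ S ∈ 𝓒, MeasurableSet S := by
    rintro S (⟨J, hJ, rfl⟩ | ⟨J, hJ, rfl⟩)
    · exact hB.inter ((hmeasI J hJ).inter hA)
    · exact hB.union ((hmeasI J hJ).inter hA)
  have hCsub : ∀ S ∈ 𝓒, S ⊆ A := by
    rintro S (⟨J, hJ, rfl⟩ | ⟨J, hJ, rfl⟩)
    · exact (inter_subset_left).trans hBA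
    · exact union_subset hBA inter_subset_right
  have hCchain : ∀ S₁ ∈ 𝓒, ∀ S₂ ∈ 𝓒, S₁ ⊆ S₂ ∨ S₂ ⊆ S₁ := by
    rintro S₁ (⟨J₁, hJ₁, rfl⟩ | ⟨J₁, hJ₁, rfl⟩) S₂ (⟨J₂, hJ₂, rfl⟩ | ⟨J₂, hJ₂, rfl⟩)
    · rcases hchain J₁ hJ₁ J₂ hJ₂ with h | h
      · exact Or.inl (inter_subset_inter_right _ (inter_subset_inter_left _ h))
      · exact Or.inr (inter_subset_inter_right _ (inter_subset_inter_left _ h))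
    · exact Or.inl ((inter_subset_left).trans subset_union_left)
    · exact Or.inr ((inter_subset_left).trans subset_union_left)
    · rcases hchain J₁ hJ₁ J₂ hJ₂ with h | h
      · exact Or.inl (union_subset_union_right _ (inter_subset_inter_left _ h))
      · exact Or.inr (union_subset_union_right _ (inter_subset_inter_left _ h))
  have hCempty : (∅ : Set Ω) ∈ 𝓒 := Or.inl ⟨∅, h0, by simp⟩
  have hCtop : A ∈ 𝓒 := Or.inr ⟨univ, hU, by
    rw [univ_inter, union_eq_self_of_subset_left hBA]⟩
  have hBmem : B ∈ 𝓒 := Or.inl ⟨univ, hU, by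
    rw [univ_inter, inter_eq_self_of_subset_left hBA]⟩
  have hpi𝓒 : IsPiSystem 𝓒 := by
    intro s hs t ht _
    rcases hCchain s hs t ht with h | h
    · rwa [inter_eq_self_of_subset_left h]
    · rwa [inter_eq_self_of_subset_right h]
  have hJA : ∀ J ∈ I, MeasurableSet[MeasurableSpace.generateFrom 𝓒] (J ∩ A) := by
    intro J hJ
    have h1 : MeasurableSet[MeasurableSpace.generateFrom 𝓒] (B ∩ (J ∩ A)) :=
      MeasurableSpace.measurableSet_generateFrom (Or.inl ⟨J, hJ, rfl⟩)
    have h2 : MeasurableSet[MeasurableSpace.generateFrom 𝓒] (B ∪ J ∩ A) :=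
      MeasurableSpace.measurableSet_generateFrom (Or.inr ⟨J, hJ, rfl⟩)
    have h3 : MeasurableSet[MeasurableSpace.generateFrom 𝓒] B :=
      MeasurableSpace.measurableSet_generateFrom hBmem
    have heq : J ∩ A = (B ∩ (J ∩ A)) ∪ ((B ∪ J ∩ A) \ B) := by
      ext ω
      by_cases hω : ω ∈ B <;> simp [hω] <;> tauto
    rw [heq]
    exact h1.union (h2.diff h3)
  have htrace : ∀ E : Set Ω, MeasurableSet E →
      MeasurableSet[MeasurableSpace.generateFrom 𝓒] (E ∩ A) := by
    let m' : MeasurableSpace Ω :=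
      { MeasurableSet' := fun E => MeasurableSet[MeasurableSpace.generateFrom 𝓒] (E ∩ A)
        measurableSet_empty := by
          simp only [empty_inter]
          exact @MeasurableSet.empty Ω (MeasurableSpace.generateFrom 𝓒)
        measurableSet_compl := by
          intro E hE
          have hAmem : MeasurableSet[MeasurableSpace.generateFrom 𝓒] A :=
            MeasurableSpace.measurableSet_generateFrom hCtop
          have heq : Eᶜ ∩ A = A \ (E ∩ A) := by
            ext ω; by_cases hω : ω ∈ A <;> simp [hω] <;> tauto
          rw [heq]
          exact hAmem.diff hE
        measurableSet_iUnion := by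
          intro f hf
          rw [iUnion_inter]
          exact MeasurableSet.iUnion hf }
    have hle : m ≤ m' := by
      rw [← hgen]
      exact MeasurableSpace.generateFrom_le (fun J hJ => hJA J hJ)
    exact fun E hE => hle E hE
  let g : GlueSetup Ω := ⟨v, hv, A, hA, 𝓒, hCmeas, hCsub, hCchain, hCempty, hCtop, htrace⟩
  have hvnonneg : ∀ S : Set Ω, MeasurableSet S → 0 ≤ v S := fun S hS =>
    hv.1 ▸ hv.2.1 ∅ S MeasurableSet.empty hS (empty_subset S)
  haveI hfinmu : IsFiniteMeasure g.mu :=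
    ⟨by rw [g.mu_univ_eq]; exact ENNReal.ofReal_lt_top⟩
  have hgen𝓒le : MeasurableSpace.generateFrom 𝓒 ≤ m := MeasurableSpace.generateFrom_le hCmeas
  refine ⟨g.mu, g.mu_restrict, hfinmu, ?_, ?_, ?_, ?_, ?_⟩
  · intro S hS
    rw [g.mu_val hS, ENNReal.toReal_ofReal (hvnonneg S (hCmeas S hS))]
  · rw [g.mu_val hCtop, ENNReal.toReal_ofReal (hvnonneg A hA)]
  · rw [g.mu_val hBmem, ENNReal.toReal_ofReal (hvnonneg B hB)]
  · intro E hE hEA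
    exact ENNReal.toReal_le_of_le_ofReal (hvnonneg E hE) (g.mu_dom hE hEA)
  · intro μ' hres' hfin' hvals'
    have hμ'univ : μ' univ = ENNReal.ofReal (v A) := by
      have h1 : μ' univ = μ' A := by
        conv_lhs => rw [← hres']
        rw [Measure.restrict_apply_univ]
      have h2 : (μ' A).toReal = v A := hvals' A hCtop
      rw [h1, ← h2, ENNReal.ofReal_toReal (measure_ne_top μ' A)]
    have hmuuniv : g.mu univ = ENNReal.ofReal (v A) := g.mu_univ_eq
    have hkey : ∀ ⦃t : Set Ω⦄, MeasurableSet[MeasurableSpace.generateFrom 𝓒] t →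
        μ' t = g.mu t := by
      refine fun t ht => @MeasurableSpace.induction_on_inter Ω (MeasurableSpace.generateFrom 𝓒)
        (fun t _ => μ' t = g.mu t) 𝓒 rfl hpi𝓒 ?_ ?_ ?_ ?_ t ht
      · simp
      · intro t ht
        rw [g.mu_val ht]
        show μ' t = ENNReal.ofReal (v t)
        rw [← hvals' t ht, ENNReal.ofReal_toReal (measure_ne_top μ' t)]
      · intro t ht hind
        have htm : MeasurableSet t := hgen𝓒le t ht
        rw [measure_compl htm (measure_ne_top μ' t),
          measure_compl htm (measure_ne_top g.mu t), hμ'univ, hmuuniv, hind]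
      · intro f hdisj hfmeas hind
        rw [measure_iUnion hdisj (fun i => hgen𝓒le _ (hfmeas i)),
          measure_iUnion hdisj (fun i => hgen𝓒le _ (hfmeas i))]
        exact tsum_congr hind
    refine Measure.ext fun E hE => ?_
    have h1 : μ' E = μ' (E ∩ A) := by
      conv_lhs => rw [← hres']
      rw [Measure.restrict_apply hE]
    have h2 : g.mu E = g.mu (E ∩ A) := by
      conv_lhs => rw [← g.mu_restrict]
      rw [Measure.restrict_apply hE]
    rw [h1, h2, hkey (htrace E hE)]
end

section
/- Let (Ω,𝓕) be a measurable space admitting a totally ordered generating class 𝓘 (containing ∅ and Ω, totally ordered by inclusion, σ(𝓘)=𝓕), and let v : 𝓕 → ℝ be submodular. Then for all measurable B ⊆ A, v(B) = sup { μ(B) : μ finite measure on A, μ(A)=v(A), μ(E) ≤ v(E) for all measurable E ⊆ A }, and this supremum is attained. -/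
open MeasureTheory Set Filter Topology
open scoped Classical

section Aux
variable {Ω : Type*} [m : MeasurableSpace Ω] {v : Set Ω → ℝ}

lemma vnn (hv : IsSubmodular v) {E : Set Ω} (hE : MeasurableSet E) : 0 ≤ v E := by
  rw [← hv.1]; exact hv.2.1 ∅ E MeasurableSet.empty hE (empty_subset E)

lemma vmono (hv : IsSubmodular v) {C D : Set Ω} (hC : MeasurableSet C) (hD : MeasurableSet D)
    (h : C ⊆ D) : v C ≤ v D := hv.2.1 C D hC hD h

lemma telescope_mono {e : ℕ → Set Ω} (hmono : Monotone e) :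
    ∀ {j k : ℕ}, j ≤ k → e k \ e j = ⋃ i ∈ Finset.Ico j k, (e (i+1) \ e i) := by
  intro j k hjk
  induction k, hjk using Nat.le_induction with
  | base => simp
  | succ k hjk ih =>
    have : Finset.Ico j (k+1) = insert k (Finset.Ico j k) := by
      ext x; simp [Finset.mem_Ico, Nat.lt_succ_iff_lt_or_eq]; omega
    rw [this, Finset.set_biUnion_insert, ← ih]
    ext x
    simp only [mem_diff, mem_union]
    constructor
    · rintro ⟨hx1, hx2⟩
      by_cases hk : x ∈ e k
      · exact Or.inr ⟨hk, hx2⟩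
      · exact Or.inl ⟨hx1, hk⟩
    · rintro (⟨h1, h2⟩ | ⟨h1, h2⟩)
      · exact ⟨h1, fun hj => h2 (hmono hjk hj)⟩
      · exact ⟨hmono (Nat.le_succ k) h1, h2⟩

lemma atoms_disj {e : ℕ → Set Ω} (hmono : Monotone e) {i j : ℕ} (hij : i ≠ j) :
    Disjoint (e (i+1) \ e i) (e (j+1) \ e j) := by
  have key : ∀ {i j : ℕ}, i < j → Disjoint (e (i+1) \ e i) (e (j+1) \ e j) := by
    intro i j h
    have : e (i+1) ⊆ e j := hmono h
    exact disjoint_of_subset_left (diff_subset.trans this) disjoint_sdiff_self_right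
  rcases hij.lt_or_gt with h | h
  · exact key h
  · exact (key h).symm

lemma sum_delta_le (hv : IsSubmodular v) {e : ℕ → Set Ω} (hmeas : ∀ i, MeasurableSet (e i))
    (hmono : Monotone e) (F : Finset ℕ) :
    ∑ i ∈ F, (v (e (i+1)) - v (e i)) ≤ v (⋃ i ∈ F, (e (i+1) \ e i)) := by
  classical
  induction F using Finset.induction_on_max with
  | empty => simp [hv.1]
  | insert a F ha ih =>
    rw [Finset.sum_insert (fun h => lt_irrefl a (ha a h))]
    set T' : Set Ω := ⋃ i ∈ F, (e (i+1) \ e i) with hT'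
    have hT'sub : T' ⊆ e a := by
      refine iUnion₂_subset fun i hi => ?_
      exact (diff_subset).trans (hmono (ha i hi))
    have hT'meas : MeasurableSet T' :=
      F.measurableSet_biUnion (fun i _ => (hmeas (i+1)).diff (hmeas i))
    have hTmeas : MeasurableSet (T' ∪ (e (a+1) \ e a)) :=
      hT'meas.union ((hmeas (a+1)).diff (hmeas a))
    have hsm := hv.2.2.2.2 (T' ∪ (e (a+1) \ e a)) (e a) hTmeas (hmeas a)
    have h1 : (T' ∪ (e (a+1) \ e a)) ∪ e a = e (a+1) := by
      rw [union_assoc, diff_union_self, union_eq_self_of_subset_right (hmono (Nat.le_succ a)),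
        union_eq_right.2 (hT'sub.trans (hmono (Nat.le_succ a)))]
    have h2 : (T' ∪ (e (a+1) \ e a)) ∩ e a = T' := by
      rw [union_inter_distrib_right, inter_eq_left.2 hT'sub]
      have : e (a+1) \ e a ∩ e a = ∅ := by
        ext x; simp only [mem_inter_iff, mem_diff, mem_empty_iff_false, iff_false]; tauto
      rw [this, union_empty]
    rw [h1, h2] at hsm
    have : ⋃ i ∈ insert a F, (e (i+1) \ e i) = T' ∪ (e (a+1) \ e a) := by
      rw [Finset.set_biUnion_insert, union_comm]
    rw [this]
    linarith [ih]

lemma sum_telescope_Ico (f : ℕ → ℝ) {j k : ℕ} (hjk : j ≤ k) :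
    ∑ i ∈ Finset.Ico j k, (f (i+1) - f i) = f k - f j := by
  induction k, hjk using Nat.le_induction with
  | base => simp
  | succ k hjk ih =>
    rw [Finset.sum_Ico_succ_top hjk, ih]; ring

end Aux

lemma exists_sorted_chain {Ω : Type*} (𝒞 : Set (Set Ω))
    (hch : ∀ s ∈ 𝒞, ∀ t ∈ 𝒞, s ⊆ t ∨ t ⊆ s)
    (L : List (Set Ω)) (hL : ∀ X ∈ L, X ∈ 𝒞) :
    ∃ (N : ℕ) (e : ℕ → Set Ω), Monotone e ∧ (∀ i, i < N → e i ∈ 𝒞) ∧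
      (∀ i, N ≤ i → e i = Set.univ) ∧ (∀ X ∈ L, ∃ i, i < N ∧ e i = X) := by
  classical
  set γ := {s : Set Ω // s ∈ 𝒞}
  set r : γ → γ → Prop := fun a b => a.1 ⊆ b.1 with hr
  haveI : Std.Total r := ⟨fun a b => hch a.1 a.2 b.1 b.2⟩
  haveI : IsTrans γ r := ⟨fun a b c hab hbc => hab.trans hbc⟩
  set Lγ : List γ := L.pmap (fun X h => (⟨X, h⟩ : γ)) hL with hLγ
  set l' : List γ := Lγ.insertionSort r with hl'
  have hsorted : List.Pairwise r l' := List.pairwise_insertionSort r Lγ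
  refine ⟨l'.length, fun i => if h : i < l'.length then (l'.get ⟨i, h⟩).1 else Set.univ,
    ?_, ?_, ?_, ?_⟩
  · intro i j hij
    by_cases hi : i < l'.length
    · by_cases hj : j < l'.length
      · simp only [dif_pos hi, dif_pos hj]
        rcases eq_or_lt_of_le hij with rfl | hlt
        · exact le_refl _
        · exact hsorted.rel_get_of_lt (show (⟨i, hi⟩ : Fin l'.length) < ⟨j, hj⟩ from hlt)
      · simp only [dif_pos hi, dif_neg hj]
        exact Set.subset_univ _
    · have hj : ¬ j < l'.length := fun hj => hi (lt_of_le_of_lt hij hj)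
      simp only [dif_neg hi, dif_neg hj, le_refl]
  · intro i hi
    simp only [dif_pos hi]
    exact (l'.get ⟨i, hi⟩).2
  · intro i hi
    simp only [dif_neg (not_lt.2 hi)]
  · intro X hX
    have hXγ : (⟨X, hL X hX⟩ : γ) ∈ Lγ := by
      rw [hLγ, List.mem_pmap]
      exact ⟨X, hX, rfl⟩
    have hmem : (⟨X, hL X hX⟩ : γ) ∈ l' := ((List.perm_insertionSort r Lγ).mem_iff).2 hXγ
    obtain ⟨n, hn⟩ := List.mem_iff_get.1 hmem
    refine ⟨n.1, n.2, ?_⟩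
    simp only [dif_pos n.2]
    rw [show l'.get ⟨n.1, n.2⟩ = l'.get n from rfl, hn]

lemma biUnion_sdiff_atoms {Ω : Type*} {a : ℕ → Set Ω}
    (hdisj : ∀ i j, i ≠ j → Disjoint (a i) (a j)) (F₀ F₁ : Finset ℕ) :
    (⋃ i ∈ F₀, a i) \ (⋃ i ∈ F₁, a i) = ⋃ i ∈ F₀ \ F₁, a i := by
  ext x
  simp only [Set.mem_diff, Set.mem_iUnion, exists_prop, Finset.mem_sdiff, not_exists, not_and]
  constructor
  · rintro ⟨⟨i, hi, hx⟩, hnot⟩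
    exact ⟨i, ⟨hi, fun hi1 => hnot i hi1 hx⟩, hx⟩
  · rintro ⟨i, ⟨hi0, hi1⟩, hx⟩
    refine ⟨⟨i, hi0, hx⟩, fun j hj hxj => ?_⟩
    rcases eq_or_ne i j with rfl | hne
    · exact hi1 hj
    · exact (hdisj i j hne).ne_of_mem hx hxj rfl

lemma rho_apply {Ω : Type*} [m : MeasurableSpace Ω] (v : Set Ω → ℝ) {e : ℕ → Set Ω}
    (hmeas : ∀ i, MeasurableSet (e i)) (hmono : Monotone e) (N : ℕ) {F : Finset ℕ}
    (hF : F ⊆ Finset.range N) :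
    (∑ i ∈ Finset.range N, if h : (e (i+1) \ e i).Nonempty then
        (ENNReal.ofReal (v (e (i+1)) - v (e i))) • Measure.dirac h.choose else 0 : Measure Ω)
      (⋃ i ∈ F, (e (i+1) \ e i)) = ∑ i ∈ F, ENNReal.ofReal (v (e (i+1)) - v (e i)) := by
  classical
  set S : Set Ω := ⋃ i ∈ F, (e (i+1) \ e i) with hS
  have hSmeas : MeasurableSet S :=
    F.measurableSet_biUnion (fun i _ => (hmeas (i+1)).diff (hmeas i))
  rw [Measure.coe_finset_sum, Finset.sum_apply]
  have hterm : ∀ i ∈ Finset.range N,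
      (if h : (e (i+1) \ e i).Nonempty then
        (ENNReal.ofReal (v (e (i+1)) - v (e i))) • Measure.dirac h.choose else 0 : Measure Ω) S
      = if i ∈ F then ENNReal.ofReal (v (e (i+1)) - v (e i)) else 0 := by
    intro i _
    by_cases hne : (e (i+1) \ e i).Nonempty
    · rw [dif_pos hne, Measure.smul_apply, smul_eq_mul, Measure.dirac_apply' _ hSmeas]
      by_cases hiF : i ∈ F
      · have hxS : hne.choose ∈ S := by
          rw [hS]
          exact Set.mem_biUnion hiF hne.choose_spec
        rw [Set.indicator_of_mem hxS, if_pos hiF, Pi.one_apply, mul_one]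
      · have hxS : hne.choose ∉ S := by
          rw [hS]
          intro hmem
          rw [Set.mem_iUnion₂] at hmem
          obtain ⟨j, hj, hxj⟩ := hmem
          rcases eq_or_ne i j with rfl | hij
          · exact hiF hj
          · exact (atoms_disj hmono hij).ne_of_mem hne.choose_spec hxj rfl
        rw [Set.indicator_of_notMem hxS, if_neg hiF, mul_zero]
    · rw [dif_neg hne]
      have hdz : v (e (i+1)) - v (e i) = 0 := by
        have h1 : e (i+1) ⊆ e i := Set.diff_eq_empty.mp (Set.not_nonempty_iff_eq_empty.mp hne)
        have h2 : e i ⊆ e (i+1) := hmono (Nat.le_succ i)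
        rw [Set.Subset.antisymm h1 h2, sub_self]
      by_cases hiF : i ∈ F <;> simp [hiF, hdz]
  rw [Finset.sum_congr rfl hterm, Finset.sum_ite_mem]
  congr 1
  exact Finset.inter_eq_right.mpr hF

lemma interval_superadd {Ω : Type*} [m : MeasurableSpace Ω] {v : Set Ω → ℝ}
    (hv : IsSubmodular v) (𝒞 : Set (Set Ω))
    (hm𝒞 : ∀ s ∈ 𝒞, MeasurableSet s)
    (hch : ∀ s ∈ 𝒞, ∀ t ∈ 𝒞, s ⊆ t ∨ t ⊆ s)
    {C D : Set Ω} (hC : C ∈ 𝒞) (hD : D ∈ 𝒞) (hCD : C ⊆ D)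
    {Cs Ds : ℕ → Set Ω} (hCs : ∀ n, Cs n ∈ 𝒞) (hDs : ∀ n, Ds n ∈ 𝒞)
    (hCDs : ∀ n, Cs n ⊆ Ds n)
    (hcover : D \ C ⊆ ⋃ n, (Ds n \ Cs n)) :
    ENNReal.ofReal (v D - v C) ≤ ∑' n, ENNReal.ofReal (v (Ds n) - v (Cs n)) := by
  classical
  by_cases hCDeq : C = D
  · simp [hCDeq]
  set S := ∑' n, ENNReal.ofReal (v (Ds n) - v (Cs n)) with hSdef
  set T : ℕ → Set Ω := fun n => (D \ C) \ ⋃ k ∈ Finset.range (n+1), (Ds k \ Cs k) with hT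
  have hTmeas : ∀ n, MeasurableSet (T n) := by
    intro n
    exact ((hm𝒞 D hD).diff (hm𝒞 C hC)).diff
      ((Finset.range (n+1)).measurableSet_biUnion
        (fun k _ => (hm𝒞 _ (hDs k)).diff (hm𝒞 _ (hCs k))))
  have hTanti : Antitone T := by
    intro a b hab x hx
    refine ⟨hx.1, fun hc => hx.2 ?_⟩
    simp only [Set.mem_iUnion, exists_prop, Finset.mem_range] at hc ⊢
    obtain ⟨k, hk, hxk⟩ := hc
    exact ⟨k, by omega, hxk⟩
  have hTinter : ⋂ n, T n = ∅ := by
    rw [hT]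
    apply Set.eq_empty_iff_forall_notMem.mpr
    intro x hx
    simp only [Set.mem_iInter, Set.mem_diff] at hx
    obtain ⟨n, hn⟩ := Set.mem_iUnion.mp (hcover (hx 0).1)
    exact (hx n).2 (Set.mem_biUnion (Finset.self_mem_range_succ n) hn)
  -- main step : for each n
  have main : ∀ n : ℕ, ENNReal.ofReal (v D - v C) ≤ S + ENNReal.ofReal (v (T n)) := by
    intro n
    -- build the sorted chain
    set L : List (Set Ω) :=
      C :: D :: ((List.range (n+1)).flatMap fun k => [Cs k, Ds k]) with hL
    have hLmem : ∀ X ∈ L, X ∈ 𝒞 := by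
      intro X hX
      rw [hL] at hX
      simp only [List.mem_cons, List.mem_flatMap, List.mem_range] at hX
      rcases hX with rfl | rfl | ⟨k, _, hk2⟩
      · exact hC
      · exact hD
      · simp only [List.mem_cons, List.not_mem_nil, or_false] at hk2
        rcases hk2 with rfl | rfl
        · exact hCs k
        · exact hDs k
    obtain ⟨N, e, hemono, he𝒞, hetop, hidx⟩ := exists_sorted_chain 𝒞 hch L hLmem
    have hemeas : ∀ i, MeasurableSet (e i) := by
      intro i
      by_cases hi : i < N
      · exact hm𝒞 _ (he𝒞 i hi)
      · rw [hetop i (not_lt.1 hi)]; exact MeasurableSet.univ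
    -- index pairs
    have hgetF : ∀ X Y : Set Ω, X ∈ L → Y ∈ L → X ⊆ Y → ∃ F : Finset ℕ,
        F ⊆ Finset.range N ∧ (Y \ X = ⋃ i ∈ F, (e (i+1) \ e i)) ∧
        (∑ i ∈ F, ENNReal.ofReal (v (e (i+1)) - v (e i))) = ENNReal.ofReal (v Y - v X) := by
      intro X Y hXL hYL hXY
      obtain ⟨p, hpN, hep⟩ := hidx X hXL
      obtain ⟨q, hqN, heq⟩ := hidx Y hYL
      by_cases hXYeq : X = Y
      · refine ⟨∅, Finset.empty_subset _, ?_, ?_⟩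
        · simp [hXYeq]
        · simp [hXYeq]
      · have hpq : p < q := by
          rcases lt_or_ge p q with h | h
          · exact h
          · exfalso
            have : e q ⊆ e p := hemono h
            rw [hep, heq] at this
            exact hXYeq (Set.Subset.antisymm hXY this)
        refine ⟨Finset.Ico p q, ?_, ?_, ?_⟩
        · intro i hi
          rw [Finset.mem_range]
          exact lt_of_lt_of_le (Finset.mem_Ico.1 hi).2 hqN.le
        · rw [← hep, ← heq]
          exact telescope_mono hemono (le_of_lt hpq)
        · rw [← ENNReal.ofReal_sum_of_nonneg (fun i _ => sub_nonneg.2 (vmono hv (hemeas i)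
            (hemeas (i+1)) (hemono (Nat.le_succ i))))]
          congr 1
          have htel := sum_telescope_Ico (fun i => v (e i)) (le_of_lt hpq)
          rw [htel, hep, heq]
    have hCL : C ∈ L := by rw [hL]; exact List.mem_cons_self
    have hDL : D ∈ L := by rw [hL]; simp
    have hkL : ∀ k, k < n + 1 → Cs k ∈ L ∧ Ds k ∈ L := by
      intro k hk
      have h1 : Cs k ∈ (List.range (n+1)).flatMap fun k => [Cs k, Ds k] := by
        rw [List.mem_flatMap]
        exact ⟨k, List.mem_range.2 hk, by simp⟩
      have h2 : Ds k ∈ (List.range (n+1)).flatMap fun k => [Cs k, Ds k] := by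
        rw [List.mem_flatMap]
        exact ⟨k, List.mem_range.2 hk, by simp⟩
      exact ⟨by rw [hL]; exact List.mem_cons_of_mem _ (List.mem_cons_of_mem _ h1),
        by rw [hL]; exact List.mem_cons_of_mem _ (List.mem_cons_of_mem _ h2)⟩
    obtain ⟨F0, hF0N, hF0eq, hF0sum⟩ := hgetF C D hCL hDL hCD
    have hFk : ∀ k ∈ Finset.range (n+1), ∃ F : Finset ℕ,
        F ⊆ Finset.range N ∧ (Ds k \ Cs k = ⋃ i ∈ F, (e (i+1) \ e i)) ∧
        (∑ i ∈ F, ENNReal.ofReal (v (e (i+1)) - v (e i))) = ENNReal.ofReal (v (Ds k) - v (Cs k)) := by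
      intro k hk
      rw [Finset.mem_range] at hk
      exact hgetF (Cs k) (Ds k) (hkL k hk).1 (hkL k hk).2 (hCDs k)
    choose Fk hFkN hFkeq hFksum using hFk
    set F1 : Finset ℕ := (Finset.range (n+1)).attach.biUnion
      (fun k => Fk k.1 (by simpa using k.2)) with hF1
    have hUnionF1 : ⋃ i ∈ F1, (e (i+1) \ e i) = ⋃ k ∈ Finset.range (n+1), (Ds k \ Cs k) := by
      rw [hF1]
      ext x
      simp only [Set.mem_iUnion, exists_prop, Finset.mem_biUnion, Finset.mem_attach, true_and,
        Subtype.exists]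
      constructor
      · rintro ⟨i, ⟨k, hk, hik⟩, hx⟩
        exact ⟨k, hk, by rw [hFkeq k (by simpa using hk)]; exact Set.mem_biUnion hik hx⟩
      · rintro ⟨k, hk, hx⟩
        rw [hFkeq k (by simpa using hk)] at hx
        rw [Set.mem_iUnion₂] at hx
        obtain ⟨i, hik, hx⟩ := hx
        exact ⟨i, ⟨k, hk, hik⟩, hx⟩
    -- the measure rho
    set ρ : Measure Ω := ∑ i ∈ Finset.range N, if h : (e (i+1) \ e i).Nonempty then
        (ENNReal.ofReal (v (e (i+1)) - v (e i))) • Measure.dirac h.choose else 0 with hρ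
    have hρDC : ρ (D \ C) = ENNReal.ofReal (v D - v C) := by
      rw [hρ, hF0eq, rho_apply v hemeas hemono N hF0N, hF0sum]
    have hρk : ∀ k (hk : k ∈ Finset.range (n+1)),
        ρ (Ds k \ Cs k) = ENNReal.ofReal (v (Ds k) - v (Cs k)) := by
      intro k hk
      rw [hρ, hFkeq k hk, rho_apply v hemeas hemono N (hFkN k hk), hFksum k hk]
    have hTn_atoms : T n = ⋃ i ∈ F0 \ F1, (e (i+1) \ e i) := by
      have hTn : T n = (D \ C) \ ⋃ k ∈ Finset.range (n+1), (Ds k \ Cs k) := rfl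
      rw [hTn, hF0eq, ← hUnionF1]
      exact biUnion_sdiff_atoms (fun i j hij => atoms_disj hemono hij) F0 F1
    have hρTn : ρ (T n) ≤ ENNReal.ofReal (v (T n)) := by
      rw [hTn_atoms, hρ, rho_apply v hemeas hemono N ((Finset.sdiff_subset).trans hF0N)]
      rw [← ENNReal.ofReal_sum_of_nonneg (fun i _ => sub_nonneg.2 (vmono hv (hemeas i)
            (hemeas (i+1)) (hemono (Nat.le_succ i))))]
      apply ENNReal.ofReal_le_ofReal
      exact sum_delta_le hv hemeas hemono (F0 \ F1)
    have hsplit : D \ C ⊆ (T n) ∪ ⋃ k ∈ Finset.range (n+1), (Ds k \ Cs k) := by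
      rw [hT]
      intro x hx
      by_cases hxU : x ∈ ⋃ k ∈ Finset.range (n+1), (Ds k \ Cs k)
      · exact Or.inr hxU
      · exact Or.inl ⟨hx, hxU⟩
    calc ENNReal.ofReal (v D - v C) = ρ (D \ C) := hρDC.symm
      _ ≤ ρ ((T n) ∪ ⋃ k ∈ Finset.range (n+1), (Ds k \ Cs k)) := measure_mono hsplit
      _ ≤ ρ (T n) + ρ (⋃ k ∈ Finset.range (n+1), (Ds k \ Cs k)) := measure_union_le _ _
      _ ≤ ρ (T n) + ∑ k ∈ Finset.range (n+1), ρ (Ds k \ Cs k) := by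
          gcongr
          exact measure_biUnion_finset_le _ _
      _ ≤ ENNReal.ofReal (v (T n)) + ∑ k ∈ Finset.range (n+1),
            ENNReal.ofReal (v (Ds k) - v (Cs k)) := by
          refine add_le_add hρTn (Finset.sum_le_sum fun k hk => ?_)
          rw [hρk k hk]
      _ ≤ ENNReal.ofReal (v (T n)) + S := by
          gcongr
          exact ENNReal.sum_le_tsum _
      _ = S + ENNReal.ofReal (v (T n)) := add_comm _ _
  -- take the limit
  have hvT : Tendsto (fun n => v (T n)) atTop (nhds 0) := by
    have := hv.2.2.2.1 T hTmeas hTanti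
    rw [hTinter, hv.1] at this
    exact this
  have hlim : Tendsto (fun n => S + ENNReal.ofReal (v (T n))) atTop (nhds S) := by
    have h1 : Tendsto (fun n => ENNReal.ofReal (v (T n))) atTop (nhds 0) := by
      have := ENNReal.tendsto_ofReal hvT
      rwa [ENNReal.ofReal_zero] at this
    have := Tendsto.const_add S h1
    rwa [add_zero] at this
  exact ge_of_tendsto' hlim main

lemma diff_union_bound {Ω : Type*} [m : MeasurableSpace Ω] {v : Set Ω → ℝ}
    (hv : IsSubmodular v) (𝒞 : Set (Set Ω))
    (hm𝒞 : ∀ s ∈ 𝒞, MeasurableSet s)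
    (hch : ∀ s ∈ 𝒞, ∀ t ∈ 𝒞, s ⊆ t ∨ t ⊆ s)
    {X Y : Set Ω} (hX : X ∈ 𝒞) (hY : Y ∈ 𝒞) (hXY : X ⊆ Y)
    {Cs Ds : ℕ → Set Ω} (hCs : ∀ k, Cs k ∈ 𝒞) (hDs : ∀ k, Ds k ∈ 𝒞)
    (hCDs : ∀ k, Cs k ⊆ Ds k) (n : ℕ)
    (μ : Measure Ω)
    (hμint : ∀ C D : Set Ω, C ∈ 𝒞 → D ∈ 𝒞 → C ⊆ D → μ (D \ C) = ENNReal.ofReal (v D - v C)) :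
    μ ((Y \ X) \ ⋃ k ∈ Finset.range (n+1), (Ds k \ Cs k)) ≤
      ENNReal.ofReal (v ((Y \ X) \ ⋃ k ∈ Finset.range (n+1), (Ds k \ Cs k))) := by
  classical
  set L : List (Set Ω) :=
    X :: Y :: ((List.range (n+1)).flatMap fun k => [Cs k, Ds k]) with hL
  have hLmem : ∀ Z ∈ L, Z ∈ 𝒞 := by
    intro Z hZ
    rw [hL] at hZ
    simp only [List.mem_cons, List.mem_flatMap, List.mem_range] at hZ
    rcases hZ with rfl | rfl | ⟨k, _, hk2⟩
    · exact hX
    · exact hY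
    · simp only [List.mem_cons, List.not_mem_nil, or_false] at hk2
      rcases hk2 with rfl | rfl
      · exact hCs k
      · exact hDs k
  obtain ⟨N, e, hemono, he𝒞, hetop, hidx⟩ := exists_sorted_chain 𝒞 hch L hLmem
  have hemeas : ∀ i, MeasurableSet (e i) := by
    intro i
    by_cases hi : i < N
    · exact hm𝒞 _ (he𝒞 i hi)
    · rw [hetop i (not_lt.1 hi)]; exact MeasurableSet.univ
  have hgetF : ∀ X' Y' : Set Ω, X' ∈ L → Y' ∈ L → X' ⊆ Y' → ∃ F : Finset ℕ,
      F ⊆ Finset.range N ∧ (∀ i ∈ F, i + 1 < N) ∧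
      (Y' \ X' = ⋃ i ∈ F, (e (i+1) \ e i)) := by
    intro X' Y' hXL hYL hXY'
    obtain ⟨p, hpN, hep⟩ := hidx X' hXL
    obtain ⟨q, hqN, heq⟩ := hidx Y' hYL
    by_cases hXYeq : X' = Y'
    · exact ⟨∅, Finset.empty_subset _, by simp, by simp [hXYeq]⟩
    · have hpq : p < q := by
        rcases lt_or_ge p q with h | h
        · exact h
        · exfalso
          have : e q ⊆ e p := hemono h
          rw [hep, heq] at this
          exact hXYeq (Set.Subset.antisymm hXY' this)
      refine ⟨Finset.Ico p q, ?_, ?_, ?_⟩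
      · intro i hi
        rw [Finset.mem_range]
        exact lt_of_lt_of_le (Finset.mem_Ico.1 hi).2 hqN.le
      · intro i hi
        have := (Finset.mem_Ico.1 hi).2
        omega
      · rw [← hep, ← heq]
        exact telescope_mono hemono (le_of_lt hpq)
  have hXL : X ∈ L := by rw [hL]; exact List.mem_cons_self
  have hYL : Y ∈ L := by rw [hL]; simp
  have hkL : ∀ k, k < n + 1 → Cs k ∈ L ∧ Ds k ∈ L := by
    intro k hk
    have h1 : Cs k ∈ (List.range (n+1)).flatMap fun k => [Cs k, Ds k] := by
      rw [List.mem_flatMap]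
      exact ⟨k, List.mem_range.2 hk, by simp⟩
    have h2 : Ds k ∈ (List.range (n+1)).flatMap fun k => [Cs k, Ds k] := by
      rw [List.mem_flatMap]
      exact ⟨k, List.mem_range.2 hk, by simp⟩
    exact ⟨by rw [hL]; exact List.mem_cons_of_mem _ (List.mem_cons_of_mem _ h1),
      by rw [hL]; exact List.mem_cons_of_mem _ (List.mem_cons_of_mem _ h2)⟩
  obtain ⟨F0, hF0N, hF0succ, hF0eq⟩ := hgetF X Y hXL hYL hXY
  have hFk : ∀ k ∈ Finset.range (n+1), ∃ F : Finset ℕ,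
      F ⊆ Finset.range N ∧ (∀ i ∈ F, i + 1 < N) ∧
      (Ds k \ Cs k = ⋃ i ∈ F, (e (i+1) \ e i)) := by
    intro k hk
    rw [Finset.mem_range] at hk
    exact hgetF (Cs k) (Ds k) (hkL k hk).1 (hkL k hk).2 (hCDs k)
  choose Fk hFkN hFksucc hFkeq using hFk
  set F1 : Finset ℕ := (Finset.range (n+1)).attach.biUnion
    (fun k => Fk k.1 k.2) with hF1
  have hUnionF1 : ⋃ i ∈ F1, (e (i+1) \ e i) = ⋃ k ∈ Finset.range (n+1), (Ds k \ Cs k) := by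
    rw [hF1]
    ext x
    simp only [Set.mem_iUnion, exists_prop, Finset.mem_biUnion, Finset.mem_attach, true_and,
      Subtype.exists]
    constructor
    · rintro ⟨i, ⟨k, hk, hik⟩, hx⟩
      exact ⟨k, hk, by rw [hFkeq k hk]; exact Set.mem_biUnion hik hx⟩
    · rintro ⟨k, hk, hx⟩
      rw [hFkeq k hk] at hx
      rw [Set.mem_iUnion₂] at hx
      obtain ⟨i, hik, hx⟩ := hx
      exact ⟨i, ⟨k, hk, hik⟩, hx⟩
  have hT_atoms : (Y \ X) \ ⋃ k ∈ Finset.range (n+1), (Ds k \ Cs k)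
      = ⋃ i ∈ F0 \ F1, (e (i+1) \ e i) := by
    rw [hF0eq, ← hUnionF1]
    exact biUnion_sdiff_atoms (fun i j hij => atoms_disj hemono hij) F0 F1
  rw [hT_atoms]
  have hμT : μ (⋃ i ∈ F0 \ F1, (e (i+1) \ e i))
      = ∑ i ∈ F0 \ F1, ENNReal.ofReal (v (e (i+1)) - v (e i)) := by
    rw [measure_biUnion_finset (fun i _ j _ hij => atoms_disj hemono hij)
      (fun i _ => (hemeas (i+1)).diff (hemeas i))]
    refine Finset.sum_congr rfl fun i hi => ?_
    have hiN : i + 1 < N := hF0succ i (Finset.mem_sdiff.1 hi).1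
    exact hμint (e i) (e (i+1)) (he𝒞 i (by omega)) (he𝒞 (i+1) hiN)
      (hemono (Nat.le_succ i))
  rw [hμT, ← ENNReal.ofReal_sum_of_nonneg (fun i _ => sub_nonneg.2 (vmono hv (hemeas i)
    (hemeas (i+1)) (hemono (Nat.le_succ i))))]
  exact ENNReal.ofReal_le_ofReal (sum_delta_le hv hemeas hemono (F0 \ F1))

lemma construction {Ω : Type*} [m : MeasurableSpace Ω] {v : Set Ω → ℝ} (hv : IsSubmodular v)
    {A : Set Ω} (hA : MeasurableSet A) (𝒞 : Set (Set Ω))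
    (hm𝒞 : ∀ s ∈ 𝒞, MeasurableSet s) (hsubA : ∀ s ∈ 𝒞, s ⊆ A)
    (hch : ∀ s ∈ 𝒞, ∀ t ∈ 𝒞, s ⊆ t ∨ t ⊆ s)
    (hemp : ∅ ∈ 𝒞) (hA𝒞 : A ∈ 𝒞)
    (hgen2 : m ≤ MeasurableSpace.generateFrom (𝒞 ∪ {s | s ∩ A = ∅})) :
    ∃ μ : Measure Ω, μ.restrict A = μ ∧ IsFiniteMeasure μ ∧
      (∀ s ∈ 𝒞, μ s = ENNReal.ofReal (v s)) ∧
      (∀ E : Set Ω, MeasurableSet E → E ⊆ A → (μ E).toReal ≤ v E) := by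
  classical
  set m' : Set Ω → ENNReal := fun s => ⨅ (C : Set Ω) (_ : C ∈ 𝒞) (D : Set Ω) (_ : D ∈ 𝒞)
      (_ : C ⊆ D) (_ : s ∩ A ⊆ D \ C), ENNReal.ofReal (v D - v C) with hm'
  have hm'le : ∀ (s C D : Set Ω), C ∈ 𝒞 → D ∈ 𝒞 → C ⊆ D → s ∩ A ⊆ D \ C →
      m' s ≤ ENNReal.ofReal (v D - v C) := by
    intro s C D hC hD hCD hcov
    rw [hm']
    exact iInf_le_of_le C (iInf_le_of_le hC (iInf_le_of_le D (iInf_le_of_le hD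
      (iInf_le_of_le hCD (iInf_le_of_le hcov (le_refl _))))))
  have hm'empty : m' ∅ = 0 := by
    refine le_antisymm ?_ zero_le
    have := hm'le ∅ ∅ ∅ hemp hemp (subset_refl _) (by simp)
    simpa [hv.1] using this
  set μo : OuterMeasure Ω := OuterMeasure.ofFunction m' hm'empty with hμo
  have hm'mono : ∀ s t : Set Ω, s ⊆ t → m' s ≤ m' t := by
    intro s t hst
    rw [hm']
    refine le_iInf fun C => le_iInf fun hC => le_iInf fun D => le_iInf fun hD =>
      le_iInf fun hCD => le_iInf fun hcov => ?_
    exact hm'le s C D hC hD hCD ((Set.inter_subset_inter_left A hst).trans hcov)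
  -- value on intervals
  have hKey1 : ∀ C D : Set Ω, C ∈ 𝒞 → D ∈ 𝒞 → C ⊆ D →
      μo (D \ C) ≤ ENNReal.ofReal (v D - v C) := by
    intro C D hC hD hCD
    exact (OuterMeasure.ofFunction_le _).trans
      (hm'le (D \ C) C D hC hD hCD Set.inter_subset_left)
  have hKey2 : ∀ C D : Set Ω, C ∈ 𝒞 → D ∈ 𝒞 → C ⊆ D →
      ENNReal.ofReal (v D - v C) ≤ μo (D \ C) := by
    intro C D hC hD hCD
    rw [hμo, OuterMeasure.ofFunction_apply]
    refine le_iInf fun t => le_iInf fun hcover => ?_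
    refine ENNReal.le_of_forall_pos_le_add fun ε hε hfin => ?_
    have hfin' : ∀ n, m' (t n) ≠ ⊤ := by
      intro n hn
      refine absurd hfin (not_lt.2 ?_)
      rw [← hn]
      exact ENNReal.le_tsum n
    obtain ⟨δ, hδpos, hδsum⟩ := ENNReal.exists_pos_sum_of_countable
      (ε := (ε : ENNReal)) (by exact_mod_cast hε.ne') ℕ
    have hchoose : ∀ n : ℕ, ∃ Cn Dn : Set Ω, Cn ∈ 𝒞 ∧ Dn ∈ 𝒞 ∧ Cn ⊆ Dn ∧
        (t n ∩ A ⊆ Dn \ Cn) ∧ ENNReal.ofReal (v Dn - v Cn) ≤ m' (t n) + δ n := by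
      intro n
      have hlt : m' (t n) < m' (t n) + δ n := by
        refine ENNReal.lt_add_right (hfin' n) ?_
        exact_mod_cast (hδpos n).ne'
      rw [hm'] at hlt
      simp only [iInf_lt_iff] at hlt
      obtain ⟨Cn, hCn, Dn, hDn, hCDn, hcovn, hvaln⟩ := hlt
      exact ⟨Cn, Dn, hCn, hDn, hCDn, hcovn, le_of_lt hvaln⟩
    choose Cs Ds hCs hDs hCDs hcov hval using hchoose
    have hcover2 : D \ C ⊆ ⋃ n, (Ds n \ Cs n) := by
      intro x hx
      obtain ⟨n, hn⟩ := Set.mem_iUnion.mp (hcover hx)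
      have hxA : x ∈ A := (hsubA D hD) hx.1
      exact Set.mem_iUnion.2 ⟨n, hcov n ⟨hn, hxA⟩⟩
    calc ENNReal.ofReal (v D - v C)
        ≤ ∑' n, ENNReal.ofReal (v (Ds n) - v (Cs n)) :=
          interval_superadd hv 𝒞 hm𝒞 hch hC hD hCD hCs hDs hCDs hcover2
      _ ≤ ∑' n, (m' (t n) + δ n) := ENNReal.tsum_le_tsum hval
      _ = (∑' n, m' (t n)) + ∑' n, (δ n : ENNReal) := ENNReal.tsum_add
      _ ≤ (∑' n, m' (t n)) + ε := add_le_add_right hδsum.le _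
  -- caratheodory
  have hnull : ∀ s : Set Ω, s ∩ A = ∅ → μo s = 0 := by
    intro s hs
    refine le_antisymm ?_ zero_le
    refine (OuterMeasure.ofFunction_le _).trans ?_
    have := hm'le s ∅ ∅ hemp hemp (subset_refl _) (by rw [hs]; simp)
    simpa [hv.1] using this
  have hcarathC : ∀ C' ∈ 𝒞, MeasurableSet[μo.caratheodory] C' := by
    intro C' hC'
    refine OuterMeasure.ofFunction_caratheodory fun t => ?_
    refine le_iInf fun C => le_iInf fun hC => le_iInf fun D => le_iInf fun hD =>
      le_iInf fun hCD => le_iInf fun hcov => ?_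
    have hCC'𝒞 : C' ∪ C ∈ 𝒞 := by
      rcases hch C' hC' C hC with h | h
      · rwa [Set.union_eq_right.2 h]
      · rwa [Set.union_eq_left.2 h]
    have hC''𝒞 : (C' ∪ C) ∩ D ∈ 𝒞 := by
      rcases hch (C' ∪ C) hCC'𝒞 D hD with h | h
      · rwa [Set.inter_eq_left.2 h]
      · rwa [Set.inter_eq_right.2 h]
    set C'' := (C' ∪ C) ∩ D with hC''
    have h1 : C ⊆ C'' := Set.subset_inter (Set.subset_union_right)
      (hCD)
    have h2 : C'' ⊆ D := Set.inter_subset_right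
    have hsplit1 : (t ∩ C') ∩ A ⊆ C'' \ C := by
      intro x hx
      have hxDC : x ∈ D \ C := hcov ⟨hx.1.1, hx.2⟩
      exact ⟨⟨Or.inl hx.1.2, hxDC.1⟩, hxDC.2⟩
    have hsplit2 : (t \ C') ∩ A ⊆ D \ C'' := by
      intro x hx
      have hxDC : x ∈ D \ C := hcov ⟨hx.1.1, hx.2⟩
      refine ⟨hxDC.1, fun hxC'' => ?_⟩
      rcases hxC''.1 with h | h
      · exact hx.1.2 h
      · exact hxDC.2 h
    calc m' (t ∩ C') + m' (t \ C')
        ≤ ENNReal.ofReal (v C'' - v C) + ENNReal.ofReal (v D - v C'') :=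
          add_le_add (hm'le _ C C'' hC hC''𝒞 h1 hsplit1)
            (hm'le _ C'' D hC''𝒞 hD h2 hsplit2)
      _ = ENNReal.ofReal (v D - v C) := by
          rw [← ENNReal.ofReal_add (sub_nonneg.2 (vmono hv (hm𝒞 C hC) (hm𝒞 _ hC''𝒞) h1))
            (sub_nonneg.2 (vmono hv (hm𝒞 _ hC''𝒞) (hm𝒞 D hD) h2))]
          ring_nf
  have hcarathNull : ∀ s : Set Ω, s ∩ A = ∅ → MeasurableSet[μo.caratheodory] s := by
    intro s hs
    refine OuterMeasure.ofFunction_caratheodory fun t => ?_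
    have h1 : m' (t ∩ s) = 0 := by
      refine le_antisymm ?_ zero_le
      have hint : (t ∩ s) ∩ A = ∅ := by
        rw [Set.inter_assoc]
        rw [hs]
        exact Set.inter_empty t
      have := hm'le (t ∩ s) ∅ ∅ hemp hemp (subset_refl _) (by rw [hint]; simp)
      simpa [hv.1] using this
    rw [h1, zero_add]
    exact hm'mono _ _ Set.diff_subset
  have h_le_carath : m ≤ μo.caratheodory := by
    refine le_trans hgen2 (MeasurableSpace.generateFrom_le fun s hs => ?_)
    rcases hs with h | h
    · exact hcarathC s h
    · exact hcarathNull s h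
  set μ : Measure Ω := μo.toMeasure h_le_carath with hμdef
  have hμapp : ∀ s : Set Ω, MeasurableSet s → μ s = μo s :=
    fun s hs => toMeasure_apply _ _ hs
  have hμint : ∀ C D : Set Ω, C ∈ 𝒞 → D ∈ 𝒞 → C ⊆ D →
      μ (D \ C) = ENNReal.ofReal (v D - v C) := by
    intro C D hC hD hCD
    rw [hμapp _ ((hm𝒞 D hD).diff (hm𝒞 C hC))]
    exact le_antisymm (hKey1 C D hC hD hCD) (hKey2 C D hC hD hCD)
  have hμ𝒞 : ∀ s ∈ 𝒞, μ s = ENNReal.ofReal (v s) := by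
    intro s hs
    have := hμint ∅ s hemp hs (Set.empty_subset s)
    rw [Set.diff_empty, hv.1, sub_zero] at this
    exact this
  have hμA : μ A = ENNReal.ofReal (v A) := hμ𝒞 A hA𝒞
  have hfin : IsFiniteMeasure μ := by
    constructor
    rw [hμapp _ MeasurableSet.univ]
    refine lt_of_le_of_lt ((OuterMeasure.ofFunction_le _).trans
      (hm'le Set.univ ∅ A hemp hA𝒞 (Set.empty_subset A) ?_)) ENNReal.ofReal_lt_top
    rw [Set.univ_inter, Set.diff_empty]
  haveI := hfin
  have hμnullout : ∀ s : Set Ω, MeasurableSet s → s ∩ A = ∅ → μ s = 0 := by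
    intro s hs hsA
    rw [hμapp s hs]
    exact hnull s hsA
  have hrestrict : μ.restrict A = μ := by
    refine Measure.ext fun s hs => ?_
    rw [Measure.restrict_apply hs]
    have hsplit : μ (s ∩ A) + μ (s \ A) = μ s := measure_inter_add_diff s hA
    have h0 : μ (s \ A) = 0 := hμnullout _ (hs.diff hA) (by
      ext x; simp only [Set.mem_inter_iff, Set.mem_diff, Set.mem_empty_iff_false, iff_false]
      tauto)
    rw [h0, add_zero] at hsplit
    exact hsplit
  -- Step A
  have hstepA : ∀ E : Set Ω, MeasurableSet E → E ⊆ A →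
      v A - v (A \ E) ≤ (μ E).toReal := by
    intro E hE hEA
    refine le_of_forall_pos_le_add fun ε hε => ?_
    -- get a cover of E
    have hEfin : μo E ≠ ⊤ := by
      rw [← hμapp E hE]; exact measure_ne_top μ E
    have hlt : μo E < μo E + ENNReal.ofReal (ε/2) := by
      refine ENNReal.lt_add_right hEfin ?_
      simp [ENNReal.ofReal_eq_zero]
      linarith
    rw [hμo, OuterMeasure.ofFunction_apply] at hlt
    nth_rewrite 1 [iInf_lt_iff] at hlt
    obtain ⟨t, hlt⟩ := hlt
    rw [iInf_lt_iff] at hlt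
    obtain ⟨hcovE, hlt⟩ := hlt
    -- hlt : ∑' n, m' (t n) < μo E + ofReal (ε/2)
    have hfin' : ∀ n, m' (t n) ≠ ⊤ := by
      intro n hn
      refine absurd hlt (not_lt.2 ?_)
      refine le_trans le_top ?_
      rw [← hn]
      exact ENNReal.le_tsum n
    obtain ⟨δ, hδpos, hδsum⟩ := ENNReal.exists_pos_sum_of_countable
      (ε := ENNReal.ofReal (ε/2)) (by simp [ENNReal.ofReal_eq_zero]; linarith) ℕ
    have hchoose : ∀ n : ℕ, ∃ Cn Dn : Set Ω, Cn ∈ 𝒞 ∧ Dn ∈ 𝒞 ∧ Cn ⊆ Dn ∧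
        (t n ∩ A ⊆ Dn \ Cn) ∧ ENNReal.ofReal (v Dn - v Cn) ≤ m' (t n) + δ n := by
      intro n
      have hlt2 : m' (t n) < m' (t n) + δ n := by
        refine ENNReal.lt_add_right (hfin' n) ?_
        exact_mod_cast (hδpos n).ne'
      rw [hm'] at hlt2
      simp only [iInf_lt_iff] at hlt2
      obtain ⟨Cn, hCn, Dn, hDn, hCDn, hcovn, hvaln⟩ := hlt2
      exact ⟨Cn, Dn, hCn, hDn, hCDn, hcovn, le_of_lt hvaln⟩
    choose Cs Ds hCs hDs hCDs hcov hval using hchoose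
    set G : Set Ω := ⋃ n, (Ds n \ Cs n) with hG
    set Sn : ℕ → Set Ω := fun n => ⋃ k ∈ Finset.range (n+1), (Ds k \ Cs k) with hSn
    have hSnmeas : ∀ n, MeasurableSet (Sn n) :=
      fun n => (Finset.range (n+1)).measurableSet_biUnion
        (fun k _ => (hm𝒞 _ (hDs k)).diff (hm𝒞 _ (hCs k)))
    have hSnmono : Monotone Sn := by
      intro a b hab x hx
      simp only [hSn, Set.mem_iUnion, exists_prop, Finset.mem_range] at hx ⊢
      obtain ⟨k, hk, hxk⟩ := hx
      exact ⟨k, by omega, hxk⟩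
    have hSnUnion : ⋃ n, Sn n = G := by
      ext x
      simp only [hSn, hG, Set.mem_iUnion, exists_prop, Finset.mem_range]
      constructor
      · rintro ⟨n, k, hk, hx⟩
        exact ⟨k, hx⟩
      · rintro ⟨k, hx⟩
        exact ⟨k, k, by omega, hx⟩
    have hEG : E ⊆ G := by
      intro x hx
      obtain ⟨n, hn⟩ := Set.mem_iUnion.mp (hcovE hx)
      exact Set.mem_iUnion.2 ⟨n, hcov n ⟨hn, hEA hx⟩⟩
    have hGA : G ⊆ A := by
      refine Set.iUnion_subset fun n => ?_
      exact Set.diff_subset.trans (hsubA _ (hDs n))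
    -- per n bound
    have hpern : ∀ n, v A - v (A \ Sn n) ≤ (μ (Sn n)).toReal := by
      intro n
      have hbound := diff_union_bound hv 𝒞 hm𝒞 hch hemp hA𝒞 (Set.empty_subset A)
        hCs hDs hCDs n μ hμint
      rw [Set.diff_empty] at hbound
      have hSnA : Sn n ⊆ A := by
        refine Set.iUnion_subset fun k => Set.iUnion_subset fun _ => ?_
        exact Set.diff_subset.trans (hsubA _ (hDs k))
      have hsplit : μ (A ∩ Sn n) + μ (A \ Sn n) = μ A := measure_inter_add_diff A (hSnmeas n)
      rw [Set.inter_eq_right.2 hSnA] at hsplit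
      have htoReal : (μ (Sn n)).toReal + (μ (A \ Sn n)).toReal = v A := by
        rw [← ENNReal.toReal_add (measure_ne_top μ _) (measure_ne_top μ _), hsplit, hμA,
          ENNReal.toReal_ofReal (vnn hv hA)]
      have hb2 : (μ (A \ Sn n)).toReal ≤ v (A \ Sn n) := by
        refine le_trans (ENNReal.toReal_mono ENNReal.ofReal_ne_top hbound) ?_
        rw [ENNReal.toReal_ofReal (vnn hv (hA.diff (hSnmeas n)))]
      linarith
    -- limit
    have hmeaslim : Tendsto (fun n => (μ (Sn n)).toReal) atTop (nhds ((μ G).toReal)) := by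
      have h1 : Tendsto (fun n => μ (Sn n)) atTop (nhds (μ G)) := by
        have := tendsto_measure_iUnion_atTop (μ := μ) hSnmono
        rwa [hSnUnion] at this
      exact (ENNReal.tendsto_toReal (measure_ne_top μ G)).comp h1
    have hvlim : Tendsto (fun n => v A - v (A \ Sn n)) atTop (nhds (v A - v (A \ G))) := by
      have h1 : Tendsto (fun n => v (A \ Sn n)) atTop (nhds (v (A \ G))) := by
        have h2 := hv.2.2.2.1 (fun n => A \ Sn n) (fun n => hA.diff (hSnmeas n))
          (fun a b hab => Set.diff_subset_diff_right (hSnmono hab))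
        have h3 : ⋂ n, (A \ Sn n) = A \ G := by
          rw [← hSnUnion, Set.diff_iUnion]
        rwa [h3] at h2
      exact (tendsto_const_nhds).sub h1
    have hGbound : v A - v (A \ G) ≤ (μ G).toReal :=
      le_of_tendsto_of_tendsto' hvlim hmeaslim hpern
    -- μ G ≤ μ E + ε
    have hμG : μ G ≤ μ E + ENNReal.ofReal ε := by
      have h1 : μ G ≤ ∑' n, μ (Ds n \ Cs n) := by
        rw [hG]
        exact measure_iUnion_le _
      have h2 : ∑' n, μ (Ds n \ Cs n) = ∑' n, ENNReal.ofReal (v (Ds n) - v (Cs n)) := by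
        refine tsum_congr fun n => hμint _ _ (hCs n) (hDs n) (hCDs n)
      have h3 : ∑' n, ENNReal.ofReal (v (Ds n) - v (Cs n)) ≤ ∑' n, (m' (t n) + δ n) :=
        ENNReal.tsum_le_tsum hval
      have h4 : ∑' n, (m' (t n) + δ n) ≤ μo E + ENNReal.ofReal (ε/2) + ENNReal.ofReal (ε/2) := by
        rw [ENNReal.tsum_add]
        exact add_le_add hlt.le hδsum.le
      have h5 : μo E + ENNReal.ofReal (ε/2) + ENNReal.ofReal (ε/2) = μ E + ENNReal.ofReal ε := by
        rw [← hμapp E hE, add_assoc, ← ENNReal.ofReal_add (by linarith) (by linarith)]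
        norm_num
      calc μ G ≤ ∑' n, μ (Ds n \ Cs n) := h1
        _ = _ := h2
        _ ≤ _ := h3
        _ ≤ _ := h4
        _ = _ := h5
    have hμGreal : (μ G).toReal ≤ (μ E).toReal + ε := by
      have := ENNReal.toReal_mono (by
        refine ENNReal.add_ne_top.2 ⟨measure_ne_top μ E, ENNReal.ofReal_ne_top⟩) hμG
      rwa [ENNReal.toReal_add (measure_ne_top μ E) ENNReal.ofReal_ne_top,
        ENNReal.toReal_ofReal hε.le] at this
    have hGmeas : MeasurableSet G :=
      MeasurableSet.iUnion fun n => (hm𝒞 _ (hDs n)).diff (hm𝒞 _ (hCs n))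
    have hvGE : v (A \ G) ≤ v (A \ E) :=
      vmono hv (hA.diff hGmeas) (hA.diff hE) (Set.diff_subset_diff_right hEG)
    linarith [hGbound, hμGreal, hvGE]
  -- Step B
  have hstepB : ∀ E : Set Ω, MeasurableSet E → E ⊆ A → (μ E).toReal ≤ v E := by
    intro E hE hEA
    have hsplit : μ (A ∩ E) + μ (A \ E) = μ A := measure_inter_add_diff A hE
    rw [Set.inter_eq_right.2 hEA] at hsplit
    have htoReal : (μ E).toReal + (μ (A \ E)).toReal = v A := by
      rw [← ENNReal.toReal_add (measure_ne_top μ _) (measure_ne_top μ _), hsplit, hμA,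
        ENNReal.toReal_ofReal (vnn hv hA)]
    have hSA := hstepA (A \ E) (hA.diff hE) Set.diff_subset
    rw [Set.diff_diff_cancel_left hEA] at hSA
    linarith
  exact ⟨μ, hrestrict, hfin, hμ𝒞, hstepB⟩

theorem submodular_sup_representation {Ω : Type*} [m : MeasurableSpace Ω]
    (I : Set (Set Ω)) (h0 : ∅ ∈ I) (hU : Set.univ ∈ I)
    (hchain : ∀ I₁ ∈ I, ∀ I₂ ∈ I, I₁ ⊆ I₂ ∨ I₂ ⊆ I₁)
    (hgen : MeasurableSpace.generateFrom I = m)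
    (v : Set Ω → ℝ) (hv : IsSubmodular v)
    (A B : Set Ω) (hA : MeasurableSet A) (hB : MeasurableSet B) (hBA : B ⊆ A) :
    v B = sSup {x : ℝ | ∃ μ : Measure Ω, μ.restrict A = μ ∧ IsFiniteMeasure μ ∧
        (μ A).toReal = v A ∧
        (∀ E : Set Ω, MeasurableSet E → E ⊆ A → (μ E).toReal ≤ v E) ∧
        x = (μ B).toReal} ∧
    ∃ μ : Measure Ω, μ.restrict A = μ ∧ IsFiniteMeasure μ ∧
      (μ A).toReal = v A ∧
      (∀ E : Set Ω, MeasurableSet E → E ⊆ A → (μ E).toReal ≤ v E) ∧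
      (μ B).toReal = v B := by
  classical
  have hJm : ∀ J ∈ I, MeasurableSet J := fun J hJ =>
    hgen ▸ MeasurableSpace.measurableSet_generateFrom hJ
  set 𝒞 : Set (Set Ω) := {S | ∃ J ∈ I, S = J ∩ B} ∪ {S | ∃ J ∈ I, S = B ∪ (J ∩ A)} with h𝒞
  have hm𝒞 : ∀ s ∈ 𝒞, MeasurableSet s := by
    rintro s (⟨J, hJ, rfl⟩ | ⟨J, hJ, rfl⟩)
    · exact (hJm J hJ).inter hB
    · exact hB.union ((hJm J hJ).inter hA)
  have hsubA : ∀ s ∈ 𝒞, s ⊆ A := by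
    rintro s (⟨J, hJ, rfl⟩ | ⟨J, hJ, rfl⟩)
    · exact Set.inter_subset_right.trans hBA
    · exact Set.union_subset hBA Set.inter_subset_right
  have hch : ∀ s ∈ 𝒞, ∀ t ∈ 𝒞, s ⊆ t ∨ t ⊆ s := by
    rintro s (⟨J, hJ, rfl⟩ | ⟨J, hJ, rfl⟩) t (⟨J', hJ', rfl⟩ | ⟨J', hJ', rfl⟩)
    · rcases hchain J hJ J' hJ' with h | h
      · exact Or.inl (Set.inter_subset_inter_left B h)
      · exact Or.inr (Set.inter_subset_inter_left B h)
    · exact Or.inl (Set.inter_subset_right.trans Set.subset_union_left)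
    · exact Or.inr (Set.inter_subset_right.trans Set.subset_union_left)
    · rcases hchain J hJ J' hJ' with h | h
      · exact Or.inl (Set.union_subset_union_right B (Set.inter_subset_inter_left A h))
      · exact Or.inr (Set.union_subset_union_right B (Set.inter_subset_inter_left A h))
  have hemp : ∅ ∈ 𝒞 := Or.inl ⟨∅, h0, (Set.empty_inter B).symm⟩
  have hB𝒞 : B ∈ 𝒞 := Or.inl ⟨Set.univ, hU, (Set.univ_inter B).symm⟩
  have hA𝒞 : A ∈ 𝒞 := Or.inr ⟨Set.univ, hU, by
    rw [Set.univ_inter, Set.union_eq_right.2 hBA]⟩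
  have hgen2 : m ≤ MeasurableSpace.generateFrom (𝒞 ∪ {s | s ∩ A = ∅}) := by
    rw [← hgen]
    refine MeasurableSpace.generateFrom_le fun J hJ => ?_
    have h1 : MeasurableSet[MeasurableSpace.generateFrom (𝒞 ∪ {s | s ∩ A = ∅})] (J ∩ B) :=
      MeasurableSpace.measurableSet_generateFrom (Or.inl (Or.inl ⟨J, hJ, rfl⟩))
    have h2 : MeasurableSet[MeasurableSpace.generateFrom (𝒞 ∪ {s | s ∩ A = ∅})] B :=
      MeasurableSpace.measurableSet_generateFrom (Or.inl hB𝒞)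
    have h3 : MeasurableSet[MeasurableSpace.generateFrom (𝒞 ∪ {s | s ∩ A = ∅})]
        (B ∪ (J ∩ A)) :=
      MeasurableSpace.measurableSet_generateFrom (Or.inl (Or.inr ⟨J, hJ, rfl⟩))
    have h4 : MeasurableSet[MeasurableSpace.generateFrom (𝒞 ∪ {s | s ∩ A = ∅})] (J \ A) :=
      MeasurableSpace.measurableSet_generateFrom (Or.inr (by
        simp only [Set.mem_setOf_eq]
        ext x
        simp only [Set.mem_inter_iff, Set.mem_diff, Set.mem_empty_iff_false, iff_false]
        tauto))
    have hJeq : J = ((J ∩ B) ∪ ((B ∪ (J ∩ A)) \ B)) ∪ (J \ A) := by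
      ext x
      simp only [Set.mem_union, Set.mem_inter_iff, Set.mem_diff]
      constructor
      · intro hx
        by_cases hxA : x ∈ A
        · by_cases hxB : x ∈ B
          · exact Or.inl (Or.inl ⟨hx, hxB⟩)
          · exact Or.inl (Or.inr ⟨Or.inr ⟨hx, hxA⟩, hxB⟩)
        · exact Or.inr ⟨hx, hxA⟩
      · rintro ((⟨h, _⟩ | ⟨h, hnB⟩) | ⟨h, _⟩)
        · exact h
        · rcases h with h | h
          · exact absurd h hnB
          · exact h.1
        · exact h
    rw [hJeq]
    exact ((h1.union (h3.diff h2)).union h4)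
  obtain ⟨μ, hrestrict, hfin, hμ𝒞, hstepB⟩ :=
    construction hv hA 𝒞 hm𝒞 hsubA hch hemp hA𝒞 hgen2
  have hμA : (μ A).toReal = v A := by
    rw [hμ𝒞 A hA𝒞, ENNReal.toReal_ofReal (vnn hv hA)]
  have hμB : (μ B).toReal = v B := by
    rw [hμ𝒞 B hB𝒞, ENNReal.toReal_ofReal (vnn hv hB)]
  constructor
  · refine (IsGreatest.csSup_eq ⟨?_, ?_⟩).symm
    · show ∃ μ' : Measure Ω, _
      exact ⟨μ, hrestrict, hfin, hμA, hstepB, hμB.symm⟩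
    · rintro x ⟨μ', h1, h2, h3, h4, rfl⟩
      exact h4 B hB hBA
  · exact ⟨μ, hrestrict, hfin, hμA, hstepB, hμB⟩
end

section
/- Let (Ω,𝓕) be a measurable space admitting a totally ordered generating class 𝓘, and let v : 𝓕 → ℝ be supermodular (non-decreasing, continuous, v(∅)=0, v(A)+v(B) ≤ v(A∪B)+v(A∩B)). Then for all measurable B ⊆ A, v(B) = inf { μ(B) : μ finite measure on A, μ(A)=v(A), μ(E) ≥ v(E) for all measurable E ⊆ A }, and the infimum is attained. -/
open MeasureTheory Set Filter Topology

section Aux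

variable {Ω : Type*}

/-- Cost of representing a set as a difference of two chain elements. -/
noncomputable def chainCost (C : Set (Set Ω)) (w : Set Ω → ℝ) (S : Set Ω) : ENNReal :=
  ⨅ (I : Set Ω) (_ : I ∈ C) (J : Set Ω) (_ : J ∈ C) (_ : J ⊆ I) (_ : S = I \ J),
    ENNReal.ofReal (w I - w J)

lemma chainCost_le {C : Set (Set Ω)} {w : Set Ω → ℝ} {S I J : Set Ω}
    (hI : I ∈ C) (hJ : J ∈ C) (hJI : J ⊆ I) (hS : S = I \ J) :
    chainCost C w S ≤ ENNReal.ofReal (w I - w J) :=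
  iInf_le_of_le I (iInf_le_of_le hI (iInf_le_of_le J (iInf_le_of_le hJ
    (iInf_le_of_le hJI (iInf_le _ hS)))))

lemma exists_rep {C : Set (Set Ω)} {w : Set Ω → ℝ} {S : Set Ω}
    (h : chainCost C w S ≠ ⊤) :
    ∃ I, I ∈ C ∧ ∃ J, J ∈ C ∧ J ⊆ I ∧ S = I \ J := by
  by_contra hc
  push_neg at hc
  apply h
  rw [eq_top_iff]
  refine le_iInf fun I => le_iInf fun hI => le_iInf fun J => le_iInf fun hJ =>
    le_iInf fun hJI => le_iInf fun hS => ?_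
  exact absurd hS (hc I hI J hJ hJI)

lemma rep_unique_aux {C : Set (Set Ω)}
    (hchain : ∀ I₁ ∈ C, ∀ I₂ ∈ C, I₁ ⊆ I₂ ∨ I₂ ⊆ I₁)
    {I J I' J' : Set Ω} (hI : I ∈ C) (hJ' : J' ∈ C)
    (hJI : J ⊆ I) (hJI' : J' ⊆ I') (heq : I \ J = I' \ J')
    (hII' : I ⊆ I') (w : Set Ω → ℝ) :
    w I - w J = w I' - w J' := by
  rcases hchain I hI J' hJ' with h | h
  · -- I ⊆ J' : both differences are empty
    have h1 : I \ J = ∅ := by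
      rw [eq_empty_iff_forall_notMem]
      intro x hx
      have hx' : x ∈ I' \ J' := heq ▸ hx
      exact hx'.2 (h hx.1)
    have h2 : I = J := le_antisymm (diff_eq_empty.mp h1) hJI
    have h3 : I' = J' := le_antisymm (diff_eq_empty.mp (heq ▸ h1)) hJI'
    rw [h2, h3, sub_self, sub_self]
  · -- J' ⊆ I : representations coincide
    have hI'I : I' ⊆ I := by
      intro x hx
      by_contra hxI
      have hx1 : x ∉ I' \ J' := fun hc => hxI ((heq ▸ hc).1)
      have hx2 : x ∈ J' := by
        by_contra hx2
        exact hx1 ⟨hx, hx2⟩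
      exact hxI (h hx2)
    have hII : I = I' := le_antisymm hII' hI'I
    have hJJ : J = J' := by
      have e1 : J = I \ (I \ J) := (diff_diff_cancel_left hJI).symm
      have e2 : J' = I' \ (I' \ J') := (diff_diff_cancel_left hJI').symm
      rw [e1, e2, ← heq, hII]
    rw [hII, hJJ]

lemma rep_cost {C : Set (Set Ω)}
    (hchain : ∀ I₁ ∈ C, ∀ I₂ ∈ C, I₁ ⊆ I₂ ∨ I₂ ⊆ I₁)
    {w : Set Ω → ℝ} {S I J : Set Ω}
    (hI : I ∈ C) (hJ : J ∈ C) (hJI : J ⊆ I) (hS : S = I \ J) :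
    chainCost C w S = ENNReal.ofReal (w I - w J) := by
  refine le_antisymm (chainCost_le hI hJ hJI hS) ?_
  refine le_iInf fun I' => le_iInf fun hI' => le_iInf fun J' => le_iInf fun hJ' =>
    le_iInf fun hJI' => le_iInf fun hS' => le_of_eq ?_
  have heq : I \ J = I' \ J' := by rw [← hS, ← hS']
  rcases hchain I hI I' hI' with h | h
  · exact congrArg _ (rep_unique_aux hchain hI hJ' hJI hJI' heq h w)
  · exact congrArg _ (rep_unique_aux hchain hI' hJ hJI' hJI heq.symm h w).symm

lemma exists_max_fst (C : Set (Set Ω))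
    (hchain : ∀ I₁ ∈ C, ∀ I₂ ∈ C, I₁ ⊆ I₂ ∨ I₂ ⊆ I₁) :
    ∀ l : List (Set Ω × Set Ω), (∀ p ∈ l, p.1 ∈ C) → l ≠ [] →
      ∃ p ∈ l, ∀ q ∈ l, q.1 ⊆ p.1 := by
  intro l
  induction l with
  | nil => intro _ h; exact absurd rfl h
  | cons a t ih =>
    intro hmem _
    rcases eq_or_ne t [] with rfl | ht
    · refine ⟨a, List.mem_cons_self, ?_⟩
      intro q hq
      rcases List.mem_cons.mp hq with rfl | hq
      · exact subset_rfl
      · simp at hq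
    · obtain ⟨p, hp, hmax⟩ := ih (fun q hq => hmem q (List.mem_cons_of_mem _ hq)) ht
      rcases hchain a.1 (hmem a (List.mem_cons_self)) p.1
          (hmem p (List.mem_cons_of_mem _ hp)) with h | h
      · refine ⟨p, List.mem_cons_of_mem _ hp, ?_⟩
        intro q hq
        rcases List.mem_cons.mp hq with rfl | hq
        · exact h
        · exact hmax q hq
      · refine ⟨a, List.mem_cons_self, ?_⟩
        intro q hq
        rcases List.mem_cons.mp hq with rfl | hq
        · exact subset_rfl
        · exact (hmax q hq).trans h

variable [m0 : MeasurableSpace Ω]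

lemma finite_cover_bound (C : Set (Set Ω))
    (hchain : ∀ I₁ ∈ C, ∀ I₂ ∈ C, I₁ ⊆ I₂ ∨ I₂ ⊆ I₁)
    (hCmeas : ∀ I ∈ C, MeasurableSet I)
    (w : Set Ω → ℝ) (hw0 : w ∅ = 0)
    (hmono : ∀ X Y : Set Ω, MeasurableSet X → MeasurableSet Y → X ⊆ Y → w X ≤ w Y)
    (hsuper : ∀ X Y : Set Ω, MeasurableSet X → MeasurableSet Y →
      w X + w Y ≤ w (X ∪ Y) + w (X ∩ Y)) :
    ∀ (n : ℕ) (l : List (Set Ω × Set Ω)), l.length = n →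
      (∀ p ∈ l, p.1 ∈ C ∧ p.2 ∈ C ∧ p.2 ⊆ p.1) →
      ∀ E : Set Ω, MeasurableSet E → (∀ x ∈ E, ∃ p ∈ l, x ∈ p.1 \ p.2) →
      w E ≤ (l.map fun p => w p.1 - w p.2).sum := by
  classical
  intro n
  induction n with
  | zero =>
    intro l hlen hl E hE hcov
    rw [List.length_eq_zero_iff] at hlen
    subst hlen
    have hEe : E = ∅ := by
      rw [eq_empty_iff_forall_notMem]
      intro x hx
      obtain ⟨p, hp, _⟩ := hcov x hx
      simp at hp
    simp [hEe, hw0]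
  | succ n ih =>
    intro l hlen hl E hE hcov
    have hne : l ≠ [] := by rintro rfl; simp at hlen
    obtain ⟨p, hp, hmax⟩ := exists_max_fst C hchain l (fun q hq => (hl q hq).1) hne
    obtain ⟨hp1, hp2, hp21⟩ := hl p hp
    have hm1 := hCmeas _ hp1
    have hm2 := hCmeas _ hp2
    have hEp : E ⊆ p.1 := by
      intro x hx
      obtain ⟨q, hq, hxq⟩ := hcov x hx
      exact hmax q hq hxq.1
    have h1 : w E + w p.2 ≤ w p.1 + w (E ∩ p.2) := by
      have hs := hsuper E p.2 hE hm2
      have h2 : w (E ∪ p.2) ≤ w p.1 :=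
        hmono _ _ (hE.union hm2) hm1 (union_subset hEp hp21)
      linarith
    obtain ⟨l₁, l₂, rfl⟩ := List.append_of_mem hp
    set l' : List (Set Ω × Set Ω) := l₁ ++ l₂ with hl'
    have hmem' : ∀ q ∈ l', q ∈ l₁ ++ p :: l₂ := by
      intro q hq
      rcases List.mem_append.mp hq with h | h
      · exact List.mem_append.mpr (Or.inl h)
      · exact List.mem_append.mpr (Or.inr (List.mem_cons_of_mem _ h))
    have hcov' : ∀ x ∈ E ∩ p.2, ∃ q ∈ l', x ∈ q.1 \ q.2 := by
      rintro x ⟨hxE, hxp2⟩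
      obtain ⟨q, hq, hxq⟩ := hcov x hxE
      rcases List.mem_append.mp hq with h | h
      · exact ⟨q, List.mem_append.mpr (Or.inl h), hxq⟩
      · rcases List.mem_cons.mp h with rfl | h
        · exact absurd hxp2 hxq.2
        · exact ⟨q, List.mem_append.mpr (Or.inr h), hxq⟩
    have hlen' : l'.length = n := by
      simp only [hl', List.length_append] at hlen ⊢
      simp at hlen
      omega
    have hih := ih l' hlen' (fun q hq => hl q (hmem' q hq))
      (E ∩ p.2) (hE.inter hm2) hcov'
    have hsum : ((l₁ ++ p :: l₂).map fun p => w p.1 - w p.2).sum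
        = (w p.1 - w p.2) + (l'.map fun p => w p.1 - w p.2).sum := by
      have hperm := (List.perm_middle (a := p) (l₁ := l₁) (l₂ := l₂)).map
        (fun p : Set Ω × Set Ω => w p.1 - w p.2)
      rw [hperm.sum_eq, List.map_cons, List.sum_cons]
    rw [hsum]
    linarith

end Aux
lemma list_range_map_sum (f : ℕ → ℝ) : ∀ n : ℕ,
    ((List.range n).map f).sum = ∑ k ∈ Finset.range n, f k := by
  intro n
  induction n with
  | zero => simp
  | succ n ih =>
    rw [List.range_succ, List.map_append, List.sum_append, Finset.sum_range_succ, ih]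
    simp

theorem chain_core {Ω : Type*} [m0 : MeasurableSpace Ω] (C : Set (Set Ω))
    (h0 : ∅ ∈ C) (hU : Set.univ ∈ C)
    (hchain : ∀ I₁ ∈ C, ∀ I₂ ∈ C, I₁ ⊆ I₂ ∨ I₂ ⊆ I₁)
    (hgen : MeasurableSpace.generateFrom C = m0)
    (w : Set Ω → ℝ) (hw0 : w ∅ = 0)
    (hwmono : ∀ X Y : Set Ω, MeasurableSet X → MeasurableSet Y → X ⊆ Y → w X ≤ w Y)
    (hwcont : ∀ S : ℕ → Set Ω, (∀ n, MeasurableSet (S n)) → Monotone S →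
      Tendsto (fun n => w (S n)) atTop (nhds (w (⋃ n, S n))))
    (hwsuper : ∀ X Y : Set Ω, MeasurableSet X → MeasurableSet Y →
      w X + w Y ≤ w (X ∪ Y) + w (X ∩ Y)) :
    ∃ μ : Measure Ω, IsFiniteMeasure μ ∧ μ Set.univ = ENNReal.ofReal (w Set.univ) ∧
      ∀ E : Set Ω, MeasurableSet E → ENNReal.ofReal (w E) ≤ μ E := by
  classical
  have hCmeas : ∀ I ∈ C, MeasurableSet I := fun I hI =>
    hgen ▸ MeasurableSpace.measurableSet_generateFrom hI
  have hempty : chainCost C w ∅ = 0 := by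
    refine le_antisymm ?_ (zero_le)
    have := chainCost_le (C := C) (w := w) (S := (∅ : Set Ω)) h0 h0 subset_rfl (by simp)
    simpa [hw0] using this
  -- countable cover bound
  have key : ∀ E : Set Ω, MeasurableSet E → ∀ f : ℕ → Set Ω, E ⊆ ⋃ n, f n →
      ENNReal.ofReal (w E) ≤ ∑' n, chainCost C w (f n) := by
    intro E hE f hcov
    by_cases htop : ∃ n, chainCost C w (f n) = ⊤
    · obtain ⟨n, hn⟩ := htop
      have htot : (⊤ : ENNReal) ≤ ∑' n, chainCost C w (f n) := hn ▸ ENNReal.le_tsum n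
      exact le_top.trans htot
    · push_neg at htop
      have hrep : ∀ n, ∃ I, I ∈ C ∧ ∃ J, J ∈ C ∧ J ⊆ I ∧ f n = I \ J :=
        fun n => exists_rep (htop n)
      choose If hIf Jf hJf hJIf hfeq using hrep
      have hcost : ∀ n, chainCost C w (f n) = ENNReal.ofReal (w (If n) - w (Jf n)) :=
        fun n => rep_cost hchain (hIf n) (hJf n) (hJIf n) (hfeq n)
      have hfmeas : ∀ n, MeasurableSet (f n) := fun n =>
        (hfeq n) ▸ ((hCmeas _ (hIf n)).diff (hCmeas _ (hJf n)))
      set G : ℕ → Set Ω := fun N => E ∩ ⋃ k ∈ Finset.range (N + 1), f k with hG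
      have hGmeas : ∀ N, MeasurableSet (G N) := fun N =>
        hE.inter (Finset.measurableSet_biUnion _ fun k _ => hfmeas k)
      have hGmono : Monotone G := by
        intro a b hab
        refine inter_subset_inter_right _ ?_
        intro x hx
        simp only [Set.mem_iUnion, Finset.mem_range, exists_prop] at hx ⊢
        obtain ⟨k, hk, hxk⟩ := hx
        exact ⟨k, by omega, hxk⟩
      have hGunion : ⋃ N, G N = E := by
        apply Set.Subset.antisymm
        · exact Set.iUnion_subset fun N => Set.inter_subset_left
        · intro x hx
          obtain ⟨n, hn⟩ := Set.mem_iUnion.mp (hcov hx)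
          refine Set.mem_iUnion.mpr ⟨n, hx, ?_⟩
          exact Set.mem_biUnion (Finset.self_mem_range_succ n) hn
      have hlim := hwcont G hGmeas hGmono
      rw [hGunion] at hlim
      have hbound : ∀ N, ENNReal.ofReal (w (G N)) ≤ ∑' n, chainCost C w (f n) := by
        intro N
        set l : List (Set Ω × Set Ω) := (List.range (N + 1)).map fun k => (If k, Jf k) with hldef
        have hl : ∀ p ∈ l, p.1 ∈ C ∧ p.2 ∈ C ∧ p.2 ⊆ p.1 := by
          intro p hp
          obtain ⟨k, _, rfl⟩ := List.mem_map.mp hp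
          exact ⟨hIf k, hJf k, hJIf k⟩
        have hcovN : ∀ x ∈ G N, ∃ p ∈ l, x ∈ p.1 \ p.2 := by
          rintro x ⟨hxE, hxU⟩
          simp only [Set.mem_iUnion, Finset.mem_range, exists_prop] at hxU
          obtain ⟨k, hk, hxk⟩ := hxU
          refine ⟨(If k, Jf k), List.mem_map.mpr ⟨k, List.mem_range.mpr hk, rfl⟩, ?_⟩
          exact (hfeq k) ▸ hxk
        have hfin := finite_cover_bound C hchain hCmeas w hw0 hwmono hwsuper
          l.length l rfl hl (G N) (hGmeas N) hcovN
        have hsum : (l.map fun p => w p.1 - w p.2).sum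
            = ∑ k ∈ Finset.range (N + 1), (w (If k) - w (Jf k)) := by
          rw [hldef, List.map_map, list_range_map_sum]
          rfl
        rw [hsum] at hfin
        calc ENNReal.ofReal (w (G N))
            ≤ ENNReal.ofReal (∑ k ∈ Finset.range (N + 1), (w (If k) - w (Jf k))) :=
              ENNReal.ofReal_le_ofReal hfin
          _ = ∑ k ∈ Finset.range (N + 1), ENNReal.ofReal (w (If k) - w (Jf k)) := by
              rw [ENNReal.ofReal_sum_of_nonneg]
              intro k _
              have := hwmono (Jf k) (If k) (hCmeas _ (hJf k)) (hCmeas _ (hIf k)) (hJIf k)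
              linarith
          _ = ∑ k ∈ Finset.range (N + 1), chainCost C w (f k) := by
              refine Finset.sum_congr rfl fun k _ => (hcost k).symm
          _ ≤ ∑' n, chainCost C w (f n) := ENNReal.sum_le_tsum _
      exact le_of_tendsto (ENNReal.tendsto_ofReal hlim) (Eventually.of_forall hbound)
  -- the outer measure
  set ν := OuterMeasure.ofFunction (chainCost C w) hempty with hν
  have hlower : ∀ E : Set Ω, MeasurableSet E → ENNReal.ofReal (w E) ≤ ν E := by
    intro E hE
    rw [hν, OuterMeasure.ofFunction_apply]
    exact le_iInf fun f => le_iInf fun hf => key E hE f hf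
  have hcarath : ∀ I₀ ∈ C, MeasurableSet[ν.caratheodory] I₀ := by
    intro I₀ hI₀
    apply OuterMeasure.ofFunction_caratheodory
    intro t
    by_cases htop : chainCost C w t = ⊤
    · rw [htop]; exact le_top
    obtain ⟨I, hI, J, hJ, hJI, hteq⟩ := exists_rep htop
    rw [rep_cost hchain hI hJ hJI hteq]
    rcases hchain I hI I₀ hI₀ with hc1 | hc2
    · -- I ⊆ I₀ : t ∩ I₀ = t, t \ I₀ = ∅
      have e1 : t ∩ I₀ = I \ J := by
        rw [hteq]
        exact Set.inter_eq_left.mpr (Set.diff_subset.trans hc1)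
      have e2 : t \ I₀ = ∅ := by
        rw [hteq]
        exact Set.diff_eq_empty.mpr (Set.diff_subset.trans hc1)
      rw [e2, hempty, add_zero]
      exact chainCost_le hI hJ hJI e1
    · rcases hchain I₀ hI₀ J hJ with hc3 | hc4
      · -- I₀ ⊆ J : t ∩ I₀ = ∅, t \ I₀ = t
        have e1 : t ∩ I₀ = ∅ := by
          rw [hteq, eq_empty_iff_forall_notMem]
          rintro x ⟨hx1, hx2⟩
          exact hx1.2 (hc3 hx2)
        have e2 : t \ I₀ = I \ J := by
          rw [hteq]
          refine Set.Subset.antisymm Set.diff_subset fun x hx => ⟨hx, fun hxI₀ => hx.2 (hc3 hxI₀)⟩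
        rw [e1, hempty, zero_add]
        exact chainCost_le hI hJ hJI e2
      · -- J ⊆ I₀ ⊆ I
        have e1 : t ∩ I₀ = I₀ \ J := by
          rw [hteq]
          ext x
          constructor
          · rintro ⟨⟨_, hxJ⟩, hxI₀⟩; exact ⟨hxI₀, hxJ⟩
          · rintro ⟨hxI₀, hxJ⟩; exact ⟨⟨hc2 hxI₀, hxJ⟩, hxI₀⟩
        have e2 : t \ I₀ = I \ I₀ := by
          rw [hteq]
          ext x
          constructor
          · rintro ⟨⟨hxI, _⟩, hxI₀⟩; exact ⟨hxI, hxI₀⟩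
          · rintro ⟨hxI, hxI₀⟩; exact ⟨⟨hxI, fun hxJ => hxI₀ (hc4 hxJ)⟩, hxI₀⟩
        have b1 := chainCost_le (w := w) hI₀ hJ hc4 e1
        have b2 := chainCost_le (w := w) hI hI₀ hc2 e2
        calc chainCost C w (t ∩ I₀) + chainCost C w (t \ I₀)
            ≤ ENNReal.ofReal (w I₀ - w J) + ENNReal.ofReal (w I - w I₀) :=
              add_le_add b1 b2
          _ = ENNReal.ofReal (w I - w J) := by
              rw [← ENNReal.ofReal_add, show w I₀ - w J + (w I - w I₀) = w I - w J by ring]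
              · have := hwmono J I₀ (hCmeas _ hJ) (hCmeas _ hI₀) hc4
                linarith
              · have := hwmono I₀ I (hCmeas _ hI₀) (hCmeas _ hI) hc2
                linarith
  have hle : m0 ≤ ν.caratheodory := hgen ▸ MeasurableSpace.generateFrom_le hcarath
  refine ⟨ν.toMeasure hle, ?_, ?_, ?_⟩
  case refine_2 =>
    rw [toMeasure_apply ν hle MeasurableSet.univ]
    refine le_antisymm ?_ (hlower _ MeasurableSet.univ)
    refine (OuterMeasure.ofFunction_le _).trans ?_
    have := chainCost_le (C := C) (w := w) (S := (Set.univ : Set Ω)) hU h0 (Set.empty_subset _) (by simp)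
    simpa [hw0] using this
  case refine_1 =>
    constructor
    rw [show (ν.toMeasure hle) Set.univ = ENNReal.ofReal (w Set.univ) from ?_]
    · exact ENNReal.ofReal_lt_top
    · rw [toMeasure_apply ν hle MeasurableSet.univ]
      refine le_antisymm ?_ (hlower _ MeasurableSet.univ)
      refine (OuterMeasure.ofFunction_le _).trans ?_
      have := chainCost_le (C := C) (w := w) (S := (Set.univ : Set Ω)) hU h0 (Set.empty_subset _) (by simp)
      simpa [hw0] using this
  case refine_3 =>
    intro E hE
    rw [toMeasure_apply ν hle hE]
    exact hlower E hE

theorem supermodular_inf_representation {Ω : Type*} [m : MeasurableSpace Ω]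
    (I : Set (Set Ω)) (h0 : ∅ ∈ I) (hU : Set.univ ∈ I)
    (hchain : ∀ I₁ ∈ I, ∀ I₂ ∈ I, I₁ ⊆ I₂ ∨ I₂ ⊆ I₁)
    (hgen : MeasurableSpace.generateFrom I = m)
    (v : Set Ω → ℝ) (hv : IsSupermodular v)
    (A B : Set Ω) (hA : MeasurableSet A) (hB : MeasurableSet B) (hBA : B ⊆ A) :
    v B = sInf {x : ℝ | ∃ μ : Measure Ω, μ.restrict A = μ ∧ IsFiniteMeasure μ ∧
        (μ A).toReal = v A ∧
        (∀ E : Set Ω, MeasurableSet E → E ⊆ A → v E ≤ (μ E).toReal) ∧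
        x = (μ B).toReal} ∧
    ∃ μ : Measure Ω, μ.restrict A = μ ∧ IsFiniteMeasure μ ∧
      (μ A).toReal = v A ∧
      (∀ E : Set Ω, MeasurableSet E → E ⊆ A → v E ≤ (μ E).toReal) ∧
      (μ B).toReal = v B := by
  classical
  obtain ⟨hv0, hvmono, hvcontU, hvcontI, hvsuper⟩ := hv
  have hvnonneg : ∀ E : Set Ω, MeasurableSet E → 0 ≤ v E := fun E hE =>
    hv0 ▸ hvmono ∅ E MeasurableSet.empty hE (Set.empty_subset E)
  set u : Set Ω → ℝ := fun E => v (E ∩ B) + v ((E ∩ A) ∪ B) - v B with hu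
  have hu0 : u ∅ = 0 := by simp [hu, hv0]
  have humono : ∀ X Y : Set Ω, MeasurableSet X → MeasurableSet Y → X ⊆ Y → u X ≤ u Y := by
    intro X Y hX hY hXY
    have h1 := hvmono (X ∩ B) (Y ∩ B) (hX.inter hB) (hY.inter hB)
      (Set.inter_subset_inter_left _ hXY)
    have h2 := hvmono ((X ∩ A) ∪ B) ((Y ∩ A) ∪ B) ((hX.inter hA).union hB)
      ((hY.inter hA).union hB)
      (Set.union_subset_union_left _ (Set.inter_subset_inter_left _ hXY))
    simp only [hu]
    linarith
  have hucont : ∀ S : ℕ → Set Ω, (∀ n, MeasurableSet (S n)) → Monotone S →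
      Tendsto (fun n => u (S n)) atTop (nhds (u (⋃ n, S n))) := by
    intro S hS hSm
    have h1 := hvcontU (fun n => S n ∩ B) (fun n => (hS n).inter hB)
      (fun a b hab => Set.inter_subset_inter_left _ (hSm hab))
    have h2 := hvcontU (fun n => (S n ∩ A) ∪ B) (fun n => ((hS n).inter hA).union hB)
      (fun a b hab => Set.union_subset_union_left _ (Set.inter_subset_inter_left _ (hSm hab)))
    have e1 : ⋃ n, (S n ∩ B) = (⋃ n, S n) ∩ B := (Set.iUnion_inter B S).symm ▸ rfl
    have e2 : ⋃ n, ((S n ∩ A) ∪ B) = ((⋃ n, S n) ∩ A) ∪ B := by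
      ext x
      simp only [Set.mem_iUnion, Set.mem_union, Set.mem_inter_iff]
      constructor
      · rintro ⟨n, ⟨h, hA'⟩ | hB'⟩
        · exact Or.inl ⟨⟨n, h⟩, hA'⟩
        · exact Or.inr hB'
      · rintro (⟨⟨n, h⟩, hA'⟩ | hB')
        · exact ⟨n, Or.inl ⟨h, hA'⟩⟩
        · exact ⟨0, Or.inr hB'⟩
    rw [e1] at h1
    rw [e2] at h2
    have := (h1.add h2).sub_const (v B)
    simpa [hu] using this
  have husuper : ∀ X Y : Set Ω, MeasurableSet X → MeasurableSet Y →
      u X + u Y ≤ u (X ∪ Y) + u (X ∩ Y) := by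
    intro X Y hX hY
    have h1 := hvsuper (X ∩ B) (Y ∩ B) (hX.inter hB) (hY.inter hB)
    have h2 := hvsuper ((X ∩ A) ∪ B) ((Y ∩ A) ∪ B) ((hX.inter hA).union hB)
      ((hY.inter hA).union hB)
    have e1 : (X ∩ B) ∪ (Y ∩ B) = (X ∪ Y) ∩ B := by ext x; simp [Set.mem_inter_iff]; tauto
    have e2 : (X ∩ B) ∩ (Y ∩ B) = (X ∩ Y) ∩ B := by ext x; simp [Set.mem_inter_iff]; tauto
    have e3 : ((X ∩ A) ∪ B) ∪ ((Y ∩ A) ∪ B) = ((X ∪ Y) ∩ A) ∪ B := by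
      ext x; simp [Set.mem_inter_iff]; tauto
    have e4 : ((X ∩ A) ∪ B) ∩ ((Y ∩ A) ∪ B) = ((X ∩ Y) ∩ A) ∪ B := by
      ext x; simp [Set.mem_inter_iff]; tauto
    rw [e1, e2] at h1
    rw [e3, e4] at h2
    simp only [hu]
    linarith
  obtain ⟨μ0, hfin0, huniv0, hdom0⟩ :=
    chain_core I h0 hU hchain hgen u hu0 humono hucont husuper
  haveI := hfin0
  have huuniv : u Set.univ = v A := by
    simp only [hu, Set.univ_inter]
    rw [Set.union_eq_left.mpr hBA]
    ring
  set μ := μ0.restrict A with hμ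
  haveI hμfin : IsFiniteMeasure μ := by
    constructor
    rw [hμ, Measure.restrict_apply_univ]
    exact measure_lt_top μ0 A
  have hμapply : ∀ E : Set Ω, MeasurableSet E → E ⊆ A → μ E = μ0 E := by
    intro E hE hEA
    rw [hμ, Measure.restrict_apply hE, Set.inter_eq_self_of_subset_left hEA]
  have hμA : μ A = ENNReal.ofReal (v A) := by
    have h1 : ENNReal.ofReal (u A) ≤ μ0 A := hdom0 A hA
    have huA : u A = v A := by
      simp only [hu, Set.inter_self]
      rw [Set.inter_eq_right.mpr hBA, Set.union_eq_left.mpr hBA]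
      ring
    have h2 : μ0 A ≤ μ0 Set.univ := measure_mono (Set.subset_univ A)
    rw [hμapply A hA subset_rfl]
    refine le_antisymm (h2.trans_eq ?_) ?_
    · rw [huniv0, huuniv]
    · rw [← huA]; exact h1
  have hdom : ∀ E : Set Ω, MeasurableSet E → E ⊆ A → ENNReal.ofReal (v E) ≤ μ E := by
    intro E hE hEA
    have h1 : ENNReal.ofReal (u E) ≤ μ0 E := hdom0 E hE
    have h2 : v E ≤ u E := by
      have hs := hvsuper E B hE hB
      have he : (E ∩ A) ∪ B = E ∪ B := by rw [Set.inter_eq_self_of_subset_left hEA]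
      simp only [hu, he]
      linarith
    rw [hμapply E hE hEA]
    exact (ENNReal.ofReal_le_ofReal h2).trans h1
  have hdomR : ∀ E : Set Ω, MeasurableSet E → E ⊆ A → v E ≤ (μ E).toReal := by
    intro E hE hEA
    have h1 := hdom E hE hEA
    have hne : μ E ≠ ⊤ := measure_ne_top μ E
    calc v E = (ENNReal.ofReal (v E)).toReal := (ENNReal.toReal_ofReal (hvnonneg E hE)).symm
      _ ≤ (μ E).toReal := ENNReal.toReal_mono hne h1
  have hμB : μ B = ENNReal.ofReal (v B) := by
    have hABm : MeasurableSet (A \ B) := hA.diff hB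
    have h1 : ENNReal.ofReal (v B) ≤ μ B := hdom B hB hBA
    have h2 : ENNReal.ofReal (v A - v B) ≤ μ (A \ B) := by
      have h3 : ENNReal.ofReal (u (A \ B)) ≤ μ0 (A \ B) := hdom0 _ hABm
      have h4 : u (A \ B) = v A - v B := by
        simp only [hu]
        rw [Set.diff_inter_self, Set.inter_eq_self_of_subset_left Set.diff_subset,
          Set.diff_union_self, Set.union_eq_left.mpr hBA, hv0]
        ring
      rw [hμapply (A \ B) hABm Set.diff_subset]
      exact h4 ▸ h3
    have hsplit : μ B + μ (A \ B) = μ A := by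
      have := measure_inter_add_diff (μ := μ) A hB
      rw [Set.inter_eq_self_of_subset_right hBA] at this
      exact this
    have hvBA : v B ≤ v A := hvmono B A hB hA hBA
    have hsum : ENNReal.ofReal (v B) + ENNReal.ofReal (v A - v B) = ENNReal.ofReal (v A) := by
      rw [← ENNReal.ofReal_add (hvnonneg B hB) (by linarith)]
      ring_nf
    have hle2 : μ B + ENNReal.ofReal (v A - v B)
        ≤ ENNReal.ofReal (v B) + ENNReal.ofReal (v A - v B) := by
      calc μ B + ENNReal.ofReal (v A - v B) ≤ μ B + μ (A \ B) := add_le_add le_rfl h2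
        _ = μ A := hsplit
        _ = ENNReal.ofReal (v A) := hμA
        _ = _ := hsum.symm
    exact le_antisymm ((ENNReal.add_le_add_iff_right ENNReal.ofReal_ne_top).mp hle2) h1
  have hres : μ.restrict A = μ := by
    rw [hμ, Measure.restrict_restrict hA, Set.inter_self]
  have hAtoReal : (μ A).toReal = v A := by
    rw [hμA, ENNReal.toReal_ofReal (hvnonneg A hA)]
  have hBtoReal : (μ B).toReal = v B := by
    rw [hμB, ENNReal.toReal_ofReal (hvnonneg B hB)]
  have hmem : v B ∈ {x : ℝ | ∃ ν : Measure Ω, ν.restrict A = ν ∧ IsFiniteMeasure ν ∧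
      (ν A).toReal = v A ∧
      (∀ E : Set Ω, MeasurableSet E → E ⊆ A → v E ≤ (ν E).toReal) ∧
      x = (ν B).toReal} := ⟨μ, hres, hμfin, hAtoReal, hdomR, hBtoReal.symm⟩
  have hlb : ∀ x ∈ {x : ℝ | ∃ ν : Measure Ω, ν.restrict A = ν ∧ IsFiniteMeasure ν ∧
      (ν A).toReal = v A ∧
      (∀ E : Set Ω, MeasurableSet E → E ⊆ A → v E ≤ (ν E).toReal) ∧
      x = (ν B).toReal}, v B ≤ x := by
    rintro x ⟨ν, _, _, _, hν4, rfl⟩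
    exact hν4 B hB hBA
  exact ⟨le_antisymm (le_csInf ⟨v B, hmem⟩ hlb) (csInf_le ⟨v B, hlb⟩ hmem),
    μ, hres, hμfin, hAtoReal, hdomR, hBtoReal⟩
end
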